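/- arXiv:2508.05108 — 11 statements merged into one kernel-verified Lean document; each statement's English description precedes it below -/
import Mathlib

section
/- (Theorem 2, unbiased risk expression.) The classification risk equals the expectation of the symmetrized SconfConfDiff loss over an independent pair: ∫_{X×X} (1/2)·(L(x,x') + L(x',x)) d(μ⊗μ)(x,x') = R, where L(x',x) = (2π₊(π₊ − c(x',x)) + π₋ − s(x',x))·ℓ₊(x') + (2π₋(π₋ − c(x',x)) + π₊ − s(x',x))·ℓ₋(x). -/
open MeasureTheory

def scdG1 {X : Type*} (η : X → ℝ) (πp πm : ℝ) : X → ℝ :=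
  fun y => (2*πp^2 + πm - 1) + (1 - 2*πp) * η y

def scdG2 {X : Type*} (η : X → ℝ) (πp πm : ℝ) : X → ℝ :=
  fun y => (2*πp + 1) - 2 * η y

def scdUP {X : Type*} (η ℓp : X → ℝ) : X → ℝ := fun x => η x * ℓp x

def scdG3 {X : Type*} (η ℓp ℓm : X → ℝ) (πp πm : ℝ) : X → ℝ :=
  fun y => (2*πm + 1) * ℓm y + (1 - 2*πp) * ℓp y - 2 * scdUP η ℓp y - 2 * scdUP η ℓm y

def scdG4 {X : Type*} (η ℓp ℓm : X → ℝ) (πp πm : ℝ) : X → ℝ :=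
  fun y => (2*πm^2 + πp - 1) * ℓm y + (1 - 2*πm) * scdUP η ℓm y
    + (2*πp^2 + πm - 1) * ℓp y + (2*πp + 1) * scdUP η ℓp y

def scdG5 {X : Type*} (η : X → ℝ) (πp πm : ℝ) : X → ℝ :=
  fun y => (2*πm^2 + πp - 1) + (2*πm + 1) * η y

def scdG6 {X : Type*} (η : X → ℝ) (πp πm : ℝ) : X → ℝ :=
  fun y => (1 - 2*πm) - 2 * η y

def scdOne (X : Type*) : X → ℝ := fun _ => 1

lemma integrable_of_bdd {X : Type*} [MeasurableSpace X] {μ : Measure X} [IsFiniteMeasure μ]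
    {f : X → ℝ} (hf : Measurable f) {C : ℝ} (hb : ∀ x, |f x| ≤ C) : Integrable f μ :=
  (integrable_const C).mono' hf.aestronglyMeasurable (Filter.Eventually.of_forall fun x => by
    simpa using hb x)

/-- (Theorem 2, unbiased risk expression.) The classification risk equals the expectation
of the symmetrized SconfConfDiff loss over an independent pair. -/
theorem sconfconfdiff_unbiased_risk_expression
    {X : Type*} [MeasurableSpace X] (μ : Measure X) [IsProbabilityMeasure μ]
    (η : X → ℝ) (hη : Measurable η) (hη0 : ∀ x, 0 ≤ η x) (hη1 : ∀ x, η x ≤ 1)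
    (πp πm : ℝ) (hπp : πp = ∫ x, η x ∂μ) (hπm : πm = 1 - πp)
    (s c : X → X → ℝ)
    (hs : ∀ x x', s x x' = η x * η x' + (1 - η x) * (1 - η x'))
    (hc : ∀ x x', c x x' = η x' - η x)
    (Cℓ : ℝ) (hCℓ : 0 ≤ Cℓ)
    (ℓp ℓm : X → ℝ) (hℓp : Measurable ℓp) (hℓm : Measurable ℓm)
    (hℓp0 : ∀ x, 0 ≤ ℓp x) (hℓpC : ∀ x, ℓp x ≤ Cℓ)
    (hℓm0 : ∀ x, 0 ≤ ℓm x) (hℓmC : ∀ x, ℓm x ≤ Cℓ)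
    (R : ℝ) (hR : R = ∫ x, (η x * ℓp x + (1 - η x) * ℓm x) ∂μ)
    (L : X → X → ℝ)
    (hL : ∀ x x', L x x' =
      (2 * πp * (πp - c x x') + πm - s x x') * ℓp x
      + (2 * πm * (πm - c x x') + πp - s x x') * ℓm x') :
    ∫ p : X × X, (1 / 2) * (L p.1 p.2 + L p.2 p.1) ∂(μ.prod μ) = R := by
  -- basic integrability facts on μ
  have hIη : Integrable η μ := integrable_of_bdd hη (C := 1)
    (fun x => abs_le.2 ⟨by linarith [hη0 x], hη1 x⟩)
  have hIp : Integrable ℓp μ := integrable_of_bdd hℓp (C := Cℓ)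
    (fun x => abs_le.2 ⟨by linarith [hℓp0 x], hℓpC x⟩)
  have hIm : Integrable ℓm μ := integrable_of_bdd hℓm (C := Cℓ)
    (fun x => abs_le.2 ⟨by linarith [hℓm0 x], hℓmC x⟩)
  have hIup : Integrable (scdUP η ℓp) μ := integrable_of_bdd (hη.mul hℓp) (C := Cℓ)
    (fun x => by
      simp only [scdUP]
      exact abs_le.2 ⟨by nlinarith [hη0 x, hℓp0 x],
        by nlinarith [hη0 x, hη1 x, hℓp0 x, hℓpC x]⟩)
  have hIum : Integrable (scdUP η ℓm) μ := integrable_of_bdd (hη.mul hℓm) (C := Cℓ)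
    (fun x => by
      simp only [scdUP]
      exact abs_le.2 ⟨by nlinarith [hη0 x, hℓm0 x],
        by nlinarith [hη0 x, hη1 x, hℓm0 x, hℓmC x]⟩)
  have hg1 : Integrable (scdG1 η πp πm) μ := (integrable_const _).add (hIη.const_mul _)
  have hg2 : Integrable (scdG2 η πp πm) μ := (integrable_const _).sub (hIη.const_mul _)
  have hg3 : Integrable (scdG3 η ℓp ℓm πp πm) μ := by
    unfold scdG3
    exact (((hIm.const_mul (2*πm + 1)).add (hIp.const_mul (1 - 2*πp))).sub
      (hIup.const_mul 2)).sub (hIum.const_mul 2)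
  have hg4 : Integrable (scdG4 η ℓp ℓm πp πm) μ := by
    unfold scdG4
    exact (((hIm.const_mul (2*πm^2 + πp - 1)).add (hIum.const_mul (1 - 2*πm))).add
      (hIp.const_mul (2*πp^2 + πm - 1))).add (hIup.const_mul (2*πp + 1))
  have hg5 : Integrable (scdG5 η πp πm) μ := (integrable_const _).add (hIη.const_mul _)
  have hg6 : Integrable (scdG6 η πp πm) μ := (integrable_const _).sub (hIη.const_mul _)
  -- product integrability
  have h1 : Integrable (fun z : X × X => ℓp z.1 * scdG1 η πp πm z.2) (μ.prod μ) :=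
    hIp.mul_prod hg1
  have h2 : Integrable (fun z : X × X => scdUP η ℓp z.1 * scdG2 η πp πm z.2) (μ.prod μ) :=
    hIup.mul_prod hg2
  have h3 : Integrable (fun z : X × X => η z.1 * scdG3 η ℓp ℓm πp πm z.2) (μ.prod μ) :=
    hIη.mul_prod hg3
  have h4 : Integrable (fun z : X × X => scdOne X z.1 * scdG4 η ℓp ℓm πp πm z.2) (μ.prod μ) :=
    (integrable_const 1).mul_prod hg4
  have h5 : Integrable (fun z : X × X => ℓm z.1 * scdG5 η πp πm z.2) (μ.prod μ) :=
    hIm.mul_prod hg5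
  have h6 : Integrable (fun z : X × X => scdUP η ℓm z.1 * scdG6 η πp πm z.2) (μ.prod μ) :=
    hIum.mul_prod hg6
  -- rewrite the integrand as a sum of product functions
  have hfun : (fun p : X × X => (1 / 2 : ℝ) * (L p.1 p.2 + L p.2 p.1))
      = fun p : X × X => (1 / 2 : ℝ) *
        (ℓp p.1 * scdG1 η πp πm p.2 + (scdUP η ℓp p.1 * scdG2 η πp πm p.2
          + (η p.1 * scdG3 η ℓp ℓm πp πm p.2 + (scdOne X p.1 * scdG4 η ℓp ℓm πp πm p.2
          + (ℓm p.1 * scdG5 η πp πm p.2 + scdUP η ℓm p.1 * scdG6 η πp πm p.2))))) := by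
    funext p
    simp only [hL, hs, hc, scdG1, scdG2, scdG3, scdG4, scdG5, scdG6, scdUP, scdOne]
    ring
  have h56 : Integrable (fun z : X × X => ℓm z.1 * scdG5 η πp πm z.2
      + scdUP η ℓm z.1 * scdG6 η πp πm z.2) (μ.prod μ) := h5.add h6
  have h456 : Integrable (fun z : X × X => scdOne X z.1 * scdG4 η ℓp ℓm πp πm z.2
      + (ℓm z.1 * scdG5 η πp πm z.2 + scdUP η ℓm z.1 * scdG6 η πp πm z.2)) (μ.prod μ) :=
    h4.add h56
  have h3456 : Integrable (fun z : X × X => η z.1 * scdG3 η ℓp ℓm πp πm z.2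
      + (scdOne X z.1 * scdG4 η ℓp ℓm πp πm z.2
      + (ℓm z.1 * scdG5 η πp πm z.2 + scdUP η ℓm z.1 * scdG6 η πp πm z.2))) (μ.prod μ) :=
    h3.add h456
  have h23456 : Integrable (fun z : X × X => scdUP η ℓp z.1 * scdG2 η πp πm z.2
      + (η z.1 * scdG3 η ℓp ℓm πp πm z.2 + (scdOne X z.1 * scdG4 η ℓp ℓm πp πm z.2
      + (ℓm z.1 * scdG5 η πp πm z.2 + scdUP η ℓm z.1 * scdG6 η πp πm z.2)))) (μ.prod μ) :=
    h2.add h3456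
  rw [hfun, integral_const_mul,
    integral_add h1 h23456,
    integral_add h2 h3456,
    integral_add h3 h456,
    integral_add h4 h56,
    integral_add h5 h6,
    integral_prod_mul ℓp (scdG1 η πp πm),
    integral_prod_mul (scdUP η ℓp) (scdG2 η πp πm),
    integral_prod_mul η (scdG3 η ℓp ℓm πp πm),
    integral_prod_mul (scdOne X) (scdG4 η ℓp ℓm πp πm),
    integral_prod_mul ℓm (scdG5 η πp πm),
    integral_prod_mul (scdUP η ℓm) (scdG6 η πp πm)]
  -- values of the one-variable integrals
  have e1 : ∫ y, scdG1 η πp πm y ∂μ = (2*πp^2 + πm - 1) + (1 - 2*πp) * πp := by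
    simp only [scdG1]
    rw [integral_add (integrable_const _) (hIη.const_mul _), integral_const,
      integral_const_mul, ← hπp]
    simp
  have e2 : ∫ y, scdG2 η πp πm y ∂μ = (2*πp + 1) - 2 * πp := by
    simp only [scdG2]
    rw [integral_sub (integrable_const _) (hIη.const_mul _), integral_const,
      integral_const_mul, ← hπp]
    simp
  have e3 : ∫ y, scdG3 η ℓp ℓm πp πm y ∂μ
      = (2*πm + 1) * (∫ y, ℓm y ∂μ) + (1 - 2*πp) * (∫ y, ℓp y ∂μ)
        - 2 * (∫ y, scdUP η ℓp y ∂μ) - 2 * (∫ y, scdUP η ℓm y ∂μ) := by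
    have iA : Integrable (fun y => (2*πm + 1) * ℓm y + (1 - 2*πp) * ℓp y) μ :=
      (hIm.const_mul _).add (hIp.const_mul _)
    have iB : Integrable
        (fun y => (2*πm + 1) * ℓm y + (1 - 2*πp) * ℓp y - 2 * scdUP η ℓp y) μ :=
      iA.sub (hIup.const_mul _)
    simp only [scdG3]
    rw [integral_sub iB (hIum.const_mul _), integral_sub iA (hIup.const_mul _),
      integral_add (hIm.const_mul _) (hIp.const_mul _),
      integral_const_mul, integral_const_mul, integral_const_mul, integral_const_mul]
  have e4 : ∫ y, scdG4 η ℓp ℓm πp πm y ∂μ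
      = (2*πm^2 + πp - 1) * (∫ y, ℓm y ∂μ) + (1 - 2*πm) * (∫ y, scdUP η ℓm y ∂μ)
        + (2*πp^2 + πm - 1) * (∫ y, ℓp y ∂μ) + (2*πp + 1) * (∫ y, scdUP η ℓp y ∂μ) := by
    have iA : Integrable
        (fun y => (2*πm^2 + πp - 1) * ℓm y + (1 - 2*πm) * scdUP η ℓm y) μ :=
      (hIm.const_mul _).add (hIum.const_mul _)
    have iB : Integrable (fun y => (2*πm^2 + πp - 1) * ℓm y + (1 - 2*πm) * scdUP η ℓm y
        + (2*πp^2 + πm - 1) * ℓp y) μ := iA.add (hIp.const_mul _)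
    simp only [scdG4]
    rw [integral_add iB (hIup.const_mul _), integral_add iA (hIp.const_mul _),
      integral_add (hIm.const_mul _) (hIum.const_mul _),
      integral_const_mul, integral_const_mul, integral_const_mul, integral_const_mul]
  have e5 : ∫ y, scdG5 η πp πm y ∂μ = (2*πm^2 + πp - 1) + (2*πm + 1) * πp := by
    simp only [scdG5]
    rw [integral_add (integrable_const _) (hIη.const_mul _), integral_const,
      integral_const_mul, ← hπp]
    simp
  have e6 : ∫ y, scdG6 η πp πm y ∂μ = (1 - 2*πm) - 2 * πp := by
    simp only [scdG6]
    rw [integral_sub (integrable_const _) (hIη.const_mul _), integral_const,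
      integral_const_mul, ← hπp]
    simp
  have eone : ∫ x, scdOne X x ∂μ = 1 := by
    simp only [scdOne]
    simp
  have eη : ∫ x, η x ∂μ = πp := hπp.symm
  -- the risk in terms of the basic integrals
  have hRval : R = (∫ y, scdUP η ℓp y ∂μ) + (∫ y, ℓm y ∂μ) - (∫ y, scdUP η ℓm y ∂μ) := by
    rw [hR]
    have : (fun x => η x * ℓp x + (1 - η x) * ℓm x)
        = fun x => scdUP η ℓp x + (ℓm x - scdUP η ℓm x) := by
      funext x; simp only [scdUP]; ring
    have iC : Integrable (fun x => ℓm x - scdUP η ℓm x) μ := hIm.sub hIum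
    rw [this, integral_add hIup iC, integral_sub hIm hIum]
    ring
  rw [e1, e2, e3, e4, e5, e6, eone, eη, hRval]
  subst hπm
  ring
end

section
/- (Unbiasedness of the empirical SconfConfDiff risk estimator, Eq. (7).) The expectation over ν of the empirical risk R̂_SCD(D) = (1/(2n))·Σ_{i=1}^{n} (L(xᵢ,xᵢ') + L(xᵢ',xᵢ)) equals the classification risk R: ∫ R̂_SCD dν = R. -/
open MeasureTheory

/-- (Unbiasedness of the empirical SconfConfDiff risk estimator, Eq. (7).)
The expectation over ν of the empirical risk equals the classification risk R. -/
theorem sconfconfdiff_empirical_risk_unbiased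
    {X : Type*} [MeasurableSpace X] (μ : Measure X) [IsProbabilityMeasure μ]
    (η : X → ℝ) (hη : Measurable η) (hη0 : ∀ x, 0 ≤ η x) (hη1 : ∀ x, η x ≤ 1)
    (πp πm : ℝ) (hπp : πp = ∫ x, η x ∂μ) (hπm : πm = 1 - πp)
    (s c : X → X → ℝ)
    (hs : ∀ x x', s x x' = η x * η x' + (1 - η x) * (1 - η x'))
    (hc : ∀ x x', c x x' = η x' - η x)
    (Cℓ : ℝ) (hCℓ : 0 ≤ Cℓ)
    (ℓp ℓm : X → ℝ) (hℓp : Measurable ℓp) (hℓm : Measurable ℓm)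
    (hℓp0 : ∀ x, 0 ≤ ℓp x) (hℓpC : ∀ x, ℓp x ≤ Cℓ)
    (hℓm0 : ∀ x, 0 ≤ ℓm x) (hℓmC : ∀ x, ℓm x ≤ Cℓ)
    (R : ℝ) (hR : R = ∫ x, (η x * ℓp x + (1 - η x) * ℓm x) ∂μ)
    (L : X → X → ℝ)
    (hL : ∀ x x', L x x' =
      (2 * πp * (πp - c x x') + πm - s x x') * ℓp x
      + (2 * πm * (πm - c x x') + πp - s x x') * ℓm x')
    (n : ℕ) (hn : 1 ≤ n)
    (ν : Measure (Fin n → X × X)) (hν : ν = Measure.pi fun _ => μ.prod μ) :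
    ∫ D, (1 / (2 * (n : ℝ))) * ∑ i, (L (D i).1 (D i).2 + L (D i).2 (D i).1) ∂ν = R := by
  subst hπm hν
  -- basic integrability / bounds
  have bdd : ∀ (f : X → ℝ), Measurable f → ∀ C : ℝ, (∀ x, |f x| ≤ C) → Integrable f μ :=
    fun f hf C hC => (integrable_const C).mono' hf.aestronglyMeasurable
      (ae_of_all _ fun x => by rw [Real.norm_eq_abs]; exact hC x)
  have intη : Integrable η μ := bdd η hη 1 fun x => by
    rw [abs_le]; exact ⟨by linarith [hη0 x], hη1 x⟩
  have hπp0 : 0 ≤ πp := hπp ▸ integral_nonneg hη0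
  have hπp1 : πp ≤ 1 := by
    rw [hπp]
    calc ∫ x, η x ∂μ ≤ ∫ _x, (1 : ℝ) ∂μ := integral_mono intη (integrable_const 1) hη1
    _ = 1 := by simp
  have iℓp : Integrable ℓp μ := bdd ℓp hℓp Cℓ fun x => by
    rw [abs_le]; exact ⟨by linarith [hℓp0 x], hℓpC x⟩
  have iℓm : Integrable ℓm μ := bdd ℓm hℓm Cℓ fun x => by
    rw [abs_le]; exact ⟨by linarith [hℓm0 x], hℓmC x⟩
  have iηℓp : Integrable (fun x => η x * ℓp x) μ := bdd _ (hη.mul hℓp) Cℓ fun x => by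
    rw [abs_le]
    constructor
    · nlinarith [hη0 x, hℓp0 x, hℓpC x]
    · nlinarith [hη0 x, hη1 x, hℓp0 x, hℓpC x]
  have iηℓm : Integrable (fun x => η x * ℓm x) μ := bdd _ (hη.mul hℓm) Cℓ fun x => by
    rw [abs_le]
    constructor
    · nlinarith [hη0 x, hℓm0 x, hℓmC x]
    · nlinarith [hη0 x, hη1 x, hℓm0 x, hℓmC x]
  -- decomposition pieces
  set f1 : X → ℝ := fun x => (2 * πp ^ 2 + (1 - πp) - 1 + (2 * πp + 1) * η x) * ℓp x with hf1
  set f2 : X → ℝ := fun x => (1 - 2 * πp - 2 * η x) * ℓp x with hf2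
  set f3 : X → ℝ := fun x => 2 * (1 - πp) ^ 2 + πp - 1 + (2 * (1 - πp) + 1) * η x with hf3
  set f4 : X → ℝ := fun x => 1 - 2 * (1 - πp) - 2 * η x with hf4
  have mf1 : Measurable f1 := (measurable_const.add (measurable_const.mul hη)).mul hℓp
  have mf2 : Measurable f2 := (measurable_const.sub (measurable_const.mul hη)).mul hℓp
  have mf3 : Measurable f3 := measurable_const.add (measurable_const.mul hη)
  have mf4 : Measurable f4 := measurable_const.sub (measurable_const.mul hη)
  have if1 : Integrable f1 μ := bdd f1 mf1 (5 * Cℓ) fun x => by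
    simp only [hf1]
    calc |(2 * πp ^ 2 + (1 - πp) - 1 + (2 * πp + 1) * η x) * ℓp x|
        = |2 * πp ^ 2 + (1 - πp) - 1 + (2 * πp + 1) * η x| * |ℓp x| := abs_mul _ _
      _ ≤ 5 * Cℓ := by
          apply mul_le_mul
          · rw [abs_le]
            constructor <;> nlinarith [hη0 x, hη1 x, sq_nonneg πp]
          · rw [abs_of_nonneg (hℓp0 x)]; exact hℓpC x
          · exact abs_nonneg _
          · norm_num
  have if2 : Integrable f2 μ := bdd f2 mf2 (5 * Cℓ) fun x => by
    simp only [hf2]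
    calc |(1 - 2 * πp - 2 * η x) * ℓp x|
        = |1 - 2 * πp - 2 * η x| * |ℓp x| := abs_mul _ _
      _ ≤ 5 * Cℓ := by
          apply mul_le_mul
          · rw [abs_le]; constructor <;> nlinarith [hη0 x, hη1 x]
          · rw [abs_of_nonneg (hℓp0 x)]; exact hℓpC x
          · exact abs_nonneg _
          · norm_num
  have if3 : Integrable f3 μ := bdd f3 mf3 8 fun x => by
    simp only [hf3]
    rw [abs_le]
    constructor <;> nlinarith [hη0 x, hη1 x, sq_nonneg (1 - πp)]
  have if4 : Integrable f4 μ := bdd f4 mf4 8 fun x => by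
    simp only [hf4]
    rw [abs_le]
    constructor <;> nlinarith [hη0 x, hη1 x]
  -- integrals of the pieces
  have e1 : ∫ x, f1 x ∂μ
      = (2 * πp ^ 2 + (1 - πp) - 1) * (∫ x, ℓp x ∂μ) + (2 * πp + 1) * ∫ x, η x * ℓp x ∂μ := by
    have h : f1 = fun x => (2 * πp ^ 2 + (1 - πp) - 1) * ℓp x + (2 * πp + 1) * (η x * ℓp x) := by
      funext x; simp only [hf1]; ring
    rw [h, integral_add (iℓp.const_mul _) (iηℓp.const_mul _), integral_const_mul,
      integral_const_mul]
  have e2 : ∫ x, f2 x ∂μ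
      = (1 - 2 * πp) * (∫ x, ℓp x ∂μ) - 2 * ∫ x, η x * ℓp x ∂μ := by
    have h : f2 = fun x => (1 - 2 * πp) * ℓp x - 2 * (η x * ℓp x) := by
      funext x; simp only [hf2]; ring
    rw [h, integral_sub (iℓp.const_mul _) (iηℓp.const_mul _), integral_const_mul,
      integral_const_mul]
  have e3 : ∫ x, f3 x ∂μ = (2 * (1 - πp) ^ 2 + πp - 1) + (2 * (1 - πp) + 1) * πp := by
    have h : f3 = fun x => (2 * (1 - πp) ^ 2 + πp - 1) + (2 * (1 - πp) + 1) * η x := by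
      funext x; simp only [hf3]
    rw [h, integral_add (integrable_const _) (intη.const_mul _), integral_const,
      integral_const_mul]
    simp [← hπp]
  have e4 : ∫ x, f4 x ∂μ = 1 - 2 * (1 - πp) - 2 * πp := by
    have h : f4 = fun x => (1 - 2 * (1 - πp)) - 2 * η x := by
      funext x; simp only [hf4]
    rw [h, integral_sub (integrable_const _) (intη.const_mul _), integral_const,
      integral_const_mul]
    simp [← hπp]
  have hR' : R = (∫ x, η x * ℓp x ∂μ) + (∫ x, ℓm x ∂μ) - ∫ x, η x * ℓm x ∂μ := by
    rw [hR]
    have isub : Integrable (fun x => ℓm x - η x * ℓm x) μ := by exact iℓm.sub iηℓm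
    have h : (fun x => η x * ℓp x + (1 - η x) * ℓm x)
        = fun x => η x * ℓp x + (ℓm x - η x * ℓm x) := by
      funext x; ring
    rw [h, integral_add iηℓp isub, integral_sub iℓm iηℓm]
    ring
  -- the two halves of the product integrand
  set q1 : X × X → ℝ := fun z =>
    f1 z.1 * (1 : ℝ) + (f2 z.1 * η z.2 + (f3 z.1 * ℓm z.2 + f4 z.1 * (η z.2 * ℓm z.2)))
    with hq1
  set q2 : X × X → ℝ := fun z =>
    (1 : ℝ) * f1 z.2 + (η z.1 * f2 z.2 + (ℓm z.1 * f3 z.2 + (η z.1 * ℓm z.1) * f4 z.2))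
    with hq2
  have iB1 : Integrable (fun z : X × X => f3 z.1 * ℓm z.2 + f4 z.1 * (η z.2 * ℓm z.2))
      (μ.prod μ) := by exact (if3.mul_prod iℓm).add (if4.mul_prod iηℓm)
  have iC1 : Integrable
      (fun z : X × X => f2 z.1 * η z.2 + (f3 z.1 * ℓm z.2 + f4 z.1 * (η z.2 * ℓm z.2)))
      (μ.prod μ) := by exact (if2.mul_prod intη).add iB1
  have iB2 : Integrable (fun z : X × X => ℓm z.1 * f3 z.2 + (η z.1 * ℓm z.1) * f4 z.2)
      (μ.prod μ) := by exact (iℓm.mul_prod if3).add (iηℓm.mul_prod if4)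
  have iC2 : Integrable
      (fun z : X × X => η z.1 * f2 z.2 + (ℓm z.1 * f3 z.2 + (η z.1 * ℓm z.1) * f4 z.2))
      (μ.prod μ) := by exact (intη.mul_prod if2).add iB2
  have iq1 : Integrable q1 (μ.prod μ) := by
    exact (if1.mul_prod (integrable_const 1)).add iC1
  have iq2 : Integrable q2 (μ.prod μ) := by
    exact ((integrable_const 1).mul_prod if1).add iC2
  have p1 : (∫ z : X × X, f1 z.1 * (1 : ℝ) ∂(μ.prod μ))
      = (∫ x, f1 x ∂μ) * ∫ _x, (1 : ℝ) ∂μ := by exact integral_prod_mul f1 (fun _ => 1)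
  have p2 : (∫ z : X × X, f2 z.1 * η z.2 ∂(μ.prod μ))
      = (∫ x, f2 x ∂μ) * ∫ x, η x ∂μ := by exact integral_prod_mul f2 η
  have p3 : (∫ z : X × X, f3 z.1 * ℓm z.2 ∂(μ.prod μ))
      = (∫ x, f3 x ∂μ) * ∫ x, ℓm x ∂μ := by exact integral_prod_mul f3 ℓm
  have p4 : (∫ z : X × X, f4 z.1 * (η z.2 * ℓm z.2) ∂(μ.prod μ))
      = (∫ x, f4 x ∂μ) * ∫ x, η x * ℓm x ∂μ := by
    exact integral_prod_mul f4 (fun x => η x * ℓm x)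
  have r1 : (∫ z : X × X, (1 : ℝ) * f1 z.2 ∂(μ.prod μ))
      = (∫ _x, (1 : ℝ) ∂μ) * ∫ x, f1 x ∂μ := by exact integral_prod_mul (fun _ => 1) f1
  have r2 : (∫ z : X × X, η z.1 * f2 z.2 ∂(μ.prod μ))
      = (∫ x, η x ∂μ) * ∫ x, f2 x ∂μ := by exact integral_prod_mul η f2
  have r3 : (∫ z : X × X, ℓm z.1 * f3 z.2 ∂(μ.prod μ))
      = (∫ x, ℓm x ∂μ) * ∫ x, f3 x ∂μ := by exact integral_prod_mul ℓm f3
  have r4 : (∫ z : X × X, (η z.1 * ℓm z.1) * f4 z.2 ∂(μ.prod μ))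
      = (∫ x, η x * ℓm x ∂μ) * ∫ x, f4 x ∂μ := by
    exact integral_prod_mul (fun x => η x * ℓm x) f4
  have key1 : ∫ z, q1 z ∂(μ.prod μ) = R := by
    rw [hq1]
    rw [integral_add (if1.mul_prod (integrable_const 1)) iC1,
      integral_add (if2.mul_prod intη) iB1,
      integral_add (if3.mul_prod iℓm) (if4.mul_prod iηℓm),
      p1, p2, p3, p4, e1, e2, e3, e4, ← hπp, hR']
    simp only [integral_const, probReal_univ, measure_univ, ENNReal.toReal_one, smul_eq_mul, one_mul]
    ring
  have key2 : ∫ z, q2 z ∂(μ.prod μ) = R := by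
    rw [hq2]
    rw [integral_add ((integrable_const 1).mul_prod if1) iC2,
      integral_add (intη.mul_prod if2) iB2,
      integral_add (iℓm.mul_prod if3) (iηℓm.mul_prod if4),
      r1, r2, r3, r4, e1, e2, e3, e4, ← hπp, hR']
    simp only [integral_const, probReal_univ, measure_univ, ENNReal.toReal_one, smul_eq_mul, one_mul]
    ring
  set G : X × X → ℝ := fun z => q1 z + q2 z with hGdef
  have mG : Measurable G := by
    apply Measurable.add
    · exact ((mf1.comp measurable_fst).mul measurable_const).add
        (((mf2.comp measurable_fst).mul (hη.comp measurable_snd)).add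
          (((mf3.comp measurable_fst).mul (hℓm.comp measurable_snd)).add
            ((mf4.comp measurable_fst).mul
              ((hη.comp measurable_snd).mul (hℓm.comp measurable_snd)))))
    · exact (measurable_const.mul (mf1.comp measurable_snd)).add
        (((hη.comp measurable_fst).mul (mf2.comp measurable_snd)).add
          (((hℓm.comp measurable_fst).mul (mf3.comp measurable_snd)).add
            (((hη.comp measurable_fst).mul (hℓm.comp measurable_fst)).mul
              (mf4.comp measurable_snd))))
  have iG : Integrable G (μ.prod μ) := iq1.add iq2
  have intGval : ∫ z, G z ∂(μ.prod μ) = R + R := by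
    rw [hGdef, integral_add iq1 iq2, key1, key2]
  have hG : ∀ z : X × X, L z.1 z.2 + L z.2 z.1 = G z := by
    intro z
    rw [hGdef, hq1, hq2, hL, hL, hs, hs, hc, hc]
    simp only [hf1, hf2, hf3, hf4]
    ring
  -- evaluation is measure preserving
  have hmap : ∀ i : Fin n,
      (Measure.pi fun _ : Fin n => μ.prod μ).map (fun D => D i) = μ.prod μ := by
    intro i
    ext t ht
    rw [Measure.map_apply (measurable_pi_apply i) ht]
    have hpre : (fun D : Fin n → X × X => D i) ⁻¹' t
        = Set.pi Set.univ (Function.update (fun _ => Set.univ) i t) :=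
      Set.eval_preimage
    rw [hpre, Measure.pi_pi]
    rw [Finset.prod_eq_single i (fun j _ hj => by rw [Function.update_of_ne hj]; simp)
      (by simp)]
    rw [Function.update_self]
  have hGsm : ∀ i : Fin n,
      AEStronglyMeasurable G ((Measure.pi fun _ : Fin n => μ.prod μ).map (fun D => D i)) := by
    intro i; rw [hmap i]; exact mG.aestronglyMeasurable
  have heval : ∀ i : Fin n,
      ∫ D, G (D i) ∂(Measure.pi fun _ : Fin n => μ.prod μ) = R + R := by
    intro i
    have h1 : ∫ z, G z ∂((Measure.pi fun _ : Fin n => μ.prod μ).map (fun D => D i))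
        = R + R := by rw [hmap i]; exact intGval
    rw [integral_map (measurable_pi_apply i).aemeasurable (hGsm i)] at h1
    exact h1
  have iGi : ∀ i : Fin n,
      Integrable (fun D : Fin n → X × X => G (D i)) (Measure.pi fun _ : Fin n => μ.prod μ) := by
    intro i
    exact (integrable_map_measure (hGsm i) (measurable_pi_apply i).aemeasurable).mp
      (by rw [hmap i]; exact iG)
  have hcongr : ∫ D, (1 / (2 * (n : ℝ))) * ∑ i, (L (D i).1 (D i).2 + L (D i).2 (D i).1)
        ∂(Measure.pi fun _ : Fin n => μ.prod μ)
      = ∫ D, (1 / (2 * (n : ℝ))) * ∑ i, G (D i)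
        ∂(Measure.pi fun _ : Fin n => μ.prod μ) := by
    refine integral_congr_ae (ae_of_all _ fun D => ?_)
    dsimp only
    congr 1
    refine Finset.sum_congr rfl fun i _ => ?_
    exact hG (D i)
  rw [hcongr, integral_const_mul, integral_finset_sum Finset.univ fun i _ => iGi i]
  simp only [heval, Finset.sum_const, Finset.card_univ, Fintype.card_fin, nsmul_eq_mul]
  have hn' : (n : ℝ) ≠ 0 := by
    have : (0 : ℝ) < n := by exact_mod_cast hn
    linarith
  field_simp
  ring
end

section
/- (Theorem 3, minimum-variance estimator.) For λ ∈ [0,1] define Ŝ_λ(D) = (1/n)·Σ_{i=1}^{n} (λ·L(xᵢ,xᵢ') + (1−λ)·L(xᵢ',xᵢ)) on the sample space ((X×X)^n, ν). Then for every λ ∈ [0,1], the variance of Ŝ_{1/2} under ν is at most the variance of Ŝ_λ under ν; i.e., the estimator with λ = 1/2 has minimum variance among all the λ-weighted unbiased risk estimators. -/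
open MeasureTheory ProbabilityTheory

/-- (Theorem 3, minimum-variance estimator.) Among all λ-weighted unbiased risk
estimators, the one with λ = 1/2 has minimum variance. -/
theorem sconfconfdiff_half_min_variance
    {X : Type*} [MeasurableSpace X] (μ : Measure X) [IsProbabilityMeasure μ]
    (η : X → ℝ) (hη : Measurable η) (hη0 : ∀ x, 0 ≤ η x) (hη1 : ∀ x, η x ≤ 1)
    (πp πm : ℝ) (hπp : πp = ∫ x, η x ∂μ) (hπm : πm = 1 - πp)
    (s c : X → X → ℝ)
    (hs : ∀ x x', s x x' = η x * η x' + (1 - η x) * (1 - η x'))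
    (hc : ∀ x x', c x x' = η x' - η x)
    (Cℓ : ℝ) (hCℓ : 0 ≤ Cℓ)
    (ℓp ℓm : X → ℝ) (hℓp : Measurable ℓp) (hℓm : Measurable ℓm)
    (hℓp0 : ∀ x, 0 ≤ ℓp x) (hℓpC : ∀ x, ℓp x ≤ Cℓ)
    (hℓm0 : ∀ x, 0 ≤ ℓm x) (hℓmC : ∀ x, ℓm x ≤ Cℓ)
    (L : X → X → ℝ)
    (hL : ∀ x x', L x x' =
      (2 * πp * (πp - c x x') + πm - s x x') * ℓp x
      + (2 * πm * (πm - c x x') + πp - s x x') * ℓm x')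
    (n : ℕ) (hn : 1 ≤ n)
    (ν : Measure (Fin n → X × X)) (hν : ν = Measure.pi fun _ => μ.prod μ)
    (S : ℝ → (Fin n → X × X) → ℝ)
    (hS : ∀ lam D, S lam D = (1 / (n : ℝ)) *
      ∑ i, (lam * L (D i).1 (D i).2 + (1 - lam) * L (D i).2 (D i).1)) :
    ∀ lam ∈ Set.Icc (0 : ℝ) 1,
      variance (S (1 / 2)) ν ≤ variance (S lam) ν := by
  intro lam hlam
  obtain ⟨hl0, hl1⟩ := hlam
  haveI : IsProbabilityMeasure ν := by rw [hν]; infer_instance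
  -- basic bounds on πp, πm
  have hηint : Integrable η μ := by
    apply Integrable.mono' (integrable_const 1) hη.aestronglyMeasurable
    filter_upwards with x
    rw [Real.norm_eq_abs, abs_of_nonneg (hη0 x)]; exact hη1 x
  have hπp0 : 0 ≤ πp := by rw [hπp]; exact integral_nonneg hη0
  have hπp1 : πp ≤ 1 := by
    rw [hπp]
    calc ∫ x, η x ∂μ ≤ ∫ _, (1:ℝ) ∂μ := integral_mono hηint (integrable_const 1) hη1
      _ = 1 := by simp
  -- bound on L
  have hLbound : ∀ x x', |L x x'| ≤ 12 * Cℓ := by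
    intro x x'
    rw [hL, hs, hc]
    have hK1 : |2 * πp * (πp - (η x' - η x)) + πm - (η x * η x' + (1 - η x) * (1 - η x'))| ≤ 6 := by
      rw [abs_le]
      constructor <;>
        nlinarith [hη0 x, hη1 x, hη0 x', hη1 x', hπp0, hπp1, mul_nonneg (hη0 x) (hη0 x'),
          mul_nonneg (sub_nonneg.2 (hη1 x)) (sub_nonneg.2 (hη1 x'))]
    have hK2 : |2 * πm * (πm - (η x' - η x)) + πp - (η x * η x' + (1 - η x) * (1 - η x'))| ≤ 6 := by
      rw [abs_le]
      constructor <;>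
        nlinarith [hη0 x, hη1 x, hη0 x', hη1 x', hπp0, hπp1, mul_nonneg (hη0 x) (hη0 x'),
          mul_nonneg (sub_nonneg.2 (hη1 x)) (sub_nonneg.2 (hη1 x'))]
    calc |(2 * πp * (πp - (η x' - η x)) + πm - (η x * η x' + (1 - η x) * (1 - η x'))) * ℓp x
          + (2 * πm * (πm - (η x' - η x)) + πp - (η x * η x' + (1 - η x) * (1 - η x'))) * ℓm x'|
        ≤ |2 * πp * (πp - (η x' - η x)) + πm - (η x * η x' + (1 - η x) * (1 - η x'))| * |ℓp x|
          + |2 * πm * (πm - (η x' - η x)) + πp - (η x * η x' + (1 - η x) * (1 - η x'))| * |ℓm x'| := by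
          refine (abs_add_le _ _).trans ?_; rw [abs_mul, abs_mul]
      _ ≤ 6 * Cℓ + 6 * Cℓ :=
          add_le_add
            (mul_le_mul hK1 (by rw [abs_of_nonneg (hℓp0 x)]; exact hℓpC x) (abs_nonneg _) (by norm_num))
            (mul_le_mul hK2 (by rw [abs_of_nonneg (hℓm0 x')]; exact hℓmC x') (abs_nonneg _) (by norm_num))
      _ = 12 * Cℓ := by ring
  -- bound on S
  have hnpos : (0:ℝ) < (n:ℝ) := by exact_mod_cast Nat.lt_of_lt_of_le Nat.zero_lt_one hn
  have hSbound : ∀ l, 0 ≤ l → l ≤ 1 → ∀ D, |S l D| ≤ 12 * Cℓ := by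
    intro l h0 h1 D
    rw [hS]
    have hsum : |∑ i, (l * L (D i).1 (D i).2 + (1 - l) * L (D i).2 (D i).1)|
        ≤ (n:ℝ) * (12 * Cℓ) := by
      refine (Finset.abs_sum_le_sum_abs _ _).trans ?_
      have : ∀ i ∈ Finset.univ, |l * L (D i).1 (D i).2 + (1 - l) * L (D i).2 (D i).1| ≤ 12 * Cℓ := by
        intro i _
        calc |l * L (D i).1 (D i).2 + (1 - l) * L (D i).2 (D i).1|
            ≤ l * |L (D i).1 (D i).2| + (1 - l) * |L (D i).2 (D i).1| := by
              refine (abs_add_le _ _).trans ?_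
              rw [abs_mul, abs_mul, abs_of_nonneg h0, abs_of_nonneg (by linarith : (0:ℝ) ≤ 1 - l)]
          _ ≤ l * (12 * Cℓ) + (1 - l) * (12 * Cℓ) := by
              refine add_le_add (mul_le_mul_of_nonneg_left (hLbound _ _) h0)
                (mul_le_mul_of_nonneg_left (hLbound _ _) (by linarith))
          _ = 12 * Cℓ := by ring
      calc ∑ i, |l * L (D i).1 (D i).2 + (1 - l) * L (D i).2 (D i).1|
          ≤ ∑ _i : Fin n, (12 * Cℓ) := Finset.sum_le_sum this
        _ = (n:ℝ) * (12 * Cℓ) := by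
            rw [Finset.sum_const, Finset.card_univ, Fintype.card_fin, nsmul_eq_mul]
    rw [abs_mul, abs_of_nonneg (by positivity : (0:ℝ) ≤ 1 / (n:ℝ))]
    calc (1 / (n:ℝ)) * |∑ i, (l * L (D i).1 (D i).2 + (1 - l) * L (D i).2 (D i).1)|
        ≤ (1 / (n:ℝ)) * ((n:ℝ) * (12 * Cℓ)) :=
          mul_le_mul_of_nonneg_left hsum (by positivity)
      _ = 12 * Cℓ := by field_simp
  -- measurability
  have hLmeas : Measurable (fun p : X × X => L p.1 p.2) := by
    have : (fun p : X × X => L p.1 p.2) = fun p : X × X =>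
        (2 * πp * (πp - (η p.2 - η p.1)) + πm - (η p.1 * η p.2 + (1 - η p.1) * (1 - η p.2))) * ℓp p.1
        + (2 * πm * (πm - (η p.2 - η p.1)) + πp - (η p.1 * η p.2 + (1 - η p.1) * (1 - η p.2))) * ℓm p.2 := by
      funext p; rw [hL, hs, hc]
    rw [this]; fun_prop
  have hSmeas : ∀ l : ℝ, Measurable (S l) := by
    intro l
    have hfun : S l = fun D => (1 / (n : ℝ)) *
        ∑ i, (l * L (D i).1 (D i).2 + (1 - l) * L (D i).2 (D i).1) := funext (hS l)
    rw [hfun]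
    apply Measurable.const_mul
    apply Finset.measurable_sum
    intro i _
    apply Measurable.add
    · exact (hLmeas.comp (measurable_pi_apply i)).const_mul l
    · exact ((hLmeas.comp (measurable_swap.comp (measurable_pi_apply i)))).const_mul (1 - l)
  have hMem : ∀ l, 0 ≤ l → l ≤ 1 → MemLp (S l) 2 ν := by
    intro l h0 h1
    exact MemLp.of_bound (hSmeas l).aestronglyMeasurable (12 * Cℓ)
      (Filter.Eventually.of_forall fun D => by
        rw [Real.norm_eq_abs]; exact hSbound l h0 h1 D)
  have hAmem := hMem lam hl0 hl1
  have hBmem : MemLp (S (1 - lam)) 2 ν := hMem _ (by linarith) (by linarith)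
  have hCmem : MemLp (S (1/2)) 2 ν := hMem _ (by norm_num) (by norm_num)
  -- swap equivalence
  let Te : (Fin n → X × X) ≃ᵐ (Fin n → X × X) :=
    MeasurableEquiv.piCongrRight (fun _ => MeasurableEquiv.prodComm (α := X) (β := X))
  have hT : MeasurePreserving (⇑Te) ν ν := by
    rw [hν]
    exact measurePreserving_pi _ _ (fun _ => Measure.measurePreserving_swap)
  have hswap : ∀ D, S (1 - lam) D = S lam (Te D) := by
    intro D
    rw [hS, hS]
    congr 1
    refine Finset.sum_congr rfl fun i _ => ?_
    have h1 : (Te D i).1 = (D i).2 := rfl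
    have h2 : (Te D i).2 = (D i).1 := rfl
    rw [h1, h2]; ring
  have hVarEq : variance (S (1 - lam)) ν = variance (S lam) ν := by
    have hB : S (1 - lam) = fun D => S lam (Te D) := funext hswap
    have hBmem' : MemLp (fun D => S lam (Te D)) 2 ν := hB ▸ hBmem
    rw [hB, variance_eq_integral hBmem'.aestronglyMeasurable.aemeasurable, variance_eq_integral hAmem.aestronglyMeasurable.aemeasurable]
    have hmean : ∫ D, S lam (Te D) ∂ν = ∫ D, S lam D ∂ν := hT.integral_comp' _
    rw [hmean]
    exact hT.integral_comp' fun D => (S lam D - ∫ x, S lam x ∂ν) ^ 2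
  -- pointwise identity for λ = 1/2
  have hhalf : ∀ D, S (1/2) D = (S lam D + S (1 - lam) D) / 2 := by
    intro D
    rw [hS, hS, hS, ← mul_add, ← Finset.sum_add_distrib, mul_div_assoc, Finset.sum_div]
    congr 1
    refine Finset.sum_congr rfl fun i _ => ?_
    ring
  have hAint : Integrable (S lam) ν := hAmem.integrable one_le_two
  have hBint : Integrable (S (1 - lam)) ν := hBmem.integrable one_le_two
  set mA := ∫ D, S lam D ∂ν with hmA
  set mB := ∫ D, S (1 - lam) D ∂ν with hmB
  have hmC : ∫ D, S (1/2) D ∂ν = (mA + mB) / 2 := by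
    rw [hmA, hmB, ← integral_add hAint hBint, ← integral_div]
    exact integral_congr_ae (Filter.Eventually.of_forall fun D => hhalf D)
  have hint1 : Integrable (fun D => (S (1/2) D - (mA + mB) / 2) ^ 2) ν := by
    have := (hCmem.sub (memLp_const ((mA + mB) / 2))).integrable_sq
    simpa [Pi.sub_apply] using this
  have hintA : Integrable (fun D => (S lam D - mA) ^ 2) ν := by
    have := (hAmem.sub (memLp_const mA)).integrable_sq
    simpa [Pi.sub_apply] using this
  have hintB : Integrable (fun D => (S (1 - lam) D - mB) ^ 2) ν := by
    have := (hBmem.sub (memLp_const mB)).integrable_sq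
    simpa [Pi.sub_apply] using this
  calc variance (S (1/2)) ν
      = ∫ D, (S (1/2) D - (mA + mB) / 2) ^ 2 ∂ν := by
        rw [variance_eq_integral hCmem.aestronglyMeasurable.aemeasurable]
        simp only [Pi.pow_apply, Pi.sub_apply, hmC]
    _ ≤ ∫ D, ((S lam D - mA) ^ 2 + (S (1 - lam) D - mB) ^ 2) / 2 ∂ν := by
        refine integral_mono hint1 ((hintA.add hintB).div_const 2) fun D => ?_
        have h := hhalf D
        rw [h]
        nlinarith [sq_nonneg ((S lam D - mA) - (S (1 - lam) D - mB))]
    _ = (variance (S lam) ν + variance (S (1 - lam)) ν) / 2 := by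
        rw [variance_eq_integral hAmem.aestronglyMeasurable.aemeasurable, variance_eq_integral hBmem.aestronglyMeasurable.aemeasurable]
        simp only [Pi.pow_apply, Pi.sub_apply, ← hmA, ← hmB]
        rw [← integral_add hintA hintB, ← integral_div]
    _ = variance (S lam) ν := by rw [hVarEq]; ring
end

section
/- (Variance decomposition in the proof of Theorem 3.) Define A(D) = (1/n)·Σ_{i=1}^{n} L(xᵢ,xᵢ') and B(D) = (1/n)·Σ_{i=1}^{n} L(xᵢ',xᵢ) on ((X×X)^n, ν), and set μ₁ = ∫ A² dν, μ₂ = ∫ A·B dν. Then (i) ∫ A² dν = ∫ B² dν; (ii) for every λ ∈ [0,1], Var_ν(λ·A + (1−λ)·B) = 2(μ₁ − μ₂)·(λ − 1/2)² + (μ₁ + μ₂)/2 − R²; and (iii) 2μ₁ − 2μ₂ = ∫ (A − B)² dν ≥ 0. -/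
open MeasureTheory ProbabilityTheory

private lemma bdd_integrable {α : Type*} [MeasurableSpace α] (P : Measure α) [IsFiniteMeasure P]
    {f : α → ℝ} (C : ℝ) (hf : Measurable f) (hb : ∀ x, |f x| ≤ C) : Integrable f P :=
  ⟨hf.aestronglyMeasurable, HasFiniteIntegral.of_bounded (C := C)
    (Filter.Eventually.of_forall fun x => by simpa [Real.norm_eq_abs] using hb x)⟩


private lemma integral_add8 {α : Type*} [MeasurableSpace α] {P : Measure α}
    {f1 f2 f3 f4 f5 f6 f7 f8 : α → ℝ}
    (h1 : Integrable f1 P) (h2 : Integrable f2 P) (h3 : Integrable f3 P)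
    (h4 : Integrable f4 P) (h5 : Integrable f5 P) (h6 : Integrable f6 P)
    (h7 : Integrable f7 P) (h8 : Integrable f8 P) :
    ∫ z, (f1 z + (f2 z + (f3 z + (f4 z + (f5 z + (f6 z + (f7 z + f8 z))))))) ∂P
      = (∫ z, f1 z ∂P) + ((∫ z, f2 z ∂P) + ((∫ z, f3 z ∂P) + ((∫ z, f4 z ∂P)
        + ((∫ z, f5 z ∂P) + ((∫ z, f6 z ∂P) + ((∫ z, f7 z ∂P) + (∫ z, f8 z ∂P))))))) := by
  have i78 : Integrable (fun z => f7 z + f8 z) P := h7.add h8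
  have i678 : Integrable (fun z => f6 z + (f7 z + f8 z)) P := h6.add i78
  have i5678 : Integrable (fun z => f5 z + (f6 z + (f7 z + f8 z))) P := h5.add i678
  have i45678 : Integrable (fun z => f4 z + (f5 z + (f6 z + (f7 z + f8 z)))) P := h4.add i5678
  have i345678 : Integrable (fun z => f3 z + (f4 z + (f5 z + (f6 z + (f7 z + f8 z))))) P :=
    h3.add i45678
  have i2345678 : Integrable
      (fun z => f2 z + (f3 z + (f4 z + (f5 z + (f6 z + (f7 z + f8 z)))))) P := h2.add i345678
  rw [integral_add h1 i2345678, integral_add h2 i345678, integral_add h3 i45678,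
    integral_add h4 i5678, integral_add h5 i678, integral_add h6 i78, integral_add h7 h8]


private lemma coeff_bound {p q d s' : ℝ} (hp0 : 0 ≤ p) (hp1 : p ≤ 1)
    (hq0 : 0 ≤ q) (hq1 : q ≤ 1) (hd1 : -1 ≤ d) (hd2 : d ≤ 1)
    (hs0 : 0 ≤ s') (hs1 : s' ≤ 1) : |2 * p * (p - d) + q - s'| ≤ 6 := by
  have h1 : 0 ≤ p * (p - d + 1) := mul_nonneg hp0 (by linarith)
  have h2 : 0 ≤ p * (2 - (p - d)) := mul_nonneg hp0 (by linarith)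
  rw [abs_le]
  constructor <;> nlinarith

/-- (Variance decomposition in the proof of Theorem 3.) -/
theorem sconfconfdiff_variance_decomposition
    {X : Type*} [MeasurableSpace X] (μ : Measure X) [IsProbabilityMeasure μ]
    (η : X → ℝ) (hη : Measurable η) (hη0 : ∀ x, 0 ≤ η x) (hη1 : ∀ x, η x ≤ 1)
    (πp πm : ℝ) (hπp : πp = ∫ x, η x ∂μ) (hπm : πm = 1 - πp)
    (s c : X → X → ℝ)
    (hs : ∀ x x', s x x' = η x * η x' + (1 - η x) * (1 - η x'))
    (hc : ∀ x x', c x x' = η x' - η x)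
    (Cℓ : ℝ) (hCℓ : 0 ≤ Cℓ)
    (ℓp ℓm : X → ℝ) (hℓp : Measurable ℓp) (hℓm : Measurable ℓm)
    (hℓp0 : ∀ x, 0 ≤ ℓp x) (hℓpC : ∀ x, ℓp x ≤ Cℓ)
    (hℓm0 : ∀ x, 0 ≤ ℓm x) (hℓmC : ∀ x, ℓm x ≤ Cℓ)
    (R : ℝ) (hR : R = ∫ x, (η x * ℓp x + (1 - η x) * ℓm x) ∂μ)
    (L : X → X → ℝ)
    (hL : ∀ x x', L x x' =
      (2 * πp * (πp - c x x') + πm - s x x') * ℓp x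
      + (2 * πm * (πm - c x x') + πp - s x x') * ℓm x')
    (n : ℕ) (hn : 1 ≤ n)
    (ν : Measure (Fin n → X × X)) (hν : ν = Measure.pi fun _ => μ.prod μ)
    (A B : (Fin n → X × X) → ℝ)
    (hA : ∀ D, A D = (1 / (n : ℝ)) * ∑ i, L (D i).1 (D i).2)
    (hB : ∀ D, B D = (1 / (n : ℝ)) * ∑ i, L (D i).2 (D i).1)
    (μ₁ μ₂ : ℝ) (hμ₁ : μ₁ = ∫ D, (A D) ^ 2 ∂ν) (hμ₂ : μ₂ = ∫ D, A D * B D ∂ν) :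
    (∫ D, (A D) ^ 2 ∂ν = ∫ D, (B D) ^ 2 ∂ν) ∧
    (∀ lam ∈ Set.Icc (0 : ℝ) 1,
      variance (fun D => lam * A D + (1 - lam) * B D) ν
        = 2 * (μ₁ - μ₂) * (lam - 1 / 2) ^ 2 + (μ₁ + μ₂) / 2 - R ^ 2) ∧
    (2 * μ₁ - 2 * μ₂ = ∫ D, (A D - B D) ^ 2 ∂ν ∧ 0 ≤ 2 * μ₁ - 2 * μ₂) := by
  classical
  haveI hνP : IsProbabilityMeasure ν := by rw [hν]; infer_instance
  have hn0 : (0:ℝ) < n := by exact_mod_cast hn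
  -- basic facts about πp
  have hηint : Integrable η μ :=
    bdd_integrable μ 1 hη fun x => abs_le.mpr ⟨by linarith [hη0 x], hη1 x⟩
  have hπp0 : 0 ≤ πp := hπp ▸ integral_nonneg hη0
  have hπp1 : πp ≤ 1 := by
    rw [hπp]
    calc ∫ x, η x ∂μ ≤ ∫ _x, (1:ℝ) ∂μ := integral_mono hηint (integrable_const 1) hη1
      _ = 1 := by simp
  -- bound on L
  have hLb : ∀ x x', |L x x'| ≤ 12 * Cℓ := by
    intro x x'
    rw [hL, hs, hc]
    have h1 := hη0 x; have h2 := hη1 x; have h3 := hη0 x'; have h4 := hη1 x'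
    have hm0 : (0:ℝ) ≤ πm := by rw [hπm]; linarith
    have hm1 : πm ≤ 1 := by rw [hπm]; linarith
    have hs0 : 0 ≤ η x * η x' + (1 - η x) * (1 - η x') :=
      add_nonneg (mul_nonneg h1 h3) (mul_nonneg (by linarith) (by linarith))
    have hs1 : η x * η x' + (1 - η x) * (1 - η x') ≤ 1 := by
      nlinarith [mul_nonneg h1 (by linarith : (0:ℝ) ≤ 1 - η x'),
        mul_nonneg h3 (by linarith : (0:ℝ) ≤ 1 - η x)]
    have hα : |2 * πp * (πp - (η x' - η x)) + πm - (η x * η x' + (1 - η x) * (1 - η x'))| ≤ 6 :=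
      coeff_bound hπp0 hπp1 hm0 hm1 (by linarith) (by linarith) hs0 hs1
    have hβ : |2 * πm * (πm - (η x' - η x)) + πp - (η x * η x' + (1 - η x) * (1 - η x'))| ≤ 6 :=
      coeff_bound hm0 hm1 hπp0 hπp1 (by linarith) (by linarith) hs0 hs1
    calc |(2 * πp * (πp - (η x' - η x)) + πm - (η x * η x' + (1 - η x) * (1 - η x'))) * ℓp x
          + (2 * πm * (πm - (η x' - η x)) + πp - (η x * η x' + (1 - η x) * (1 - η x'))) * ℓm x'|
        ≤ |(2 * πp * (πp - (η x' - η x)) + πm - (η x * η x' + (1 - η x) * (1 - η x')))| * |ℓp x|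
          + |(2 * πm * (πm - (η x' - η x)) + πp - (η x * η x' + (1 - η x) * (1 - η x')))| * |ℓm x'| := by
            rw [← abs_mul, ← abs_mul]; exact abs_add_le _ _
      _ ≤ 6 * Cℓ + 6 * Cℓ := by
            have hp : |ℓp x| ≤ Cℓ := abs_le.mpr ⟨by linarith [hℓp0 x], hℓpC x⟩
            have hm : |ℓm x'| ≤ Cℓ := abs_le.mpr ⟨by linarith [hℓm0 x'], hℓmC x'⟩
            exact add_le_add (mul_le_mul hα hp (abs_nonneg _) (by norm_num))
              (mul_le_mul hβ hm (abs_nonneg _) (by norm_num))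
      _ = 12 * Cℓ := by ring
  -- measurability of L viewed on pairs
  have hKm : Measurable fun z : X × X => L z.1 z.2 := by
    have hKeq : (fun z : X × X => L z.1 z.2) = fun z : X × X =>
        (2 * πp * (πp - (η z.2 - η z.1)) + πm - (η z.1 * η z.2 + (1 - η z.1) * (1 - η z.2))) * ℓp z.1
        + (2 * πm * (πm - (η z.2 - η z.1)) + πp - (η z.1 * η z.2 + (1 - η z.1) * (1 - η z.2))) * ℓm z.2 := by
      funext z; rw [hL, hs, hc]
    rw [hKeq]
    fun_prop
  -- integrable building blocks on μ
  have iℓp : Integrable ℓp μ :=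
    bdd_integrable μ Cℓ hℓp fun x => abs_le.mpr ⟨by linarith [hℓp0 x], hℓpC x⟩
  have iℓm : Integrable ℓm μ :=
    bdd_integrable μ Cℓ hℓm fun x => abs_le.mpr ⟨by linarith [hℓm0 x], hℓmC x⟩
  have iηℓp : Integrable (fun x => η x * ℓp x) μ :=
    bdd_integrable μ Cℓ (hη.mul hℓp) fun x => by
      rw [abs_of_nonneg (mul_nonneg (hη0 x) (hℓp0 x))]
      nlinarith [hℓp0 x, hℓpC x, hη0 x, hη1 x]
  have iηℓm : Integrable (fun x => η x * ℓm x) μ :=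
    bdd_integrable μ Cℓ (hη.mul hℓm) fun x => by
      rw [abs_of_nonneg (mul_nonneg (hη0 x) (hℓm0 x))]
      nlinarith [hℓm0 x, hℓmC x, hη0 x, hη1 x]
  -- unbiasedness on one pair
  have hKint : ∫ z, L z.1 z.2 ∂(μ.prod μ) = R := by
    have hsplit : ∀ z : X × X, L z.1 z.2 =
        ((2*πp^2 + πm - 1) * ℓp z.1) * (1:ℝ)
        + (((2*πp + 1) * (η z.1 * ℓp z.1)) * (1:ℝ)
        + (((1 - 2*πp) * ℓp z.1) * η z.2
        + (((-2) * (η z.1 * ℓp z.1)) * η z.2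
        + ((1:ℝ) * ((2*πm^2 + πp - 1) * ℓm z.2)
        + (η z.1 * ((2*πm + 1) * ℓm z.2)
        + ((1:ℝ) * ((1 - 2*πm) * (η z.2 * ℓm z.2))
        + η z.1 * ((-2) * (η z.2 * ℓm z.2)))))))) := by
      intro z; rw [hL, hs, hc]; ring
    have j1 : Integrable (fun z : X × X => ((2*πp^2 + πm - 1) * ℓp z.1) * (1:ℝ)) (μ.prod μ) :=
      (iℓp.const_mul _).mul_prod (integrable_const 1)
    have j2 : Integrable (fun z : X × X => ((2*πp + 1) * (η z.1 * ℓp z.1)) * (1:ℝ)) (μ.prod μ) :=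
      (iηℓp.const_mul _).mul_prod (integrable_const 1)
    have j3 : Integrable (fun z : X × X => ((1 - 2*πp) * ℓp z.1) * η z.2) (μ.prod μ) :=
      (iℓp.const_mul _).mul_prod hηint
    have j4 : Integrable (fun z : X × X => ((-2) * (η z.1 * ℓp z.1)) * η z.2) (μ.prod μ) :=
      (iηℓp.const_mul _).mul_prod hηint
    have j5 : Integrable (fun z : X × X => (1:ℝ) * ((2*πm^2 + πp - 1) * ℓm z.2)) (μ.prod μ) :=
      (integrable_const 1).mul_prod (iℓm.const_mul _)
    have j6 : Integrable (fun z : X × X => η z.1 * ((2*πm + 1) * ℓm z.2)) (μ.prod μ) :=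
      hηint.mul_prod (iℓm.const_mul _)
    have j7 : Integrable (fun z : X × X => (1:ℝ) * ((1 - 2*πm) * (η z.2 * ℓm z.2))) (μ.prod μ) :=
      (integrable_const 1).mul_prod (iηℓm.const_mul _)
    have j8 : Integrable (fun z : X × X => η z.1 * ((-2) * (η z.2 * ℓm z.2))) (μ.prod μ) :=
      hηint.mul_prod (iηℓm.const_mul _)
    simp_rw [hsplit]
    rw [integral_add8 j1 j2 j3 j4 j5 j6 j7 j8]
    rw [integral_prod_mul (μ := μ) (ν := μ) (f := fun x => (2*πp^2 + πm - 1) * ℓp x) (g := fun _ => (1:ℝ)),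
      integral_prod_mul (μ := μ) (ν := μ) (f := fun x => (2*πp + 1) * (η x * ℓp x)) (g := fun _ => (1:ℝ)),
      integral_prod_mul (μ := μ) (ν := μ) (f := fun x => (1 - 2*πp) * ℓp x) (g := fun x => η x),
      integral_prod_mul (μ := μ) (ν := μ) (f := fun x => (-2) * (η x * ℓp x)) (g := fun x => η x),
      integral_prod_mul (μ := μ) (ν := μ) (f := fun _ => (1:ℝ)) (g := fun x => (2*πm^2 + πp - 1) * ℓm x),
      integral_prod_mul (μ := μ) (ν := μ) (f := fun x => η x) (g := fun x => (2*πm + 1) * ℓm x),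
      integral_prod_mul (μ := μ) (ν := μ) (f := fun _ => (1:ℝ)) (g := fun x => (1 - 2*πm) * (η x * ℓm x)),
      integral_prod_mul (μ := μ) (ν := μ) (f := fun x => η x) (g := fun x => (-2) * (η x * ℓm x))]
    have hRval : R = (∫ x, η x * ℓp x ∂μ) + (∫ x, ℓm x ∂μ) - (∫ x, η x * ℓm x ∂μ) := by
      rw [hR]
      rw [show (fun x => η x * ℓp x + (1 - η x) * ℓm x)
          = fun x => η x * ℓp x + (ℓm x - η x * ℓm x) from funext fun x => by ring]
      have isub : Integrable (fun x => ℓm x - η x * ℓm x) μ := iℓm.sub iηℓm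
      rw [integral_add iηℓp isub, integral_sub iℓm iηℓm]
      ring
    rw [hRval]
    simp only [integral_const_mul, integral_const, measure_univ, probReal_univ, ENNReal.toReal_one,
      smul_eq_mul, one_mul, mul_one]
    rw [← hπp, hπm]
    ring
  -- measurability and bounds for A and B
  have hAm : Measurable A := by
    rw [show A = fun D => (1 / (n : ℝ)) * ∑ i, L (D i).1 (D i).2 from funext hA]
    exact measurable_const.mul (Finset.measurable_sum _ fun i _ =>
      hKm.comp ((measurable_pi_apply i)))
  have hBm : Measurable B := by
    rw [show B = fun D => (1 / (n : ℝ)) * ∑ i, L (D i).2 (D i).1 from funext hB]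
    exact measurable_const.mul (Finset.measurable_sum _ fun i _ =>
      (hKm.comp measurable_swap).comp ((measurable_pi_apply i)))
  have hsumb : ∀ (g : Fin n → ℝ), (∀ i, |g i| ≤ 12 * Cℓ) →
      |(1 / (n : ℝ)) * ∑ i, g i| ≤ 12 * Cℓ := by
    intro g hg
    rw [abs_mul, abs_of_nonneg (by positivity : (0:ℝ) ≤ 1 / (n:ℝ))]
    have h2 : |∑ i, g i| ≤ (n:ℝ) * (12 * Cℓ) := by
      calc |∑ i, g i| ≤ ∑ i, |g i| := Finset.abs_sum_le_sum_abs _ _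
        _ ≤ ∑ _i : Fin n, 12 * Cℓ := Finset.sum_le_sum fun i _ => hg i
        _ = (n:ℝ) * (12 * Cℓ) := by
            rw [Finset.sum_const, Finset.card_univ, Fintype.card_fin, nsmul_eq_mul]
    calc (1 / (n:ℝ)) * |∑ i, g i| ≤ (1 / (n:ℝ)) * ((n:ℝ) * (12 * Cℓ)) := by
          exact mul_le_mul_of_nonneg_left h2 (by positivity)
      _ = 12 * Cℓ := by field_simp
  have hAb : ∀ D, |A D| ≤ 12 * Cℓ := fun D => by
    rw [hA]; exact hsumb _ fun i => hLb _ _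
  have hBb : ∀ D, |B D| ≤ 12 * Cℓ := fun D => by
    rw [hB]; exact hsumb _ fun i => hLb _ _
  -- integrability on ν
  have intA : Integrable A ν := bdd_integrable ν _ hAm hAb
  have intB : Integrable B ν := bdd_integrable ν _ hBm hBb
  have intA2 : Integrable (fun D => (A D) ^ 2) ν :=
    bdd_integrable ν ((12*Cℓ)^2) (hAm.pow_const 2) fun D => by
      rw [abs_pow]; exact pow_le_pow_left₀ (abs_nonneg _) (hAb D) 2
  have intB2 : Integrable (fun D => (B D) ^ 2) ν :=
    bdd_integrable ν ((12*Cℓ)^2) (hBm.pow_const 2) fun D => by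
      rw [abs_pow]; exact pow_le_pow_left₀ (abs_nonneg _) (hBb D) 2
  have intAB : Integrable (fun D => A D * B D) ν :=
    bdd_integrable ν ((12*Cℓ)^2) (hAm.mul hBm) fun D => by
      rw [abs_mul, sq]
      exact mul_le_mul (hAb D) (hBb D) (abs_nonneg _) (by positivity)
  -- coordinate marginals
  have heval : ∀ i : Fin n, Measure.map (fun D : Fin n → X × X => D i) ν = μ.prod μ := by
    intro i
    rw [hν]
    refine Measure.ext fun t ht => ?_
    rw [Measure.map_apply (measurable_pi_apply i) ht]
    have hpre : (fun D : Fin n → X × X => D i) ⁻¹' t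
        = Set.pi Set.univ (Function.update (fun _ : Fin n => (Set.univ : Set (X × X))) i t) :=
      Set.eval_preimage
    rw [hpre, Measure.pi_pi]
    rw [Finset.prod_eq_single i (fun j _ hj => by simp [Function.update_of_ne hj])
      (fun h => absurd (Finset.mem_univ i) h)]
    simp
  have hcoord : ∀ i : Fin n,
      ∫ D, L (D i).1 (D i).2 ∂ν = ∫ z, L z.1 z.2 ∂(μ.prod μ) := by
    intro i
    rw [← heval i]
    exact (integral_map (measurable_pi_apply i).aemeasurable
      (by rw [heval i]; exact hKm.aestronglyMeasurable)).symm
  -- expectation of A is R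
  have hEA : ∫ D, A D ∂ν = R := by
    simp_rw [hA]
    have jint : ∀ i : Fin n, Integrable (fun D : Fin n → X × X => L (D i).1 (D i).2) ν :=
      fun i => bdd_integrable ν (12*Cℓ) (hKm.comp (measurable_pi_apply i)) (fun D => hLb _ _)
    rw [integral_const_mul, integral_finset_sum _ (fun i _ => jint i)]
    rw [Finset.sum_congr rfl fun i _ => hcoord i, Finset.sum_const, Finset.card_univ,
      Fintype.card_fin, nsmul_eq_mul, hKint]
    field_simp
  -- the swap equivalence
  set e : (Fin n → X × X) ≃ᵐ (Fin n → X × X) :=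
    MeasurableEquiv.piCongrRight fun _ : Fin n => (MeasurableEquiv.prodComm : X × X ≃ᵐ X × X) with he
  have hepres : MeasurePreserving (⇑e) ν ν := by
    rw [hν]
    exact measurePreserving_pi _ _ fun _ => Measure.measurePreserving_swap
  have hcompswap : ∀ f : (Fin n → X × X) → ℝ, ∫ D, f (e D) ∂ν = ∫ D, f D ∂ν :=
    fun f => hepres.integral_comp e.measurableEmbedding f
  have hAe : ∀ D, A (e D) = B D := fun D => by
    rw [hA, hB]
    simp [e, MeasurableEquiv.piCongrRight, MeasurableEquiv.prodComm]
  -- (i)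
  have hAB2 : ∫ D, (A D) ^ 2 ∂ν = ∫ D, (B D) ^ 2 ∂ν := by
    calc ∫ D, (A D) ^ 2 ∂ν = ∫ D, (A (e D)) ^ 2 ∂ν := (hcompswap fun D => (A D) ^ 2).symm
      _ = ∫ D, (B D) ^ 2 ∂ν := by simp_rw [hAe]
  have hμB : ∫ D, (B D) ^ 2 ∂ν = μ₁ := by rw [hμ₁]; exact hAB2.symm
  have hEB : ∫ D, B D ∂ν = R := by
    calc ∫ D, B D ∂ν = ∫ D, A (e D) ∂ν := by simp_rw [hAe]
      _ = ∫ D, A D ∂ν := hcompswap A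
      _ = R := hEA
  -- (iii)
  have hABdiff : ∫ D, (A D - B D) ^ 2 ∂ν = 2 * μ₁ - 2 * μ₂ := by
    have hpt : ∀ D, (A D - B D) ^ 2 = ((A D) ^ 2 + (B D) ^ 2) - 2 * (A D * B D) :=
      fun D => by ring
    simp_rw [hpt]
    have isum : Integrable (fun D => (A D) ^ 2 + (B D) ^ 2) ν := intA2.add intB2
    have i2ab : Integrable (fun D => 2 * (A D * B D)) ν := intAB.const_mul 2
    rw [integral_sub isum i2ab, integral_add intA2 intB2,
      integral_const_mul, ← hμ₁, hμB, ← hμ₂]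
    ring
  refine ⟨hAB2, ?_, hABdiff.symm, hABdiff ▸ integral_nonneg fun D => sq_nonneg _⟩
  -- (ii)
  intro lam _hlam
  have hfm : Measurable fun D => lam * A D + (1 - lam) * B D :=
    (hAm.const_mul lam).add (hBm.const_mul (1 - lam))
  have hf2 : MemLp (fun D => lam * A D + (1 - lam) * B D) 2 ν := by
    refine MemLp.of_bound hfm.aestronglyMeasurable (|lam| * (12*Cℓ) + |1-lam| * (12*Cℓ))
      (Filter.Eventually.of_forall fun D => ?_)
    rw [Real.norm_eq_abs]
    calc |lam * A D + (1 - lam) * B D| ≤ |lam * A D| + |(1 - lam) * B D| := abs_add_le _ _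
      _ = |lam| * |A D| + |1 - lam| * |B D| := by rw [abs_mul, abs_mul]
      _ ≤ |lam| * (12*Cℓ) + |1-lam| * (12*Cℓ) :=
          add_le_add (mul_le_mul_of_nonneg_left (hAb D) (abs_nonneg _))
            (mul_le_mul_of_nonneg_left (hBb D) (abs_nonneg _))
  rw [variance_eq_sub hf2]
  have h1 : ∫ D, (lam * A D + (1 - lam) * B D) ∂ν = R := by
    rw [integral_add (intA.const_mul lam) (intB.const_mul (1 - lam)),
      integral_const_mul, integral_const_mul, hEA, hEB]
    ring
  have h2 : ∫ D, (lam * A D + (1 - lam) * B D) ^ 2 ∂ν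
      = lam^2 * μ₁ + 2*lam*(1-lam) * μ₂ + (1-lam)^2 * μ₁ := by
    have hpt : ∀ D, (lam * A D + (1 - lam) * B D) ^ 2
        = lam^2 * (A D)^2 + (2*lam*(1-lam)) * (A D * B D) + (1-lam)^2 * (B D)^2 :=
      fun D => by ring
    simp_rw [hpt]
    have ia : Integrable (fun D => lam^2 * (A D)^2) ν := intA2.const_mul _
    have ib : Integrable (fun D => (2*lam*(1-lam)) * (A D * B D)) ν := intAB.const_mul _
    have ic : Integrable (fun D => (1-lam)^2 * (B D)^2) ν := intB2.const_mul _
    have iab : Integrable (fun D => lam^2 * (A D)^2 + (2*lam*(1-lam)) * (A D * B D)) ν :=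
      ia.add ib
    rw [integral_add iab ic, integral_add ia ib,
      integral_const_mul, integral_const_mul, integral_const_mul, ← hμ₁, ← hμ₂, hμB]
  simp only [Pi.pow_apply]
  rw [h2, h1]
  ring
end

section
/- (Theorem 1, unbiasedness of the convex combination estimator.) Assume π₊ ≠ π₋ and let γ ∈ [0,1]. Define the Sconf empirical risk R̂_Sconf(D) = (1/(2n))·Σ_{i=1}^{n} [ (π₋ − sᵢ)·(ℓ₊(xᵢ) + ℓ₊(xᵢ'))/(π₋ − π₊) + (π₊ − sᵢ)·(ℓ₋(xᵢ) + ℓ₋(xᵢ'))/(π₊ − π₋) ] and the ConfDiff empirical risk R̂_CD(D) = (1/(2n))·Σ_{i=1}^{n} [ (π₊ − cᵢ)·ℓ₊(xᵢ) + (π₋ − cᵢ)·ℓ₋(xᵢ') + (π₊ + cᵢ)·ℓ₊(xᵢ') + (π₋ + cᵢ)·ℓ₋(xᵢ) ], where sᵢ = s(xᵢ,xᵢ') and cᵢ = c(xᵢ,xᵢ'). Then ∫ (γ·R̂_Sconf + (1−γ)·R̂_CD) dν = R; i.e., the convex combination γ·R̂_Sconf + (1−γ)·R̂_CD is an unbiased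 estimator of the classification risk. -/
open MeasureTheory

lemma my_map_eval_pi {ι : Type*} [Fintype ι] [DecidableEq ι] {α : ι → Type*}
    [∀ i, MeasurableSpace (α i)] (μ : ∀ i, Measure (α i)) [∀ i, IsProbabilityMeasure (μ i)]
    (i : ι) : Measure.map (fun D => D i) (Measure.pi μ) = μ i := by
  ext t ht
  rw [Measure.map_apply (measurable_pi_apply i) ht,
    show (fun D : ∀ j, α j => D i) = Function.eval i from rfl, Set.eval_preimage,
    Measure.pi_pi,
    Finset.prod_eq_single i (fun j _ hj => by simp [Function.update_of_ne hj]) (by simp)]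
  simp

lemma my_integral_sum_prod_mul {X : Type*} [MeasurableSpace X] {μ : Measure X}
    [IsProbabilityMeasure μ] {k : ℕ} (f g : Fin k → X → ℝ)
    (hf : ∀ i, Integrable (f i) μ) (hg : ∀ i, Integrable (g i) μ) :
    ∫ z : X × X, (∑ i, f i z.1 * g i z.2) ∂(μ.prod μ)
      = ∑ i, (∫ x, f i x ∂μ) * (∫ x, g i x ∂μ) := by
  rw [integral_finset_sum _ fun i _ => (hf i).mul_prod (hg i)]
  exact Finset.sum_congr rfl fun i _ => integral_prod_mul (f i) (g i)

lemma my_intg_bdd {X : Type*} [MeasurableSpace X] {μ : Measure X} [IsFiniteMeasure μ]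
    {f : X → ℝ} (hf : Measurable f) {C : ℝ} (h : ∀ x, |f x| ≤ C) : Integrable f μ :=
  (integrable_const C).mono' hf.aestronglyMeasurable
    (Filter.Eventually.of_forall fun x => by simpa [Real.norm_eq_abs] using h x)

set_option maxHeartbeats 2000000 in
/-- (Theorem 1, unbiasedness of the convex combination estimator.) -/
theorem sconfconfdiff_convex_combination_unbiased
    {X : Type*} [MeasurableSpace X] (μ : Measure X) [IsProbabilityMeasure μ]
    (η : X → ℝ) (hη : Measurable η) (hη0 : ∀ x, 0 ≤ η x) (hη1 : ∀ x, η x ≤ 1)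
    (πp πm : ℝ) (hπp : πp = ∫ x, η x ∂μ) (hπm : πm = 1 - πp) (hne : πp ≠ πm)
    (s c : X → X → ℝ)
    (hs : ∀ x x', s x x' = η x * η x' + (1 - η x) * (1 - η x'))
    (hc : ∀ x x', c x x' = η x' - η x)
    (Cℓ : ℝ) (hCℓ : 0 ≤ Cℓ)
    (ℓp ℓm : X → ℝ) (hℓp : Measurable ℓp) (hℓm : Measurable ℓm)
    (hℓp0 : ∀ x, 0 ≤ ℓp x) (hℓpC : ∀ x, ℓp x ≤ Cℓ)
    (hℓm0 : ∀ x, 0 ≤ ℓm x) (hℓmC : ∀ x, ℓm x ≤ Cℓ)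
    (R : ℝ) (hR : R = ∫ x, (η x * ℓp x + (1 - η x) * ℓm x) ∂μ)
    (n : ℕ) (hn : 1 ≤ n)
    (ν : Measure (Fin n → X × X)) (hν : ν = Measure.pi fun _ => μ.prod μ)
    (γ : ℝ) (hγ : γ ∈ Set.Icc (0 : ℝ) 1)
    (RSconf RCD : (Fin n → X × X) → ℝ)
    (hRSconf : ∀ D, RSconf D = (1 / (2 * (n : ℝ))) * ∑ i,
      ((πm - s (D i).1 (D i).2) * (ℓp (D i).1 + ℓp (D i).2) / (πm - πp)
        + (πp - s (D i).1 (D i).2) * (ℓm (D i).1 + ℓm (D i).2) / (πp - πm)))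
    (hRCD : ∀ D, RCD D = (1 / (2 * (n : ℝ))) * ∑ i,
      ((πp - c (D i).1 (D i).2) * ℓp (D i).1 + (πm - c (D i).1 (D i).2) * ℓm (D i).2
        + (πp + c (D i).1 (D i).2) * ℓp (D i).2 + (πm + c (D i).1 (D i).2) * ℓm (D i).1)) :
    ∫ D, (γ * RSconf D + (1 - γ) * RCD D) ∂ν = R := by
  subst hν hπm
  have hd : (1 - πp) - πp ≠ 0 := sub_ne_zero.mpr (Ne.symm hne)
  have hd' : πp - (1 - πp) ≠ 0 := sub_ne_zero.mpr hne
  -- basic integrability facts over μ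
  have hη_i : Integrable η μ :=
    my_intg_bdd hη (C := 1) fun x => abs_le.2 ⟨by linarith [hη0 x], hη1 x⟩
  have h1η_i : Integrable (fun x => 1 - η x) μ := (integrable_const 1).sub hη_i
  have hp_i : Integrable ℓp μ :=
    my_intg_bdd hℓp (C := Cℓ) fun x => abs_le.2 ⟨by linarith [hℓp0 x], hℓpC x⟩
  have hm_i : Integrable ℓm μ :=
    my_intg_bdd hℓm (C := Cℓ) fun x => abs_le.2 ⟨by linarith [hℓm0 x], hℓmC x⟩
  have hηp_i : Integrable (fun x => η x * ℓp x) μ :=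
    my_intg_bdd (hη.mul hℓp) (C := Cℓ) fun x => abs_le.2
      ⟨by nlinarith [hη0 x, hℓp0 x], by nlinarith [hη0 x, hη1 x, hℓp0 x, hℓpC x]⟩
  have h1ηp_i : Integrable (fun x => (1 - η x) * ℓp x) μ :=
    my_intg_bdd ((measurable_const.sub hη).mul hℓp) (C := Cℓ) fun x => abs_le.2
      ⟨by nlinarith [hη1 x, hℓp0 x], by nlinarith [hη0 x, hη1 x, hℓp0 x, hℓpC x]⟩
  have hηm_i : Integrable (fun x => η x * ℓm x) μ :=
    my_intg_bdd (hη.mul hℓm) (C := Cℓ) fun x => abs_le.2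
      ⟨by nlinarith [hη0 x, hℓm0 x], by nlinarith [hη0 x, hη1 x, hℓm0 x, hℓmC x]⟩
  have h1ηm_i : Integrable (fun x => (1 - η x) * ℓm x) μ :=
    my_intg_bdd ((measurable_const.sub hη).mul hℓm) (C := Cℓ) fun x => abs_le.2
      ⟨by nlinarith [hη1 x, hℓm0 x], by nlinarith [hη0 x, hη1 x, hℓm0 x, hℓmC x]⟩
  -- values of some integrals
  have hIη : ∫ x, η x ∂μ = πp := hπp.symm
  have hI1η : ∫ x, (1 - η x) ∂μ = 1 - πp := by
    rw [integral_sub (integrable_const 1) hη_i, integral_const]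
    simp [hπp]
  have h1ηp_val : ∫ x, (1 - η x) * ℓp x ∂μ = (∫ x, ℓp x ∂μ) - ∫ x, η x * ℓp x ∂μ := by
    rw [show (fun x => (1 - η x) * ℓp x) = fun x => ℓp x - η x * ℓp x from
      funext fun x => by ring, integral_sub hp_i hηp_i]
  have hηm_val : ∫ x, η x * ℓm x ∂μ = (∫ x, ℓm x ∂μ) - ∫ x, (1 - η x) * ℓm x ∂μ := by
    rw [show (fun x => η x * ℓm x) = fun x => ℓm x - (1 - η x) * ℓm x from
      funext fun x => by ring, integral_sub hm_i h1ηm_i]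
  have hR' : R = (∫ x, η x * ℓp x ∂μ) + ∫ x, (1 - η x) * ℓm x ∂μ := by
    rw [hR, integral_add hηp_i h1ηm_i]
  -- separable decomposition
  set F1 : Fin 24 → X → ℝ := ![
    fun x => γ / ((1 - πp) - πp) * (1 - πp) * ℓp x,
    fun _ => γ / ((1 - πp) - πp) * (1 - πp),
    fun x => -(γ / ((1 - πp) - πp)) * (η x * ℓp x),
    fun x => -(γ / ((1 - πp) - πp)) * ((1 - η x) * ℓp x),
    fun x => -(γ / ((1 - πp) - πp)) * η x,
    fun x => -(γ / ((1 - πp) - πp)) * (1 - η x),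
    fun x => -(γ / ((1 - πp) - πp)) * πp * ℓm x,
    fun _ => -(γ / ((1 - πp) - πp)) * πp,
    fun x => γ / ((1 - πp) - πp) * (η x * ℓm x),
    fun x => γ / ((1 - πp) - πp) * ((1 - η x) * ℓm x),
    fun x => γ / ((1 - πp) - πp) * η x,
    fun x => γ / ((1 - πp) - πp) * (1 - η x),
    fun x => (1 - γ) * πp * ℓp x,
    fun x => -(1 - γ) * ℓp x,
    fun x => (1 - γ) * (η x * ℓp x),
    fun _ => (1 - γ) * (1 - πp),
    fun _ => -(1 - γ),
    fun x => (1 - γ) * η x,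
    fun _ => (1 - γ) * πp,
    fun _ => (1 - γ),
    fun x => -(1 - γ) * η x,
    fun x => (1 - γ) * (1 - πp) * ℓm x,
    fun x => (1 - γ) * ℓm x,
    fun x => -(1 - γ) * (η x * ℓm x)] with hF1
  set F2 : Fin 24 → X → ℝ := ![
    fun _ => 1, ℓp, η, fun x => 1 - η x, fun x => η x * ℓp x, fun x => (1 - η x) * ℓp x,
    fun _ => 1, ℓm, η, fun x => 1 - η x, fun x => η x * ℓm x, fun x => (1 - η x) * ℓm x,
    fun _ => 1, η, fun _ => 1, ℓm, fun x => η x * ℓm x, ℓm, ℓp, fun x => η x * ℓp x, ℓp,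
    fun _ => 1, η, fun _ => 1] with hF2
  have hF1_i : ∀ i, Integrable (F1 i) μ := by
    intro i
    fin_cases i <;>
      simp only [hF1, Matrix.cons_val_zero, Matrix.cons_val_one, Matrix.head_cons,
        Matrix.cons_val_succ, Fin.isValue] <;>
      first
        | exact integrable_const _
        | exact hp_i.const_mul _
        | exact hm_i.const_mul _
        | exact hη_i.const_mul _
        | exact h1η_i.const_mul _
        | exact hηp_i.const_mul _
        | exact h1ηp_i.const_mul _
        | exact hηm_i.const_mul _
        | exact h1ηm_i.const_mul _
  have hF2_i : ∀ i, Integrable (F2 i) μ := by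
    intro i
    fin_cases i <;>
      simp only [hF2, Matrix.cons_val_zero, Matrix.cons_val_one, Matrix.head_cons,
        Matrix.cons_val_succ, Fin.isValue] <;>
      first
        | exact integrable_const _
        | exact hp_i
        | exact hm_i
        | exact hη_i
        | exact h1η_i
        | exact hηp_i
        | exact h1ηp_i
        | exact hηm_i
        | exact h1ηm_i
  set H : X × X → ℝ := fun z => ∑ k, F1 k z.1 * F2 k z.2 with hH
  have hHint : Integrable H (μ.prod μ) :=
    integrable_finset_sum _ fun k _ => (hF1_i k).mul_prod (hF2_i k)
  -- value of the per-pair integral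
  have keyint : ∫ z, H z ∂(μ.prod μ) = 2 * R := by
    rw [hH, my_integral_sum_prod_mul F1 F2 hF1_i hF2_i]
    simp only [hF1, hF2, Fin.sum_univ_succ, Fin.sum_univ_zero, Matrix.cons_val_zero,
      Matrix.cons_val_one, Matrix.head_cons, Matrix.cons_val_succ, integral_const_mul,
      integral_const, measure_univ, probReal_univ, ENNReal.toReal_one, one_smul, smul_eq_mul, mul_one,
      add_zero]
    rw [hIη, hI1η, h1ηp_val, hηm_val, hR']
    field_simp
    ring
  -- pointwise identity
  have hpt : ∀ z : X × X,
      γ * ((((1 : ℝ) - πp) - (η z.1 * η z.2 + (1 - η z.1) * (1 - η z.2)))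
            * (ℓp z.1 + ℓp z.2) / ((1 - πp) - πp)
          + (πp - (η z.1 * η z.2 + (1 - η z.1) * (1 - η z.2)))
            * (ℓm z.1 + ℓm z.2) / (πp - (1 - πp)))
        + (1 - γ) * ((πp - (η z.2 - η z.1)) * ℓp z.1 + ((1 - πp) - (η z.2 - η z.1)) * ℓm z.2
          + (πp + (η z.2 - η z.1)) * ℓp z.2 + ((1 - πp) + (η z.2 - η z.1)) * ℓm z.1)
      = H z := by
    intro z
    rw [hH]
    simp only [hF1, hF2, Fin.sum_univ_succ, Fin.sum_univ_zero, Matrix.cons_val_zero,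
      Matrix.cons_val_one, Matrix.head_cons, Matrix.cons_val_succ, add_zero]
    field_simp
    ring
  -- rewrite the estimator
  have hmain : (fun D : Fin n → X × X => γ * RSconf D + (1 - γ) * RCD D)
      = fun D => (1 / (2 * (n : ℝ))) * ∑ i, H (D i) := by
    funext D
    rw [hRSconf D, hRCD D,
      show ∀ u v : ℝ, γ * (1 / (2 * (n : ℝ)) * u) + (1 - γ) * (1 / (2 * (n : ℝ)) * v)
        = 1 / (2 * (n : ℝ)) * (γ * u + (1 - γ) * v) from fun u v => by ring]
    congr 1
    rw [Finset.mul_sum, Finset.mul_sum, ← Finset.sum_add_distrib]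
    refine Finset.sum_congr rfl fun i _ => ?_
    rw [hs, hc]
    exact hpt (D i)
  -- transport along coordinate evaluations
  have hmap : ∀ i : Fin n, Measure.map (fun D : Fin n → X × X => D i)
      (Measure.pi fun _ => μ.prod μ) = μ.prod μ := fun i => my_map_eval_pi _ i
  have hcomp_int : ∀ i : Fin n, Integrable (fun D : Fin n → X × X => H (D i))
      (Measure.pi fun _ => μ.prod μ) := by
    intro i
    have h := integrable_map_measure (f := fun D : Fin n → X × X => D i) (g := H)
      (by rw [hmap i]; exact hHint.aestronglyMeasurable) (measurable_pi_apply i).aemeasurable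
    rw [hmap i] at h
    exact h.mp hHint
  have hcomp_val : ∀ i : Fin n, ∫ D, H (D i) ∂(Measure.pi fun _ : Fin n => μ.prod μ)
      = ∫ z, H z ∂(μ.prod μ) := by
    intro i
    have h := integral_map (φ := fun D : Fin n → X × X => D i) (f := H)
      (measurable_pi_apply i).aemeasurable
      (by rw [hmap i]; exact hHint.aestronglyMeasurable)
    rw [hmap i] at h
    exact h.symm
  -- put everything together
  rw [hmain]
  rw [integral_const_mul, integral_finset_sum _ fun i _ => hcomp_int i]
  rw [Finset.sum_congr rfl fun i _ => by rw [hcomp_val i, keyint]]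
  rw [Finset.sum_const, Finset.card_univ, Fintype.card_fin, nsmul_eq_mul]
  have hn' : (n : ℝ) ≠ 0 := Nat.cast_ne_zero.mpr (by omega)
  field_simp
end

section
/- (Lemma A.3, key identities for Theorem 2.) The following four identities hold, where all double integrals are over (x,x') with respect to μ⊗μ: (i) ∫∫ (2π₊(π₊ − c(x,x')) + π₋ − s(x,x'))·ℓ₊(x) = ∫ η(x)·ℓ₊(x) dμ(x); (ii) ∫∫ (2π₋(π₋ + c(x,x')) + π₊ − s(x,x'))·ℓ₋(x) = ∫ (1−η(x))·ℓ₋(x) dμ(x); (iii) ∫∫ (2π₊(π₊ + c(x,x')) + π₋ − s(x,x'))·ℓ₊(x') = ∫ η(x)·ℓ₊(x) dμ(x); (iv) ∫∫ (2π₋(π₋ − c(x,x')) + π₊ − s(x,x'))·ℓ₋(x') = ∫ (1−η(x))·ℓ₋(x) dμ(x). -/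
open MeasureTheory

private lemma key_helper1 {X : Type*} [MeasurableSpace X] (μ : Measure X)
    [IsProbabilityMeasure μ] (η ℓ : X → ℝ)
    (hηI : Integrable η μ) (hℓI : Integrable ℓ μ)
    (hηℓI : Integrable (fun x => η x * ℓ x) μ) (A B C D : ℝ) :
    ∫ p : X × X, (A + B * η p.1 + C * η p.2 + D * (η p.1 * η p.2)) * ℓ p.1 ∂(μ.prod μ)
      = A * (∫ x, ℓ x ∂μ) + B * (∫ x, η x * ℓ x ∂μ)
        + C * (∫ x, η x ∂μ) * (∫ x, ℓ x ∂μ)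
        + D * (∫ x, η x ∂μ) * (∫ x, η x * ℓ x ∂μ) := by
  have hf1 : Integrable (fun x => A * ℓ x + B * (η x * ℓ x)) μ :=
    (hℓI.const_mul A).add (hηℓI.const_mul B)
  have hf2 : Integrable (fun x => C * ℓ x + D * (η x * ℓ x)) μ :=
    (hℓI.const_mul C).add (hηℓI.const_mul D)
  have e : (fun p : X × X => (A + B * η p.1 + C * η p.2 + D * (η p.1 * η p.2)) * ℓ p.1)
      = fun p : X × X =>
        (fun x => A * ℓ x + B * (η x * ℓ x)) p.1 * (fun _ : X => (1 : ℝ)) p.2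
        + (fun x => C * ℓ x + D * (η x * ℓ x)) p.1 * η p.2 := by
    funext p; dsimp only; ring
  rw [e, integral_add (hf1.mul_prod (integrable_const 1)) (hf2.mul_prod hηI),
    integral_prod_mul (fun x => A * ℓ x + B * (η x * ℓ x)) (fun _ : X => (1 : ℝ)),
    integral_prod_mul (fun x => C * ℓ x + D * (η x * ℓ x)) η,
    integral_add (hℓI.const_mul A) (hηℓI.const_mul B),
    integral_add (hℓI.const_mul C) (hηℓI.const_mul D),
    integral_const_mul, integral_const_mul, integral_const_mul, integral_const_mul,
    integral_const]
  simp [measure_univ]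
  ring

private lemma key_helper2 {X : Type*} [MeasurableSpace X] (μ : Measure X)
    [IsProbabilityMeasure μ] (η ℓ : X → ℝ)
    (hηI : Integrable η μ) (hℓI : Integrable ℓ μ)
    (hηℓI : Integrable (fun x => η x * ℓ x) μ) (A B C D : ℝ) :
    ∫ p : X × X, (A + B * η p.1 + C * η p.2 + D * (η p.1 * η p.2)) * ℓ p.2 ∂(μ.prod μ)
      = A * (∫ x, ℓ x ∂μ) + C * (∫ x, η x * ℓ x ∂μ)
        + B * (∫ x, η x ∂μ) * (∫ x, ℓ x ∂μ)
        + D * (∫ x, η x ∂μ) * (∫ x, η x * ℓ x ∂μ) := by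
  have e : (fun p : X × X => (A + B * η p.1 + C * η p.2 + D * (η p.1 * η p.2)) * ℓ p.2)
      = fun p : X × X =>
        (fun q : X × X => (A + C * η q.1 + B * η q.2 + D * (η q.1 * η q.2)) * ℓ q.1)
          (Prod.swap p) := by
    funext p; dsimp only; simp only [Prod.fst_swap, Prod.snd_swap]; ring
  rw [e, integral_prod_swap (fun q : X × X => (A + C * η q.1 + B * η q.2 + D * (η q.1 * η q.2)) * ℓ q.1), key_helper1 μ η ℓ hηI hℓI hηℓI A C B D]

/-- (Lemma A.3, key identities for Theorem 2.) -/
theorem sconfconfdiff_key_identities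
    {X : Type*} [MeasurableSpace X] (μ : Measure X) [IsProbabilityMeasure μ]
    (η : X → ℝ) (hη : Measurable η) (hη0 : ∀ x, 0 ≤ η x) (hη1 : ∀ x, η x ≤ 1)
    (πp πm : ℝ) (hπp : πp = ∫ x, η x ∂μ) (hπm : πm = 1 - πp)
    (s c : X → X → ℝ)
    (hs : ∀ x x', s x x' = η x * η x' + (1 - η x) * (1 - η x'))
    (hc : ∀ x x', c x x' = η x' - η x)
    (Cℓ : ℝ) (hCℓ : 0 ≤ Cℓ)
    (ℓp ℓm : X → ℝ) (hℓp : Measurable ℓp) (hℓm : Measurable ℓm)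
    (hℓp0 : ∀ x, 0 ≤ ℓp x) (hℓpC : ∀ x, ℓp x ≤ Cℓ)
    (hℓm0 : ∀ x, 0 ≤ ℓm x) (hℓmC : ∀ x, ℓm x ≤ Cℓ) :
    (∫ p : X × X, (2 * πp * (πp - c p.1 p.2) + πm - s p.1 p.2) * ℓp p.1 ∂(μ.prod μ)
      = ∫ x, η x * ℓp x ∂μ) ∧
    (∫ p : X × X, (2 * πm * (πm + c p.1 p.2) + πp - s p.1 p.2) * ℓm p.1 ∂(μ.prod μ)
      = ∫ x, (1 - η x) * ℓm x ∂μ) ∧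
    (∫ p : X × X, (2 * πp * (πp + c p.1 p.2) + πm - s p.1 p.2) * ℓp p.2 ∂(μ.prod μ)
      = ∫ x, η x * ℓp x ∂μ) ∧
    (∫ p : X × X, (2 * πm * (πm - c p.1 p.2) + πp - s p.1 p.2) * ℓm p.2 ∂(μ.prod μ)
      = ∫ x, (1 - η x) * ℓm x ∂μ) := by
  have bdd : ∀ (f : X → ℝ), Measurable f → ∀ Cf : ℝ, (∀ x, |f x| ≤ Cf) → Integrable f μ := by
    intro f hf Cf hb
    exact (integrable_const Cf).mono' hf.aestronglyMeasurable
      (Filter.Eventually.of_forall fun x => by simpa using hb x)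
  have hηb : ∀ x, |η x| ≤ 1 := fun x => abs_le.2 ⟨by linarith [hη0 x], hη1 x⟩
  have hℓpb : ∀ x, |ℓp x| ≤ Cℓ := fun x => abs_le.2 ⟨by linarith [hℓp0 x], hℓpC x⟩
  have hℓmb : ∀ x, |ℓm x| ≤ Cℓ := fun x => abs_le.2 ⟨by linarith [hℓm0 x], hℓmC x⟩
  have Iη : Integrable η μ := bdd η hη 1 hηb
  have Iℓp : Integrable ℓp μ := bdd ℓp hℓp Cℓ hℓpb
  have Iℓm : Integrable ℓm μ := bdd ℓm hℓm Cℓ hℓmb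
  have Iηℓp : Integrable (fun x => η x * ℓp x) μ := by
    refine bdd _ (hη.mul hℓp) Cℓ fun x => ?_
    rw [abs_mul]
    calc |η x| * |ℓp x| ≤ 1 * Cℓ := by
          exact mul_le_mul (hηb x) (hℓpb x) (abs_nonneg _) zero_le_one
      _ = Cℓ := one_mul _
  have Iηℓm : Integrable (fun x => η x * ℓm x) μ := by
    refine bdd _ (hη.mul hℓm) Cℓ fun x => ?_
    rw [abs_mul]
    calc |η x| * |ℓm x| ≤ 1 * Cℓ := by
          exact mul_le_mul (hηb x) (hℓmb x) (abs_nonneg _) zero_le_one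
      _ = Cℓ := one_mul _
  have hrm : ∫ x, (1 - η x) * ℓm x ∂μ = ∫ x, ℓm x ∂μ - ∫ x, η x * ℓm x ∂μ := by
    rw [← integral_sub Iℓm Iηℓm]
    congr 1; funext x; ring
  refine ⟨?_, ?_, ?_, ?_⟩
  · have e : (fun p : X × X => (2 * πp * (πp - c p.1 p.2) + πm - s p.1 p.2) * ℓp p.1)
        = fun p : X × X => ((2 * πp ^ 2 + πm - 1) + (2 * πp + 1) * η p.1
            + (1 - 2 * πp) * η p.2 + (-2) * (η p.1 * η p.2)) * ℓp p.1 := by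
      funext p; rw [hs, hc]; ring
    rw [e, key_helper1 μ η ℓp Iη Iℓp Iηℓp, ← hπp]
    subst hπm; ring
  · have e : (fun p : X × X => (2 * πm * (πm + c p.1 p.2) + πp - s p.1 p.2) * ℓm p.1)
        = fun p : X × X => ((2 * πm ^ 2 + πp - 1) + (1 - 2 * πm) * η p.1
            + (2 * πm + 1) * η p.2 + (-2) * (η p.1 * η p.2)) * ℓm p.1 := by
      funext p; rw [hs, hc]; ring
    rw [e, key_helper1 μ η ℓm Iη Iℓm Iηℓm, ← hπp, hrm]
    subst hπm; ring
  · have e : (fun p : X × X => (2 * πp * (πp + c p.1 p.2) + πm - s p.1 p.2) * ℓp p.2)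
        = fun p : X × X => ((2 * πp ^ 2 + πm - 1) + (1 - 2 * πp) * η p.1
            + (2 * πp + 1) * η p.2 + (-2) * (η p.1 * η p.2)) * ℓp p.2 := by
      funext p; rw [hs, hc]; ring
    rw [e, key_helper2 μ η ℓp Iη Iℓp Iηℓp, ← hπp]
    subst hπm; ring
  · have e : (fun p : X × X => (2 * πm * (πm - c p.1 p.2) + πp - s p.1 p.2) * ℓm p.2)
        = fun p : X × X => ((2 * πm ^ 2 + πp - 1) + (2 * πm + 1) * η p.1
            + (1 - 2 * πm) * η p.2 + (-2) * (η p.1 * η p.2)) * ℓm p.2 := by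
      funext p; rw [hs, hc]; ring
    rw [e, key_helper2 μ η ℓm Iη Iℓm Iηℓm, ← hπp, hrm]
    subst hπm; ring
end

section
/- (Deterministic deviation bound in the proof of Theorem B.2.) Let n ≥ 1, C_ℓ ≥ 0, γ ∈ [0,1], and let π₊ ∈ ℝ with π₋ = 1 − π₊ and π₊ ≠ π₋. For each i ∈ {1,…,n} let sᵢ, s̄ᵢ, cᵢ, c̄ᵢ ∈ ℝ and let aᵢ, a'ᵢ, bᵢ, b'ᵢ ∈ [0, C_ℓ]. Define R̂_Sconf = (1/(2n))·Σᵢ [ (sᵢ−π₋)·(aᵢ+a'ᵢ)/(π₊−π₋) + (π₊−sᵢ)·(bᵢ+b'ᵢ)/(π₊−π₋) ] and R̂_CD = (1/(2n))·Σᵢ [ (π₊−cᵢ)·aᵢ + (π₋−cᵢ)·b'ᵢ + (π₊+cᵢ)·a'ᵢ + (π₋+cᵢ)·bᵢ ], and define R̄_Sconf, R̄_CD by the same formulas with sᵢ, cᵢ replaced by s̄ᵢ, c̄ᵢ. Then |(γ·R̄_Sconf + (1−γ)·R̄_CD) − (γ·R̂_Sconf + (1−γ)·R̂_CD)| ≤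 γ·C_ℓ·Σᵢ|s̄ᵢ−sᵢ| / (n·|π₊−π₋|) + 2(1−γ)·C_ℓ·Σᵢ|c̄ᵢ−cᵢ| / n. -/
/-- (Deterministic deviation bound in the proof of Theorem B.2.) -/
theorem sconfconfdiff_convex_noisy_deviation_bound
    (n : ℕ) (hn : 1 ≤ n) (Cℓ : ℝ) (hCℓ : 0 ≤ Cℓ)
    (γ : ℝ) (hγ : γ ∈ Set.Icc (0 : ℝ) 1)
    (πp πm : ℝ) (hπm : πm = 1 - πp) (hne : πp ≠ πm)
    (s sb c cb : Fin n → ℝ)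
    (a a' b b' : Fin n → ℝ)
    (ha : ∀ i, a i ∈ Set.Icc 0 Cℓ) (ha' : ∀ i, a' i ∈ Set.Icc 0 Cℓ)
    (hb : ∀ i, b i ∈ Set.Icc 0 Cℓ) (hb' : ∀ i, b' i ∈ Set.Icc 0 Cℓ)
    (RSconf RCD RbSconf RbCD : ℝ)
    (hRSconf : RSconf = (1 / (2 * (n : ℝ))) * ∑ i,
      ((s i - πm) * (a i + a' i) / (πp - πm) + (πp - s i) * (b i + b' i) / (πp - πm)))
    (hRCD : RCD = (1 / (2 * (n : ℝ))) * ∑ i,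
      ((πp - c i) * a i + (πm - c i) * b' i + (πp + c i) * a' i + (πm + c i) * b i))
    (hRbSconf : RbSconf = (1 / (2 * (n : ℝ))) * ∑ i,
      ((sb i - πm) * (a i + a' i) / (πp - πm) + (πp - sb i) * (b i + b' i) / (πp - πm)))
    (hRbCD : RbCD = (1 / (2 * (n : ℝ))) * ∑ i,
      ((πp - cb i) * a i + (πm - cb i) * b' i + (πp + cb i) * a' i + (πm + cb i) * b i)) :
    |(γ * RbSconf + (1 - γ) * RbCD) - (γ * RSconf + (1 - γ) * RCD)| ≤
      γ * Cℓ * (∑ i, |sb i - s i|) / ((n : ℝ) * |πp - πm|)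
      + 2 * (1 - γ) * Cℓ * (∑ i, |cb i - c i|) / (n : ℝ) := by
  have hD : πp - πm ≠ 0 := sub_ne_zero.mpr hne
  have hDabs : (0 : ℝ) < |πp - πm| := abs_pos.mpr hD
  have hn0 : (0 : ℝ) < n := by exact_mod_cast hn
  obtain ⟨hγ0, hγ1⟩ := hγ
  have habs2n : |1 / (2 * (n : ℝ))| = 1 / (2 * (n : ℝ)) := by
    rw [abs_of_pos]; positivity
  have bound1 : |RbSconf - RSconf| ≤ Cℓ * (∑ i, |sb i - s i|) / ((n : ℝ) * |πp - πm|) := by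
    have h : RbSconf - RSconf = (1 / (2 * (n : ℝ))) *
        ∑ i, ((sb i - s i) * (a i + a' i - b i - b' i) / (πp - πm)) := by
      rw [hRbSconf, hRSconf, ← mul_sub, ← Finset.sum_sub_distrib]
      congr 1
      apply Finset.sum_congr rfl
      intro i _
      field_simp
      ring
    rw [h, abs_mul, habs2n]
    have hsum : |∑ i, ((sb i - s i) * (a i + a' i - b i - b' i) / (πp - πm))|
        ≤ ∑ i, |sb i - s i| * (2 * Cℓ) / |πp - πm| := by
      refine (Finset.abs_sum_le_sum_abs _ _).trans ?_
      apply Finset.sum_le_sum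
      intro i _
      rw [abs_div, abs_mul]
      gcongr
      have h1 := ha i; have h2 := ha' i; have h3 := hb i; have h4 := hb' i
      simp only [Set.mem_Icc] at h1 h2 h3 h4
      rw [abs_le]
      constructor <;> linarith [h1.1, h1.2, h2.1, h2.2, h3.1, h3.2, h4.1, h4.2]
    have heq : (1 / (2 * (n : ℝ))) * (∑ i, |sb i - s i| * (2 * Cℓ) / |πp - πm|)
        = Cℓ * (∑ i, |sb i - s i|) / ((n : ℝ) * |πp - πm|) := by
      rw [← Finset.sum_div, ← Finset.sum_mul]
      field_simp
    calc (1 / (2 * (n : ℝ))) * |∑ i, ((sb i - s i) * (a i + a' i - b i - b' i) / (πp - πm))|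
        ≤ (1 / (2 * (n : ℝ))) * (∑ i, |sb i - s i| * (2 * Cℓ) / |πp - πm|) := by
          apply mul_le_mul_of_nonneg_left hsum; positivity
      _ = _ := heq
  have bound2 : |RbCD - RCD| ≤ 2 * Cℓ * (∑ i, |cb i - c i|) / (n : ℝ) := by
    have h : RbCD - RCD = (1 / (2 * (n : ℝ))) *
        ∑ i, ((cb i - c i) * (a' i + b i - a i - b' i)) := by
      rw [hRbCD, hRCD, ← mul_sub, ← Finset.sum_sub_distrib]
      congr 1
      apply Finset.sum_congr rfl
      intro i _
      ring
    rw [h, abs_mul, habs2n]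
    have hsum : |∑ i, ((cb i - c i) * (a' i + b i - a i - b' i))|
        ≤ ∑ i, |cb i - c i| * (2 * Cℓ) := by
      refine (Finset.abs_sum_le_sum_abs _ _).trans ?_
      apply Finset.sum_le_sum
      intro i _
      rw [abs_mul]
      gcongr
      have h1 := ha i; have h2 := ha' i; have h3 := hb i; have h4 := hb' i
      simp only [Set.mem_Icc] at h1 h2 h3 h4
      rw [abs_le]
      constructor <;> linarith [h1.1, h1.2, h2.1, h2.2, h3.1, h3.2, h4.1, h4.2]
    have heq : (1 / (2 * (n : ℝ))) * (∑ i, |cb i - c i| * (2 * Cℓ))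
        = Cℓ * (∑ i, |cb i - c i|) / (n : ℝ) := by
      rw [← Finset.sum_mul]
      field_simp
    calc (1 / (2 * (n : ℝ))) * |∑ i, ((cb i - c i) * (a' i + b i - a i - b' i))|
        ≤ (1 / (2 * (n : ℝ))) * (∑ i, |cb i - c i| * (2 * Cℓ)) := by
          apply mul_le_mul_of_nonneg_left hsum; positivity
      _ = Cℓ * (∑ i, |cb i - c i|) / (n : ℝ) := heq
      _ ≤ 2 * Cℓ * (∑ i, |cb i - c i|) / (n : ℝ) := by
          have hS : (0:ℝ) ≤ ∑ i, |cb i - c i| := Finset.sum_nonneg fun i _ => abs_nonneg _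
          gcongr
          nlinarith
  have step : |(γ * RbSconf + (1 - γ) * RbCD) - (γ * RSconf + (1 - γ) * RCD)|
      ≤ γ * |RbSconf - RSconf| + (1 - γ) * |RbCD - RCD| := by
    have : (γ * RbSconf + (1 - γ) * RbCD) - (γ * RSconf + (1 - γ) * RCD)
        = γ * (RbSconf - RSconf) + (1 - γ) * (RbCD - RCD) := by ring
    rw [this]
    refine (abs_add_le _ _).trans ?_
    rw [abs_mul, abs_mul, abs_of_nonneg hγ0, abs_of_nonneg (by linarith : (0:ℝ) ≤ 1 - γ)]
  refine step.trans ?_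
  have := mul_le_mul_of_nonneg_left bound1 hγ0
  have := mul_le_mul_of_nonneg_left bound2 (by linarith : (0:ℝ) ≤ 1 - γ)
  calc γ * |RbSconf - RSconf| + (1 - γ) * |RbCD - RCD|
      ≤ γ * (Cℓ * (∑ i, |sb i - s i|) / ((n : ℝ) * |πp - πm|))
        + (1 - γ) * (2 * Cℓ * (∑ i, |cb i - c i|) / (n : ℝ)) := by
        gcongr <;> linarith
    _ = γ * Cℓ * (∑ i, |sb i - s i|) / ((n : ℝ) * |πp - πm|)
        + 2 * (1 - γ) * Cℓ * (∑ i, |cb i - c i|) / (n : ℝ) := by ring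
end

section
/- (Lemma A.6, probability that some component of the empirical risk is nonpositive.) Assume C_ℓ > 0 and let a, b, c, d ≥ 0 be constants with ∫ Â dν ≥ a, ∫ B̂ dν ≥ b, ∫ Ĉ dν ≥ c, ∫ D̂ dν ≥ d. Then ν{ D ∈ (X×X)^n : Â(D) ≤ 0 or B̂(D) ≤ 0 or Ĉ(D) ≤ 0 or D̂(D) ≤ 0 } ≤ exp(−4a²n/((4π₊+1)²C_ℓ²)) + exp(−4b²n/((4π₋+1)²C_ℓ²)) + exp(−4c²n/((4π₊+1)²C_ℓ²)) + exp(−4d²n/((4π₋+1)²C_ℓ²)). -/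
open MeasureTheory Real

lemma log_aux (p : ℝ) (hp0 : 0 ≤ p) (hp1 : p ≤ 1) (h : ℝ) :
    Real.log (1 - p + p * Real.exp h) ≤ p * h + h ^ 2 / 8 := by
  have hg : ∀ x : ℝ, 0 < 1 - p + p * Real.exp x := by
    intro x; nlinarith [Real.exp_pos x, mul_nonneg hp0 (Real.exp_pos x).le]
  set F : ℝ → ℝ := fun x => p * x + x ^ 2 / 8 - Real.log (1 - p + p * Real.exp x) with hFdef
  set F' : ℝ → ℝ := fun x => p + x / 4 - p * Real.exp x / (1 - p + p * Real.exp x) with hF'def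
  have hgder : ∀ x : ℝ, HasDerivAt (fun x : ℝ => 1 - p + p * Real.exp x) (p * Real.exp x) x := by
    intro x
    exact ((Real.hasDerivAt_exp x).const_mul p).const_add (1 - p)
  have hder : ∀ x, HasDerivAt F (F' x) x := by
    intro x
    have h2 : HasDerivAt (fun x => Real.log (1 - p + p * Real.exp x))
        (p * Real.exp x / (1 - p + p * Real.exp x)) x := (hgder x).log (hg x).ne'
    have h3 : HasDerivAt (fun x : ℝ => p * x + x ^ 2 / 8) (p * 1 + (2 : ℕ) * x ^ 1 / 8) x :=
      ((hasDerivAt_id x).const_mul p).add ((hasDerivAt_pow 2 x).div_const 8)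
    have := h3.sub h2
    refine this.congr_deriv ?_
    simp only [hF'def]; push_cast; ring
  have hder' : ∀ x, HasDerivAt F'
      (1 / 4 - p * Real.exp x * (1 - p) / (1 - p + p * Real.exp x) ^ 2) x := by
    intro x
    have h2 : HasDerivAt (fun x => p * Real.exp x) (p * Real.exp x) x :=
      (Real.hasDerivAt_exp x).const_mul p
    have h3 := h2.div (hgder x) (hg x).ne'
    have h4 : HasDerivAt (fun x : ℝ => p + x / 4) (1 / 4) x := by
      simpa using ((hasDerivAt_id x).div_const 4).const_add p
    have := h4.sub h3
    refine this.congr_deriv ?_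
    have hx := (hg x).ne'
    ring
  have hF'0 : F' 0 = 0 := by
    have : (1 : ℝ) - p + p * Real.exp 0 = 1 := by rw [Real.exp_zero]; ring
    simp [hF'def, this, Real.exp_zero]
  have hF0 : F 0 = 0 := by
    have : (1 : ℝ) - p + p * Real.exp 0 = 1 := by rw [Real.exp_zero]; ring
    simp [hFdef, this]
  have hmono : Monotone F' := by
    refine monotone_of_deriv_nonneg (fun x => (hder' x).differentiableAt) (fun x => ?_)
    rw [(hder' x).deriv]
    have hgx := hg x
    have hx : p * Real.exp x * (1 - p) / (1 - p + p * Real.exp x) ^ 2 ≤ 1 / 4 := by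
      rw [div_le_iff₀ (by positivity)]
      nlinarith [sq_nonneg (1 - p - p * Real.exp x)]
    linarith
  have key : 0 ≤ F h := by
    rcases le_total 0 h with hh | hh
    · have hmOn : MonotoneOn F (Set.Ici (0:ℝ)) := by
        refine monotoneOn_of_deriv_nonneg (convex_Ici 0)
          (fun x _ => (hder x).differentiableAt.continuousAt.continuousWithinAt)
          (fun x _ => (hder x).differentiableAt.differentiableWithinAt) (fun x hx => ?_)
        rw [(hder x).deriv]
        have : (0:ℝ) < x := by simpa [interior_Ici] using hx
        have := hmono this.le
        rw [hF'0] at this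
        exact this
      have := hmOn (Set.self_mem_Ici) (Set.mem_Ici.2 hh) hh
      rwa [hF0] at this
    · have hmOn : AntitoneOn F (Set.Iic (0:ℝ)) := by
        refine antitoneOn_of_deriv_nonpos (convex_Iic 0)
          (fun x _ => (hder x).differentiableAt.continuousAt.continuousWithinAt)
          (fun x _ => (hder x).differentiableAt.differentiableWithinAt) (fun x hx => ?_)
        rw [(hder x).deriv]
        have : x < (0:ℝ) := by simpa [interior_Iic] using hx
        have := hmono this.le
        rw [hF'0] at this
        exact this
      have := hmOn (Set.mem_Iic.2 hh) Set.self_mem_Iic hh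
      rwa [hF0] at this
  have : Real.log (1 - p + p * Real.exp h) ≤ p * h + h ^ 2 / 8 := by
    simp only [hFdef] at key; linarith
  exact this

lemma integrable_of_bounded {α : Type*} [MeasurableSpace α] (Q : Measure α) [IsFiniteMeasure Q]
    (g : α → ℝ) (hg : Measurable g) (C : ℝ) (hC : ∀ x, |g x| ≤ C) : Integrable g Q := by
  refine Integrable.mono' (integrable_const C) hg.aestronglyMeasurable (ae_of_all _ fun x => ?_)
  simpa [Real.norm_eq_abs] using hC x

lemma hoeffding_mgf {Ω : Type*} [MeasurableSpace Ω] (P : Measure Ω) [IsProbabilityMeasure P]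
    (f : Ω → ℝ) (hf : Measurable f) (lo hi : ℝ) (hl : ∀ ω, lo ≤ f ω) (hh : ∀ ω, f ω ≤ hi)
    (t : ℝ) :
    ∫ ω, Real.exp (t * f ω) ∂P ≤ Real.exp (t * (∫ ω, f ω ∂P) + t ^ 2 * (hi - lo) ^ 2 / 8) := by
  have hint : Integrable f P :=
    integrable_of_bounded P f hf (|lo| + |hi|) (fun x => by
      rw [abs_le]; constructor
      · have := hl x; have := abs_nonneg hi; have := neg_abs_le lo; linarith
      · have := hh x; have := abs_nonneg lo; have := le_abs_self hi; linarith)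
  set m := ∫ ω, f ω ∂P with hm
  have hml : lo ≤ m := by
    have := integral_mono (integrable_const lo) hint (fun ω => hl ω)
    simpa using this
  have hmh : m ≤ hi := by
    have := integral_mono hint (integrable_const hi) (fun ω => hh ω)
    simpa using this
  have hexp_int : Integrable (fun ω => Real.exp (t * f ω)) P := by
    refine integrable_of_bounded P _ ((hf.const_mul t).exp) (Real.exp (|t| * (|lo| + |hi|)))
      (fun x => ?_)
    rw [abs_of_pos (Real.exp_pos _), Real.exp_le_exp]
    calc t * f x ≤ |t * f x| := le_abs_self _
      _ = |t| * |f x| := abs_mul _ _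
      _ ≤ |t| * (|lo| + |hi|) := by
          refine mul_le_mul_of_nonneg_left ?_ (abs_nonneg t)
          rw [abs_le]; constructor
          · have := hl x; have := abs_nonneg hi; have := neg_abs_le lo; linarith
          · have := hh x; have := abs_nonneg lo; have := le_abs_self hi; linarith
  rcases eq_or_lt_of_le (le_trans hml hmh) with heq | hlt
  · -- lo = hi : f is constant
    have hconst : ∀ ω, f ω = lo := fun ω => le_antisymm (heq ▸ hh ω) (hl ω)
    have h1 : (fun ω => Real.exp (t * f ω)) = fun _ => Real.exp (t * lo) :=
      funext fun ω => by rw [hconst ω]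
    have h2 : m = lo := le_antisymm (heq ▸ hmh) hml
    rw [h1, integral_const]
    simp [h2, ← heq]
  · -- lo < hi
    set w := hi - lo with hw
    have hw0 : 0 < w := by simp [hw]; linarith
    set p := (m - lo) / w with hp
    have hp0 : 0 ≤ p := div_nonneg (by linarith) hw0.le
    have hp1 : p ≤ 1 := by rw [div_le_one hw0]; simp [hw]; linarith
    set a1 := (Real.exp (t * hi) - Real.exp (t * lo)) / w with ha1
    set a2 := (hi * Real.exp (t * lo) - lo * Real.exp (t * hi)) / w with ha2
    have hpt : ∀ ω, Real.exp (t * f ω) ≤ a1 * f ω + a2 := by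
      intro ω
      set x := f ω with hx
      have h1 : (0:ℝ) ≤ (hi - x) / w := div_nonneg (by linarith [hh ω]) hw0.le
      have h2 : (0:ℝ) ≤ (x - lo) / w := div_nonneg (by linarith [hl ω]) hw0.le
      have h3 : (hi - x) / w + (x - lo) / w = 1 := by field_simp; linarith [hw]
      have h4 := convexOn_exp.2 (Set.mem_univ (t * lo)) (Set.mem_univ (t * hi)) h1 h2 h3
      have h5 : ((hi - x) / w) • (t * lo) + ((x - lo) / w) • (t * hi) = t * x := by
        simp only [smul_eq_mul]; field_simp; ring
      rw [h5] at h4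
      calc Real.exp (t * x) ≤ (hi - x) / w * Real.exp (t * lo) + (x - lo) / w * Real.exp (t * hi) := by
            simpa [smul_eq_mul] using h4
        _ = a1 * x + a2 := by
            have hne : hi - lo ≠ 0 := sub_ne_zero.2 hlt.ne'
            rw [ha1, ha2, hw]; field_simp; ring
    have hstep : ∫ ω, Real.exp (t * f ω) ∂P ≤ a1 * m + a2 := by
      have hint2 : Integrable (fun ω => a1 * f ω + a2) P :=
        (hint.const_mul a1).add (integrable_const a2)
      have h6 := integral_mono hexp_int hint2 hpt
      have h7 : ∫ ω, (a1 * f ω + a2) ∂P = a1 * m + a2 := by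
        rw [integral_add (hint.const_mul a1) (integrable_const a2), integral_const_mul,
          integral_const, probReal_univ, one_smul]
      rwa [h7] at h6
    have hsum : a1 * m + a2 = (1 - p) * Real.exp (t * lo) + p * Real.exp (t * hi) := by
      simp only [ha1, ha2, hp]; field_simp; ring
    have hkey : (1 - p) + p * Real.exp (t * w) ≤ Real.exp (p * (t * w) + (t * w) ^ 2 / 8) := by
      have hpos : 0 < 1 - p + p * Real.exp (t * w) := by
        nlinarith [Real.exp_pos (t * w), mul_nonneg hp0 (Real.exp_pos (t * w)).le]
      have := log_aux p hp0 hp1 (t * w)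
      calc (1 - p) + p * Real.exp (t * w) = Real.exp (Real.log (1 - p + p * Real.exp (t * w))) := by
            rw [Real.exp_log hpos]
        _ ≤ Real.exp (p * (t * w) + (t * w) ^ 2 / 8) := Real.exp_le_exp.2 this
    calc ∫ ω, Real.exp (t * f ω) ∂P ≤ a1 * m + a2 := hstep
      _ = Real.exp (t * lo) * ((1 - p) + p * Real.exp (t * w)) := by
          rw [hsum, show t * hi = t * lo + t * w by simp [hw]; ring, Real.exp_add]; ring
      _ ≤ Real.exp (t * lo) * Real.exp (p * (t * w) + (t * w) ^ 2 / 8) :=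
          mul_le_mul_of_nonneg_left hkey (Real.exp_pos _).le
      _ = Real.exp (t * lo + p * (t * w) + (t * w) ^ 2 / 8) := by
          rw [← Real.exp_add]; ring_nf
      _ = Real.exp (t * m + t ^ 2 * (hi - lo) ^ 2 / 8) := by
          congr 1
          have : lo + p * w = m := by rw [hp]; field_simp; ring
          have hexpand : t * lo + p * (t * w) = t * m := by
            rw [← this]; ring
          rw [hexpand, ← hw]; ring

lemma integral_pi_pow {Ω : Type*} [MeasurableSpace Ω] (P : Measure Ω) [IsProbabilityMeasure P]
    (n : ℕ) (g : Ω → ℝ) :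
    ∫ D : Fin n → Ω, ∏ i, g (D i) ∂(Measure.pi fun _ => P) = (∫ ω, g ω ∂P) ^ n := by
  letI : MeasureSpace Ω := ⟨P⟩
  letI : SigmaFinite (volume : Measure Ω) := (inferInstance : SigmaFinite P)
  have hvol : (volume : Measure (Fin n → Ω)) = Measure.pi fun _ => P := volume_pi
  rw [← hvol]
  simpa [Fintype.card_fin, hvol] using integral_fintype_prod_eq_pow (ι := Fin n) (μ := P) g

lemma integral_pi_eval {Ω : Type*} [MeasurableSpace Ω] (P : Measure Ω) [IsProbabilityMeasure P]
    {n : ℕ} (g : Ω → ℝ) (i : Fin n) :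
    ∫ D : Fin n → Ω, g (D i) ∂(Measure.pi fun _ => P) = ∫ ω, g ω ∂P := by
  letI : MeasureSpace Ω := ⟨P⟩
  letI : SigmaFinite (volume : Measure Ω) := (inferInstance : SigmaFinite P)
  have hvol : (volume : Measure (Fin n → Ω)) = Measure.pi fun _ => P := volume_pi
  rw [← hvol]
  have h1 : ∀ D : Fin n → Ω, g (D i) = ∏ j, (fun j (ω : Ω) => if j = i then g ω else 1) j (D j) := by
    intro D
    simp only []
    rw [Finset.prod_ite_eq' Finset.univ i (fun j => g (D j))]
    simp
  calc ∫ D : Fin n → Ω, g (D i) = ∫ D : Fin n → Ω, ∏ j, (fun j (ω : Ω) => if j = i then g ω else 1) j (D j) := by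
        simp_rw [← h1]
    _ = ∏ j, ∫ ω, (fun j (ω : Ω) => if j = i then g ω else 1) j ω := by
        exact integral_fintype_prod_eq_prod (𝕜 := ℝ) (ι := Fin n) (fun j (ω : Ω) => if j = i then g ω else 1)
    _ = ∫ ω, g ω := by
        rw [Finset.prod_eq_single i]
        · simp
        · intro j _ hj; simp [hj]
        · simp
    _ = ∫ ω, g ω ∂P := rfl

lemma hoeffding_tail {Ω : Type*} [MeasurableSpace Ω] (P : Measure Ω) [IsProbabilityMeasure P]
    (f : Ω → ℝ) (hf : Measurable f) (lo hi : ℝ) (hl : ∀ ω, lo ≤ f ω) (hh : ∀ ω, f ω ≤ hi)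
    (a : ℝ) (ha : 0 ≤ a) (hm : a ≤ ∫ ω, f ω ∂P) (n : ℕ) :
    (Measure.pi fun _ : Fin n => P) {D | ∑ i, f (D i) ≤ 0}
      ≤ ENNReal.ofReal (Real.exp (-2 * n * a ^ 2 / (hi - lo) ^ 2)) := by
  set ν := Measure.pi fun _ : Fin n => P with hν
  haveI : IsProbabilityMeasure ν := by rw [hν]; infer_instance
  have hint : Integrable f P :=
    integrable_of_bounded P f hf (|lo| + |hi|) (fun x => by
      rw [abs_le]; constructor
      · have := hl x; have := abs_nonneg hi; have := neg_abs_le lo; linarith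
      · have := hh x; have := abs_nonneg lo; have := le_abs_self hi; linarith)
  have hml : lo ≤ ∫ ω, f ω ∂P := by
    have := integral_mono (integrable_const lo) hint (fun ω => hl ω); simpa using this
  have hmh : (∫ ω, f ω ∂P) ≤ hi := by
    have := integral_mono hint (integrable_const hi) (fun ω => hh ω); simpa using this
  by_cases hW : hi - lo = 0
  · rw [hW]
    simp only [ne_eq, OfNat.ofNat_ne_zero, not_false_eq_true, zero_pow, div_zero, Real.exp_zero,
      ENNReal.ofReal_one]
    exact prob_le_one
  by_cases ha0 : a = 0
  · subst ha0
    simp only [ne_eq, OfNat.ofNat_ne_zero, not_false_eq_true, zero_pow, mul_zero, zero_div,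
      Real.exp_zero, ENNReal.ofReal_one]
    exact prob_le_one
  have ha' : 0 < a := lt_of_le_of_ne ha (Ne.symm ha0)
  have hlohi : lo < hi := lt_of_le_of_ne (le_trans hml hmh) (fun h => hW (by rw [h]; ring))
  set w := hi - lo with hw
  have hw0 : 0 < w := by simp [hw]; linarith
  set t := 4 * a / w ^ 2 with ht
  have ht0 : 0 < t := by positivity
  set S : (Fin n → Ω) → ℝ := fun D => ∑ i, f (D i) with hS
  have hSm : Measurable S := Finset.measurable_sum _ fun i _ => hf.comp (measurable_pi_apply i)
  have hSbound : ∀ D, |S D| ≤ n * (|lo| + |hi|) := by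
    intro D
    calc |S D| ≤ ∑ i, |f (D i)| := Finset.abs_sum_le_sum_abs _ _
      _ ≤ ∑ _i : Fin n, (|lo| + |hi|) := by
          refine Finset.sum_le_sum fun i _ => ?_
          rw [abs_le]; constructor
          · have := hl (D i); have := abs_nonneg hi; have := neg_abs_le lo; linarith
          · have := hh (D i); have := abs_nonneg lo; have := le_abs_self hi; linarith
      _ = n * (|lo| + |hi|) := by simp [Finset.sum_const]; ring
  have h_int : Integrable (fun D => Real.exp ((-t) * S D)) ν := by
    refine integrable_of_bounded ν _ ((hSm.const_mul (-t)).exp)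
      (Real.exp (|t| * (n * (|lo| + |hi|)))) (fun D => ?_)
    rw [abs_of_pos (Real.exp_pos _), Real.exp_le_exp]
    calc (-t) * S D ≤ |(-t) * S D| := le_abs_self _
      _ = |t| * |S D| := by rw [abs_mul, abs_neg]
      _ ≤ |t| * (n * (|lo| + |hi|)) := by
          exact mul_le_mul_of_nonneg_left (hSbound D) (abs_nonneg t)
  have chernoff := ProbabilityTheory.measure_le_le_exp_mul_mgf (X := S) (μ := ν) (t := -t) 0
    (by linarith) h_int
  have hmgf : ProbabilityTheory.mgf S ν (-t) ≤ Real.exp (-2 * n * a ^ 2 / w ^ 2) := by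
    have hprod : ProbabilityTheory.mgf S ν (-t) = (∫ ω, Real.exp ((-t) * f ω) ∂P) ^ n := by
      unfold ProbabilityTheory.mgf
      calc ∫ D, Real.exp ((-t) * S D) ∂ν = ∫ D, ∏ i, Real.exp ((-t) * f (D i)) ∂ν := by
            congr 1; funext D
            rw [hS]; simp only []
            rw [Finset.mul_sum, Real.exp_sum]
      _ = (∫ ω, Real.exp ((-t) * f ω) ∂P) ^ n := by rw [hν]; exact integral_pi_pow P n (fun ω => Real.exp ((-t) * f ω))
    rw [hprod]
    have hone : ∫ ω, Real.exp ((-t) * f ω) ∂P ≤ Real.exp ((-t) * a + t ^ 2 * w ^ 2 / 8) := by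
      refine le_trans (hoeffding_mgf P f hf lo hi hl hh (-t)) (Real.exp_le_exp.2 ?_)
      have : (-t) * (∫ ω, f ω ∂P) ≤ (-t) * a := by
        apply mul_le_mul_of_nonpos_left hm (by linarith)
      have hsq : (-t) ^ 2 = t ^ 2 := by ring
      rw [hsq, ← hw]
      linarith
    calc (∫ ω, Real.exp ((-t) * f ω) ∂P) ^ n ≤ (Real.exp ((-t) * a + t ^ 2 * w ^ 2 / 8)) ^ n := by
          refine pow_le_pow_left₀ (integral_nonneg fun ω => (Real.exp_pos _).le) hone n
      _ = Real.exp (n * ((-t) * a + t ^ 2 * w ^ 2 / 8)) := by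
          rw [← Real.exp_nat_mul]
      _ ≤ Real.exp (-2 * n * a ^ 2 / w ^ 2) := by
          refine Real.exp_le_exp.2 ?_
          have hkey : (-t) * a + t ^ 2 * w ^ 2 / 8 = -2 * a ^ 2 / w ^ 2 := by
            rw [ht]; field_simp; ring
          rw [hkey]
          exact le_of_eq (by ring)
  have hfinal : (ν {D | S D ≤ 0}).toReal ≤ Real.exp (-2 * n * a ^ 2 / w ^ 2) := by
    calc (ν {D | S D ≤ 0}).toReal ≤ Real.exp (-(-t) * 0) * ProbabilityTheory.mgf S ν (-t) :=
          chernoff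
      _ = ProbabilityTheory.mgf S ν (-t) := by simp
      _ ≤ Real.exp (-2 * n * a ^ 2 / w ^ 2) := hmgf
  have := ENNReal.ofReal_le_ofReal hfinal
  rwa [ENNReal.ofReal_toReal (measure_ne_top _ _)] at this

lemma coeff_bounds (ρ u v ℓ Cℓ : ℝ) (hρ0 : 0 ≤ ρ) (hρ1 : ρ ≤ 1) (hu : -1 ≤ u) (hu' : u ≤ 1)
    (hv : 0 ≤ v) (hv' : v ≤ 1) (hl : 0 ≤ ℓ) (hl' : ℓ ≤ Cℓ) :
    (2 * ρ ^ 2 - 3 * ρ) * Cℓ / 2 ≤ (2 * ρ * (ρ - u) + (1 - ρ) - v) * ℓ / 2 ∧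
      (2 * ρ * (ρ - u) + (1 - ρ) - v) * ℓ / 2 ≤ (2 * ρ ^ 2 + ρ + 1) * Cℓ / 2 := by
  have hm : 2 * ρ ^ 2 - 3 * ρ ≤ 2 * ρ * (ρ - u) + (1 - ρ) - v := by nlinarith
  have hM : 2 * ρ * (ρ - u) + (1 - ρ) - v ≤ 2 * ρ ^ 2 + ρ + 1 := by nlinarith
  have hm0 : 2 * ρ ^ 2 - 3 * ρ ≤ 0 := by nlinarith
  have hM0 : (0:ℝ) ≤ 2 * ρ ^ 2 + ρ + 1 := by nlinarith
  constructor
  · nlinarith [mul_nonneg (sub_nonneg.2 hm) hl, mul_nonneg (neg_nonneg.2 hm0) (sub_nonneg.2 hl')]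
  · nlinarith [mul_nonneg (sub_nonneg.2 hM) hl, mul_nonneg hM0 (sub_nonneg.2 hl')]

lemma component_tail {X : Type*} [MeasurableSpace X] (μ : Measure X) [IsProbabilityMeasure μ]
    (n : ℕ) (hn : 1 ≤ n)
    (ρ Cℓ : ℝ) (hρ0 : 0 ≤ ρ) (hCℓ : 0 < Cℓ)
    (g : X × X → ℝ) (hg : Measurable g)
    (hglo : ∀ q, (2 * ρ ^ 2 - 3 * ρ) * Cℓ / 2 ≤ g q)
    (hghi : ∀ q, g q ≤ (2 * ρ ^ 2 + ρ + 1) * Cℓ / 2)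
    (K : (Fin n → X × X) → ℝ) (hK : ∀ D, K D = (∑ i, g (D i)) / n)
    (a : ℝ) (ha : 0 ≤ a)
    (hEK : a ≤ ∫ D, K D ∂(Measure.pi fun _ => μ.prod μ)) :
    (Measure.pi fun _ : Fin n => μ.prod μ) {D | K D ≤ 0}
      ≤ ENNReal.ofReal (Real.exp (-(4 * a ^ 2 * n) / ((4 * ρ + 1) ^ 2 * Cℓ ^ 2))) := by
  set P := μ.prod μ with hP
  set lo := (2 * ρ ^ 2 - 3 * ρ) * Cℓ / 2 with hlo
  set hi := (2 * ρ ^ 2 + ρ + 1) * Cℓ / 2 with hhi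
  have hn' : (0:ℝ) < n := by exact_mod_cast hn
  have habs : ∀ q, |g q| ≤ |lo| + |hi| := fun q => by
    rw [abs_le]; constructor
    · have := hglo q; have := abs_nonneg hi; have := neg_abs_le lo; linarith
    · have := hghi q; have := abs_nonneg lo; have := le_abs_self hi; linarith
  have hgint : ∀ i : Fin n, Integrable (fun D : Fin n → X × X => g (D i))
      (Measure.pi fun _ => P) :=
    fun i => integrable_of_bounded _ _ (hg.comp (measurable_pi_apply i)) (|lo| + |hi|)
      (fun D => habs (D i))
  have hmean : (∫ D, K D ∂(Measure.pi fun _ : Fin n => P)) = ∫ q, g q ∂P := by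
    simp only [hK]
    rw [integral_div, integral_finset_sum _ (fun i _ => hgint i)]
    rw [Finset.sum_congr rfl (fun i _ => integral_pi_eval P g i), Finset.sum_const,
      Finset.card_univ, Fintype.card_fin, nsmul_eq_mul]
    field_simp
  have hma : a ≤ ∫ q, g q ∂P := hmean ▸ hEK
  have hset : {D : Fin n → X × X | K D ≤ 0} = {D | ∑ i, g (D i) ≤ 0} := by
    ext D
    simp only [Set.mem_setOf_eq]
    rw [hK D, div_le_iff₀ hn', zero_mul]
  rw [hset]
  refine le_trans (hoeffding_tail P g hg lo hi hglo hghi a ha hma n) ?_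
  apply ENNReal.ofReal_le_ofReal
  apply Real.exp_le_exp.2
  have hdiff : hi - lo = (4 * ρ + 1) * Cℓ / 2 := by rw [hlo, hhi]; ring
  rw [hdiff, show ((4 * ρ + 1) * Cℓ / 2) ^ 2 = (4 * ρ + 1) ^ 2 * Cℓ ^ 2 / 4 by ring]
  rw [div_le_div_iff₀ (by positivity) (by positivity)]
  have hX : (0:ℝ) ≤ n * a ^ 2 * ((4 * ρ + 1) ^ 2 * Cℓ ^ 2) := by positivity
  nlinarith [hX]

/-- (Lemma A.6, probability that some component of the empirical risk is nonpositive.) -/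
theorem sconfconfdiff_nonpositive_component_probability
    {X : Type*} [MeasurableSpace X] (μ : Measure X) [IsProbabilityMeasure μ]
    (η : X → ℝ) (hη : Measurable η) (hη0 : ∀ x, 0 ≤ η x) (hη1 : ∀ x, η x ≤ 1)
    (πp πm : ℝ) (hπp : πp = ∫ x, η x ∂μ) (hπm : πm = 1 - πp)
    (s c : X → X → ℝ)
    (hs : ∀ x x', s x x' = η x * η x' + (1 - η x) * (1 - η x'))
    (hc : ∀ x x', c x x' = η x' - η x)
    (Cℓ : ℝ) (hCℓ : 0 < Cℓ)
    (ℓp ℓm : X → ℝ) (hℓp : Measurable ℓp) (hℓm : Measurable ℓm)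
    (hℓp0 : ∀ x, 0 ≤ ℓp x) (hℓpC : ∀ x, ℓp x ≤ Cℓ)
    (hℓm0 : ∀ x, 0 ≤ ℓm x) (hℓmC : ∀ x, ℓm x ≤ Cℓ)
    (n : ℕ) (hn : 1 ≤ n)
    (ν : Measure (Fin n → X × X)) (hν : ν = Measure.pi fun _ => μ.prod μ)
    (Ahat Bhat Chat Dhat : (Fin n → X × X) → ℝ)
    (hAhat : ∀ D, Ahat D = (1 / (2 * (n : ℝ))) * ∑ i,
      (2 * πp * (πp - c (D i).1 (D i).2) + πm - s (D i).1 (D i).2) * ℓp (D i).1)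
    (hBhat : ∀ D, Bhat D = (1 / (2 * (n : ℝ))) * ∑ i,
      (2 * πm * (πm - c (D i).1 (D i).2) + πp - s (D i).1 (D i).2) * ℓm (D i).2)
    (hChat : ∀ D, Chat D = (1 / (2 * (n : ℝ))) * ∑ i,
      (2 * πp * (πp + c (D i).1 (D i).2) + πm - s (D i).1 (D i).2) * ℓp (D i).2)
    (hDhat : ∀ D, Dhat D = (1 / (2 * (n : ℝ))) * ∑ i,
      (2 * πm * (πm + c (D i).1 (D i).2) + πp - s (D i).1 (D i).2) * ℓm (D i).1)
    (a b cc d : ℝ) (ha : 0 ≤ a) (hb : 0 ≤ b) (hcc : 0 ≤ cc) (hd : 0 ≤ d)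
    (hEA : a ≤ ∫ D, Ahat D ∂ν) (hEB : b ≤ ∫ D, Bhat D ∂ν)
    (hEC : cc ≤ ∫ D, Chat D ∂ν) (hED : d ≤ ∫ D, Dhat D ∂ν) :
    ν {D | Ahat D ≤ 0 ∨ Bhat D ≤ 0 ∨ Chat D ≤ 0 ∨ Dhat D ≤ 0}
      ≤ ENNReal.ofReal
        (exp (-(4 * a ^ 2 * n) / ((4 * πp + 1) ^ 2 * Cℓ ^ 2))
          + exp (-(4 * b ^ 2 * n) / ((4 * πm + 1) ^ 2 * Cℓ ^ 2))
          + exp (-(4 * cc ^ 2 * n) / ((4 * πp + 1) ^ 2 * Cℓ ^ 2))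
          + exp (-(4 * d ^ 2 * n) / ((4 * πm + 1) ^ 2 * Cℓ ^ 2))) := by
  subst hν
  subst hπm
  have hπp0 : 0 ≤ πp := by
    rw [hπp]; exact integral_nonneg fun x => hη0 x
  have hηint : Integrable η μ :=
    integrable_of_bounded μ η hη 1 (fun x => abs_le.2 ⟨by linarith [hη0 x], hη1 x⟩)
  have hπp1 : πp ≤ 1 := by
    rw [hπp]
    have := integral_mono hηint (integrable_const 1) hη1
    simpa using this
  have hcb : ∀ x x' : X, -1 ≤ c x x' ∧ c x x' ≤ 1 := fun x x' => by
    rw [hc]; constructor <;> [linarith [hη0 x', hη1 x]; linarith [hη1 x', hη0 x]]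
  have hsb : ∀ x x' : X, 0 ≤ s x x' ∧ s x x' ≤ 1 := fun x x' => by
    rw [hs]
    constructor
    · have h1 := mul_nonneg (hη0 x) (hη0 x')
      have h2 : 0 ≤ (1 - η x) * (1 - η x') :=
        mul_nonneg (by linarith [hη1 x]) (by linarith [hη1 x'])
      linarith
    · nlinarith [hη0 x, hη1 x, hη0 x', hη1 x']
  -- component A
  have hA : (Measure.pi fun _ : Fin n => μ.prod μ) {D | Ahat D ≤ 0}
      ≤ ENNReal.ofReal (Real.exp (-(4 * a ^ 2 * n) / ((4 * πp + 1) ^ 2 * Cℓ ^ 2))) := by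
    have hmeas : Measurable (fun q : X × X =>
        (2 * πp * (πp - c q.1 q.2) + (1 - πp) - s q.1 q.2) * ℓp q.1 / 2) := by
      have heq : (fun q : X × X =>
          (2 * πp * (πp - c q.1 q.2) + (1 - πp) - s q.1 q.2) * ℓp q.1 / 2)
          = fun q : X × X => (2 * πp * (πp - (η q.2 - η q.1)) + (1 - πp)
            - (η q.1 * η q.2 + (1 - η q.1) * (1 - η q.2))) * ℓp q.1 / 2 := by
        funext q; rw [hs, hc]
      rw [heq]; fun_prop
    refine component_tail μ n hn πp Cℓ hπp0 hCℓ _ hmeas (fun q => ?_) (fun q => ?_)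
      Ahat (fun D => ?_) a ha hEA
    · exact (coeff_bounds πp (c q.1 q.2) (s q.1 q.2) (ℓp q.1) Cℓ hπp0 hπp1
        (hcb _ _).1 (hcb _ _).2 (hsb _ _).1 (hsb _ _).2 (hℓp0 _) (hℓpC _)).1
    · exact (coeff_bounds πp (c q.1 q.2) (s q.1 q.2) (ℓp q.1) Cℓ hπp0 hπp1
        (hcb _ _).1 (hcb _ _).2 (hsb _ _).1 (hsb _ _).2 (hℓp0 _) (hℓpC _)).2
    · rw [hAhat D, ← Finset.sum_div]; ring
  -- component B
  have hB : (Measure.pi fun _ : Fin n => μ.prod μ) {D | Bhat D ≤ 0}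
      ≤ ENNReal.ofReal (Real.exp (-(4 * b ^ 2 * n) / ((4 * (1 - πp) + 1) ^ 2 * Cℓ ^ 2))) := by
    have hmeas : Measurable (fun q : X × X =>
        (2 * (1 - πp) * (1 - πp - c q.1 q.2) + πp - s q.1 q.2) * ℓm q.2 / 2) := by
      have heq : (fun q : X × X =>
          (2 * (1 - πp) * (1 - πp - c q.1 q.2) + πp - s q.1 q.2) * ℓm q.2 / 2)
          = fun q : X × X => (2 * (1 - πp) * (1 - πp - (η q.2 - η q.1)) + πp
            - (η q.1 * η q.2 + (1 - η q.1) * (1 - η q.2))) * ℓm q.2 / 2 := by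
        funext q; rw [hs, hc]
      rw [heq]; fun_prop
    refine component_tail μ n hn (1 - πp) Cℓ (by linarith) hCℓ _ hmeas (fun q => ?_)
      (fun q => ?_) Bhat (fun D => ?_) b hb hEB
    · have h := (coeff_bounds (1 - πp) (c q.1 q.2) (s q.1 q.2) (ℓm q.2) Cℓ (by linarith)
        (by linarith) (hcb _ _).1 (hcb _ _).2 (hsb _ _).1 (hsb _ _).2 (hℓm0 _) (hℓmC _)).1
      rw [show (1:ℝ) - (1 - πp) = πp from by ring] at h
      exact h
    · have h := (coeff_bounds (1 - πp) (c q.1 q.2) (s q.1 q.2) (ℓm q.2) Cℓ (by linarith)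
        (by linarith) (hcb _ _).1 (hcb _ _).2 (hsb _ _).1 (hsb _ _).2 (hℓm0 _) (hℓmC _)).2
      rw [show (1:ℝ) - (1 - πp) = πp from by ring] at h
      exact h
    · rw [hBhat D, ← Finset.sum_div]; ring
  -- component C
  have hC : (Measure.pi fun _ : Fin n => μ.prod μ) {D | Chat D ≤ 0}
      ≤ ENNReal.ofReal (Real.exp (-(4 * cc ^ 2 * n) / ((4 * πp + 1) ^ 2 * Cℓ ^ 2))) := by
    have hmeas : Measurable (fun q : X × X =>
        (2 * πp * (πp + c q.1 q.2) + (1 - πp) - s q.1 q.2) * ℓp q.2 / 2) := by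
      have heq : (fun q : X × X =>
          (2 * πp * (πp + c q.1 q.2) + (1 - πp) - s q.1 q.2) * ℓp q.2 / 2)
          = fun q : X × X => (2 * πp * (πp + (η q.2 - η q.1)) + (1 - πp)
            - (η q.1 * η q.2 + (1 - η q.1) * (1 - η q.2))) * ℓp q.2 / 2 := by
        funext q; rw [hs, hc]
      rw [heq]; fun_prop
    refine component_tail μ n hn πp Cℓ hπp0 hCℓ _ hmeas (fun q => ?_) (fun q => ?_)
      Chat (fun D => ?_) cc hcc hEC
    · have h := (coeff_bounds πp (-(c q.1 q.2)) (s q.1 q.2) (ℓp q.2) Cℓ hπp0 hπp1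
        (by linarith [(hcb q.1 q.2).2]) (by linarith [(hcb q.1 q.2).1])
        (hsb _ _).1 (hsb _ _).2 (hℓp0 _) (hℓpC _)).1
      rw [show πp - -(c q.1 q.2) = πp + c q.1 q.2 from by ring] at h
      exact h
    · have h := (coeff_bounds πp (-(c q.1 q.2)) (s q.1 q.2) (ℓp q.2) Cℓ hπp0 hπp1
        (by linarith [(hcb q.1 q.2).2]) (by linarith [(hcb q.1 q.2).1])
        (hsb _ _).1 (hsb _ _).2 (hℓp0 _) (hℓpC _)).2
      rw [show πp - -(c q.1 q.2) = πp + c q.1 q.2 from by ring] at h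
      exact h
    · rw [hChat D, ← Finset.sum_div]; ring
  -- component D
  have hD : (Measure.pi fun _ : Fin n => μ.prod μ) {D | Dhat D ≤ 0}
      ≤ ENNReal.ofReal (Real.exp (-(4 * d ^ 2 * n) / ((4 * (1 - πp) + 1) ^ 2 * Cℓ ^ 2))) := by
    have hmeas : Measurable (fun q : X × X =>
        (2 * (1 - πp) * (1 - πp + c q.1 q.2) + πp - s q.1 q.2) * ℓm q.1 / 2) := by
      have heq : (fun q : X × X =>
          (2 * (1 - πp) * (1 - πp + c q.1 q.2) + πp - s q.1 q.2) * ℓm q.1 / 2)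
          = fun q : X × X => (2 * (1 - πp) * (1 - πp + (η q.2 - η q.1)) + πp
            - (η q.1 * η q.2 + (1 - η q.1) * (1 - η q.2))) * ℓm q.1 / 2 := by
        funext q; rw [hs, hc]
      rw [heq]; fun_prop
    refine component_tail μ n hn (1 - πp) Cℓ (by linarith) hCℓ _ hmeas (fun q => ?_)
      (fun q => ?_) Dhat (fun D => ?_) d hd hED
    · have h := (coeff_bounds (1 - πp) (-(c q.1 q.2)) (s q.1 q.2) (ℓm q.1) Cℓ (by linarith)
        (by linarith) (by linarith [(hcb q.1 q.2).2]) (by linarith [(hcb q.1 q.2).1])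
        (hsb _ _).1 (hsb _ _).2 (hℓm0 _) (hℓmC _)).1
      rw [show (1:ℝ) - πp - -(c q.1 q.2) = 1 - πp + c q.1 q.2 from by ring,
        show (1:ℝ) - (1 - πp) = πp from by ring] at h
      exact h
    · have h := (coeff_bounds (1 - πp) (-(c q.1 q.2)) (s q.1 q.2) (ℓm q.1) Cℓ (by linarith)
        (by linarith) (by linarith [(hcb q.1 q.2).2]) (by linarith [(hcb q.1 q.2).1])
        (hsb _ _).1 (hsb _ _).2 (hℓm0 _) (hℓmC _)).2
      rw [show (1:ℝ) - πp - -(c q.1 q.2) = 1 - πp + c q.1 q.2 from by ring,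
        show (1:ℝ) - (1 - πp) = πp from by ring] at h
      exact h
    · rw [hDhat D, ← Finset.sum_div]; ring
  -- union bound
  have hsplit : {D | Ahat D ≤ 0 ∨ Bhat D ≤ 0 ∨ Chat D ≤ 0 ∨ Dhat D ≤ 0}
      = {D | Ahat D ≤ 0} ∪ ({D | Bhat D ≤ 0} ∪ ({D | Chat D ≤ 0} ∪ {D | Dhat D ≤ 0})) := rfl
  rw [hsplit]
  set e1 := Real.exp (-(4 * a ^ 2 * n) / ((4 * πp + 1) ^ 2 * Cℓ ^ 2))
  set e2 := Real.exp (-(4 * b ^ 2 * n) / ((4 * (1 - πp) + 1) ^ 2 * Cℓ ^ 2))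
  set e3 := Real.exp (-(4 * cc ^ 2 * n) / ((4 * πp + 1) ^ 2 * Cℓ ^ 2))
  set e4 := Real.exp (-(4 * d ^ 2 * n) / ((4 * (1 - πp) + 1) ^ 2 * Cℓ ^ 2))
  calc (Measure.pi fun _ : Fin n => μ.prod μ)
        ({D | Ahat D ≤ 0} ∪ ({D | Bhat D ≤ 0} ∪ ({D | Chat D ≤ 0} ∪ {D | Dhat D ≤ 0})))
      ≤ (Measure.pi fun _ : Fin n => μ.prod μ) {D | Ahat D ≤ 0}
        + ((Measure.pi fun _ : Fin n => μ.prod μ) {D | Bhat D ≤ 0}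
        + ((Measure.pi fun _ : Fin n => μ.prod μ) {D | Chat D ≤ 0}
        + (Measure.pi fun _ : Fin n => μ.prod μ) {D | Dhat D ≤ 0})) := by
        refine le_trans (measure_union_le _ _) (add_le_add le_rfl ?_)
        refine le_trans (measure_union_le _ _) (add_le_add le_rfl ?_)
        exact measure_union_le _ _
    _ ≤ ENNReal.ofReal e1 + (ENNReal.ofReal e2 + (ENNReal.ofReal e3 + ENNReal.ofReal e4)) :=
        add_le_add hA (add_le_add hB (add_le_add hC hD))
    _ = ENNReal.ofReal (e1 + e2 + e3 + e4) := by
        rw [← ENNReal.ofReal_add (Real.exp_pos _).le (Real.exp_pos _).le,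
          ← ENNReal.ofReal_add (Real.exp_pos _).le (by positivity),
          ← ENNReal.ofReal_add (Real.exp_pos _).le (by positivity)]
        congr 1
        ring
end

section
/- (Population unbiasedness of the Sconf risk, Eq. (3).) Assume π₊ ≠ π₋. Then ∫_{X×X} (1/2)·[ (π₋ − s(x,x'))·(ℓ₊(x) + ℓ₊(x'))/(π₋ − π₊) + (π₊ − s(x,x'))·(ℓ₋(x) + ℓ₋(x'))/(π₊ − π₋) ] d(μ⊗μ)(x,x') = R; i.e., the per-pair Sconf loss is an unbiased estimator of the classification risk. -/
open MeasureTheory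

private lemma int_of_bdd {X : Type*} [MeasurableSpace X] {μ : Measure X}
    [IsProbabilityMeasure μ] {f : X → ℝ} (hf : Measurable f) (C : ℝ)
    (h : ∀ x, |f x| ≤ C) : Integrable f μ :=
  (integrable_const C).mono' hf.aestronglyMeasurable (ae_of_all _ (by simpa using h))

/-- (Population unbiasedness of the Sconf risk, Eq. (3).) -/
theorem sconf_population_unbiased
    {X : Type*} [MeasurableSpace X] (μ : Measure X) [IsProbabilityMeasure μ]
    (η : X → ℝ) (hη : Measurable η) (hη0 : ∀ x, 0 ≤ η x) (hη1 : ∀ x, η x ≤ 1)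
    (πp πm : ℝ) (hπp : πp = ∫ x, η x ∂μ) (hπm : πm = 1 - πp) (hne : πp ≠ πm)
    (s : X → X → ℝ)
    (hs : ∀ x x', s x x' = η x * η x' + (1 - η x) * (1 - η x'))
    (Cℓ : ℝ) (hCℓ : 0 ≤ Cℓ)
    (ℓp ℓm : X → ℝ) (hℓp : Measurable ℓp) (hℓm : Measurable ℓm)
    (hℓp0 : ∀ x, 0 ≤ ℓp x) (hℓpC : ∀ x, ℓp x ≤ Cℓ)
    (hℓm0 : ∀ x, 0 ≤ ℓm x) (hℓmC : ∀ x, ℓm x ≤ Cℓ)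
    (R : ℝ) (hR : R = ∫ x, (η x * ℓp x + (1 - η x) * ℓm x) ∂μ) :
    ∫ p : X × X, (1 / 2) *
      ((πm - s p.1 p.2) * (ℓp p.1 + ℓp p.2) / (πm - πp)
        + (πp - s p.1 p.2) * (ℓm p.1 + ℓm p.2) / (πp - πm)) ∂(μ.prod μ) = R := by
  have hd : πm - πp ≠ 0 := sub_ne_zero.mpr (Ne.symm hne)
  have absC : ∀ {y : ℝ}, 0 ≤ y → y ≤ Cℓ → |y| ≤ Cℓ := fun h1 h2 => abs_le.mpr ⟨by linarith, h2⟩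
  -- auxiliary one-dimensional functions
  set w : X → ℝ := fun x => πm * ℓp x - πp * ℓm x with hw
  set q : X → ℝ := fun x => ℓp x - ℓm x with hq
  set e : X → ℝ := fun x => 1 - η x with he
  -- integrability
  have hCπ : ∀ x, |w x| ≤ |πm| * Cℓ + |πp| * Cℓ := by
    intro x
    calc |w x| ≤ |πm * ℓp x| + |πp * ℓm x| := abs_sub _ _
    _ ≤ |πm| * Cℓ + |πp| * Cℓ := by
        rw [abs_mul, abs_mul]
        gcongr
        · exact absC (hℓp0 x) (hℓpC x)
        · exact absC (hℓm0 x) (hℓmC x)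
  have hIw : Integrable w μ := int_of_bdd (by fun_prop) _ hCπ
  have habsη : ∀ x, |η x| ≤ 1 := fun x => abs_le.mpr ⟨by linarith [hη0 x], hη1 x⟩
  have habse : ∀ x, |e x| ≤ 1 := by
    intro x
    simp only [he]
    rw [abs_le]
    constructor <;> [linarith [hη1 x]; linarith [hη0 x]]
  have habsq : ∀ x, |q x| ≤ 2 * Cℓ := by
    intro x
    have := hℓp0 x; have := hℓpC x; have := hℓm0 x; have := hℓmC x
    rw [abs_le]; constructor <;> simp [hq] <;> linarith
  have hIη : Integrable η μ := int_of_bdd hη 1 habsη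
  have hIe : Integrable e μ := int_of_bdd (by fun_prop) 1 habse
  have hIηq : Integrable (fun x => η x * q x) μ := by
    apply int_of_bdd (by fun_prop) (2 * Cℓ)
    intro x
    rw [abs_mul]
    calc |η x| * |q x| ≤ 1 * (2 * Cℓ) := by gcongr; exacts [habsη x, habsq x]
    _ = 2 * Cℓ := one_mul _
  have hIeq : Integrable (fun x => e x * q x) μ := by
    apply int_of_bdd (by fun_prop) (2 * Cℓ)
    intro x
    rw [abs_mul]
    calc |e x| * |q x| ≤ 1 * (2 * Cℓ) := by gcongr; exacts [habse x, habsq x]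
    _ = 2 * Cℓ := one_mul _
  have hI1 : Integrable (fun _ : X => (1 : ℝ)) μ := integrable_const 1
  -- pointwise decomposition into separable terms
  have key : ∀ p : X × X, (1 / 2 : ℝ) *
      ((πm - s p.1 p.2) * (ℓp p.1 + ℓp p.2) / (πm - πp)
        + (πp - s p.1 p.2) * (ℓm p.1 + ℓm p.2) / (πp - πm)) =
      (1 / (2 * (πm - πp))) *
        (w p.1 * 1 + 1 * w p.2
          - (η p.1 * q p.1) * η p.2 - (e p.1 * q p.1) * e p.2
          - η p.1 * (η p.2 * q p.2) - e p.1 * (e p.2 * q p.2)) := by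
    intro p
    rw [hs]
    simp only [hw, hq, he]
    have h2 : πp - πm ≠ 0 := sub_ne_zero.mpr hne
    field_simp
    ring
  simp_rw [key]
  rw [integral_const_mul]
  have e1 : Integrable (fun p : X × X => w p.1 * 1) (μ.prod μ) := hIw.mul_prod hI1
  have e2 : Integrable (fun p : X × X => 1 * w p.2) (μ.prod μ) := hI1.mul_prod hIw
  have e3 : Integrable (fun p : X × X => (η p.1 * q p.1) * η p.2) (μ.prod μ) := hIηq.mul_prod hIη
  have e4 : Integrable (fun p : X × X => (e p.1 * q p.1) * e p.2) (μ.prod μ) := hIeq.mul_prod hIe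
  have e5 : Integrable (fun p : X × X => η p.1 * (η p.2 * q p.2)) (μ.prod μ) := hIη.mul_prod hIηq
  have e6 : Integrable (fun p : X × X => e p.1 * (e p.2 * q p.2)) (μ.prod μ) := hIe.mul_prod hIeq
  rw [show (fun p : X × X => w p.1 * 1 + 1 * w p.2
      - (η p.1 * q p.1) * η p.2 - (e p.1 * q p.1) * e p.2
      - η p.1 * (η p.2 * q p.2) - e p.1 * (e p.2 * q p.2)) = fun p : X × X =>
      ((((w p.1 * 1 + 1 * w p.2) - (η p.1 * q p.1) * η p.2) - (e p.1 * q p.1) * e p.2)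
        - η p.1 * (η p.2 * q p.2)) - e p.1 * (e p.2 * q p.2) from rfl]
  rw [integral_sub (by exact ((((e1.add e2).sub e3).sub e4).sub e5) ) e6,
      integral_sub (by exact (((e1.add e2).sub e3).sub e4)) e5,
      integral_sub (by exact ((e1.add e2).sub e3)) e4,
      integral_sub (by exact (e1.add e2)) e3,
      integral_add e1 e2]
  rw [integral_prod_mul w (fun _ => (1:ℝ)), integral_prod_mul (fun _ => (1:ℝ)) w,
      integral_prod_mul (fun x => η x * q x) η, integral_prod_mul (fun x => e x * q x) e,
      integral_prod_mul η (fun x => η x * q x), integral_prod_mul e (fun x => e x * q x)]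
  -- compute one-dimensional integrals
  have hint1 : ∫ _ : X, (1 : ℝ) ∂μ = 1 := by simp
  have hintη : ∫ x, η x ∂μ = πp := hπp.symm
  have hinte : ∫ x, e x ∂μ = πm := by
    simp only [he]
    rw [integral_sub hI1 hIη, hint1, hintη, hπm]
  set P := ∫ x, ℓp x ∂μ with hP
  set M := ∫ x, ℓm x ∂μ with hM
  set A := ∫ x, η x * ℓp x ∂μ with hA
  set B := ∫ x, η x * ℓm x ∂μ with hB
  have hIℓp : Integrable ℓp μ := int_of_bdd hℓp Cℓ fun x =>
    absC (hℓp0 x) (hℓpC x)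
  have hIℓm : Integrable ℓm μ := int_of_bdd hℓm Cℓ fun x =>
    absC (hℓm0 x) (hℓmC x)
  have hIηℓp : Integrable (fun x => η x * ℓp x) μ := int_of_bdd (by fun_prop) Cℓ fun x => by
    rw [abs_mul]
    calc |η x| * |ℓp x| ≤ 1 * Cℓ := by
          gcongr
          exacts [habsη x, absC (hℓp0 x) (hℓpC x)]
    _ = Cℓ := one_mul _
  have hIηℓm : Integrable (fun x => η x * ℓm x) μ := int_of_bdd (by fun_prop) Cℓ fun x => by
    rw [abs_mul]
    calc |η x| * |ℓm x| ≤ 1 * Cℓ := by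
          gcongr
          exacts [habsη x, absC (hℓm0 x) (hℓmC x)]
    _ = Cℓ := one_mul _
  have hintw : ∫ x, w x ∂μ = πm * P - πp * M := by
    simp only [hw]
    rw [integral_sub (hIℓp.const_mul πm) (hIℓm.const_mul πp), integral_const_mul,
      integral_const_mul]
  have hintηq : ∫ x, η x * q x ∂μ = A - B := by
    simp only [hq, mul_sub]
    rw [integral_sub hIηℓp hIηℓm]
  have hinteq : ∫ x, e x * q x ∂μ = (P - A) - (M - B) := by
    have : (fun x => e x * q x) = fun x => (ℓp x - η x * ℓp x) - (ℓm x - η x * ℓm x) := by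
      funext x; simp only [he, hq]; ring
    have h1 : ∫ x, (ℓp x - η x * ℓp x) ∂μ = P - A := integral_sub hIℓp hIηℓp
    have h2 : ∫ x, (ℓm x - η x * ℓm x) ∂μ = M - B := integral_sub hIℓm hIηℓm
    have hs1 : Integrable (fun x => ℓp x - η x * ℓp x) μ := hIℓp.sub hIηℓp
    have hs2 : Integrable (fun x => ℓm x - η x * ℓm x) μ := hIℓm.sub hIηℓm
    rw [this, integral_sub hs1 hs2, h1, h2]
  have hRval : R = A + (M - B) := by
    rw [hR]
    rw [show (fun x => η x * ℓp x + (1 - η x) * ℓm x)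
        = fun x => η x * ℓp x + (ℓm x - η x * ℓm x) from by funext x; ring,
      integral_add hIηℓp (show Integrable (fun x => ℓm x - η x * ℓm x) μ from hIℓm.sub hIηℓm)]
    rw [show ∫ x, (ℓm x - η x * ℓm x) ∂μ = M - B from integral_sub hIℓm hIηℓm]
  rw [hint1, hintη, hinte, hintw, hintηq, hinteq, hRval]
  have h2 : (2 : ℝ) * (πm - πp) ≠ 0 := by
    simp [hd]
  field_simp
  rw [hπm]
  ring
end

section
/- (Population unbiasedness of the ConfDiff risk, Eq. (4).) It holds that ∫_{X×X} (1/2)·[ (π₊ − c(x,x'))·ℓ₊(x) + (π₋ − c(x,x'))·ℓ₋(x') + (π₊ + c(x,x'))·ℓ₊(x') + (π₋ + c(x,x'))·ℓ₋(x) ] d(μ⊗μ)(x,x') = R; i.e., the per-pair ConfDiff loss is an unbiased estimator of the classification risk. -/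
open MeasureTheory

/-- (Population unbiasedness of the ConfDiff risk, Eq. (4).) -/
theorem confdiff_population_unbiased
    {X : Type*} [MeasurableSpace X] (μ : Measure X) [IsProbabilityMeasure μ]
    (η : X → ℝ) (hη : Measurable η) (hη0 : ∀ x, 0 ≤ η x) (hη1 : ∀ x, η x ≤ 1)
    (πp πm : ℝ) (hπp : πp = ∫ x, η x ∂μ) (hπm : πm = 1 - πp)
    (c : X → X → ℝ) (hc : ∀ x x', c x x' = η x' - η x)
    (Cℓ : ℝ) (hCℓ : 0 ≤ Cℓ)
    (ℓp ℓm : X → ℝ) (hℓp : Measurable ℓp) (hℓm : Measurable ℓm)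
    (hℓp0 : ∀ x, 0 ≤ ℓp x) (hℓpC : ∀ x, ℓp x ≤ Cℓ)
    (hℓm0 : ∀ x, 0 ≤ ℓm x) (hℓmC : ∀ x, ℓm x ≤ Cℓ)
    (R : ℝ) (hR : R = ∫ x, (η x * ℓp x + (1 - η x) * ℓm x) ∂μ) :
    ∫ p : X × X, (1 / 2) *
      ((πp - c p.1 p.2) * ℓp p.1 + (πm - c p.1 p.2) * ℓm p.2
        + (πp + c p.1 p.2) * ℓp p.2 + (πm + c p.1 p.2) * ℓm p.1) ∂(μ.prod μ) = R := by
  have hbd : ∀ (f : X → ℝ) (C : ℝ), Measurable f → (∀ x, |f x| ≤ C) → Integrable f μ := by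
    intro f C hf hb
    exact (integrable_const C).mono' hf.aestronglyMeasurable
      (ae_of_all _ fun x => by simpa [Real.norm_eq_abs] using hb x)
  have hIe : Integrable η μ := hbd η 1 hη fun x => abs_le.2 ⟨by linarith [hη0 x], hη1 x⟩
  have hIp : Integrable ℓp μ := hbd ℓp Cℓ hℓp fun x => abs_le.2 ⟨by linarith [hℓp0 x], hℓpC x⟩
  have hIm : Integrable ℓm μ := hbd ℓm Cℓ hℓm fun x => abs_le.2 ⟨by linarith [hℓm0 x], hℓmC x⟩
  have hIep : Integrable (fun x => η x * ℓp x) μ := hbd _ Cℓ (hη.mul hℓp) fun x =>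
    abs_le.2 ⟨by nlinarith [hη0 x, hη1 x, hℓp0 x, hℓpC x],
      by nlinarith [hη0 x, hη1 x, hℓp0 x, hℓpC x]⟩
  have hIem : Integrable (fun x => η x * ℓm x) μ := hbd _ Cℓ (hη.mul hℓm) fun x =>
    abs_le.2 ⟨by nlinarith [hη0 x, hη1 x, hℓm0 x, hℓmC x],
      by nlinarith [hη0 x, hη1 x, hℓm0 x, hℓmC x]⟩
  -- one-variable auxiliary integrable functions
  have hA : Integrable (fun x => (πp + η x) * ℓp x + (πm - η x) * ℓm x) μ := by
    have h : (fun x => (πp + η x) * ℓp x + (πm - η x) * ℓm x)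
        = fun x => (πp * ℓp x + η x * ℓp x) + (πm * ℓm x - η x * ℓm x) := by
      funext x; ring
    rw [h]
    exact ((hIp.const_mul πp).add hIep).add ((hIm.const_mul πm).sub hIem)
  have hB : Integrable (fun x => ℓm x - ℓp x) μ := hIm.sub hIp
  have hC : Integrable (fun x => πm + η x) μ := (integrable_const πm).add hIe
  have hD : Integrable (fun x => πp - η x) μ := (integrable_const πp).sub hIe
  -- rewrite the integrand as a sum of six product-form terms
  have key : (fun z : X × X => (1 / 2 : ℝ) *
      ((πp - c z.1 z.2) * ℓp z.1 + (πm - c z.1 z.2) * ℓm z.2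
        + (πp + c z.1 z.2) * ℓp z.2 + (πm + c z.1 z.2) * ℓm z.1))
      = fun z : X × X => (1 / 2 : ℝ) *
        ((((πp + η z.1) * ℓp z.1 + (πm - η z.1) * ℓm z.1) * (1 : ℝ)
          + (ℓm z.1 - ℓp z.1) * η z.2
          + (πm + η z.1) * ℓm z.2
          + (-1 : ℝ) * (η z.2 * ℓm z.2)
          + (πp - η z.1) * ℓp z.2
          + (1 : ℝ) * (η z.2 * ℓp z.2))) := by
    funext z
    simp only [hc]
    ring
  rw [key]
  -- integrability of each product term on the product measure
  have I1 : Integrable (fun z : X × X =>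
      ((πp + η z.1) * ℓp z.1 + (πm - η z.1) * ℓm z.1) * (1 : ℝ)) (μ.prod μ) :=
    hA.mul_prod (integrable_const 1)
  have I2 : Integrable (fun z : X × X => (ℓm z.1 - ℓp z.1) * η z.2) (μ.prod μ) :=
    hB.mul_prod hIe
  have I3 : Integrable (fun z : X × X => (πm + η z.1) * ℓm z.2) (μ.prod μ) :=
    hC.mul_prod hIm
  have I4 : Integrable (fun z : X × X => (-1 : ℝ) * (η z.2 * ℓm z.2)) (μ.prod μ) :=
    (integrable_const (-1 : ℝ)).mul_prod hIem
  have I5 : Integrable (fun z : X × X => (πp - η z.1) * ℓp z.2) (μ.prod μ) :=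
    hD.mul_prod hIp
  have I6 : Integrable (fun z : X × X => (1 : ℝ) * (η z.2 * ℓp z.2)) (μ.prod μ) :=
    (integrable_const (1 : ℝ)).mul_prod hIep
  rw [integral_const_mul]
  have S2 : Integrable (fun z : X × X =>
      ((πp + η z.1) * ℓp z.1 + (πm - η z.1) * ℓm z.1) * (1 : ℝ)
        + (ℓm z.1 - ℓp z.1) * η z.2) (μ.prod μ) := I1.add I2
  have S3 : Integrable (fun z : X × X =>
      ((πp + η z.1) * ℓp z.1 + (πm - η z.1) * ℓm z.1) * (1 : ℝ)
        + (ℓm z.1 - ℓp z.1) * η z.2 + (πm + η z.1) * ℓm z.2) (μ.prod μ) := S2.add I3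
  have S4 : Integrable (fun z : X × X =>
      ((πp + η z.1) * ℓp z.1 + (πm - η z.1) * ℓm z.1) * (1 : ℝ)
        + (ℓm z.1 - ℓp z.1) * η z.2 + (πm + η z.1) * ℓm z.2
        + (-1 : ℝ) * (η z.2 * ℓm z.2)) (μ.prod μ) := S3.add I4
  have S5 : Integrable (fun z : X × X =>
      ((πp + η z.1) * ℓp z.1 + (πm - η z.1) * ℓm z.1) * (1 : ℝ)
        + (ℓm z.1 - ℓp z.1) * η z.2 + (πm + η z.1) * ℓm z.2
        + (-1 : ℝ) * (η z.2 * ℓm z.2) + (πp - η z.1) * ℓp z.2) (μ.prod μ) := S4.add I5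
  simp only [integral_add S5 I6, integral_add S4 I5, integral_add S3 I4,
    integral_add S2 I3, integral_add I1 I2]
  have E1 := integral_prod_mul (μ := μ) (ν := μ)
    (fun x => (πp + η x) * ℓp x + (πm - η x) * ℓm x) (fun _ => (1 : ℝ))
  have E2 := integral_prod_mul (μ := μ) (ν := μ) (fun x => ℓm x - ℓp x) η
  have E3 := integral_prod_mul (μ := μ) (ν := μ) (fun x => πm + η x) ℓm
  have E4 := integral_prod_mul (μ := μ) (ν := μ) (fun _ => (-1 : ℝ)) (fun x => η x * ℓm x)
  have E5 := integral_prod_mul (μ := μ) (ν := μ) (fun x => πp - η x) ℓp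
  have E6 := integral_prod_mul (μ := μ) (ν := μ) (fun _ => (1 : ℝ)) (fun x => η x * ℓp x)
  rw [E1, E2, E3, E4, E5, E6]
  -- compute the one-dimensional integrals
  have h1 : (∫ _ : X, (1 : ℝ) ∂μ) = 1 := by simp
  have hAι : (∫ x, ((πp + η x) * ℓp x + (πm - η x) * ℓm x) ∂μ)
      = πp * (∫ x, ℓp x ∂μ) + (∫ x, η x * ℓp x ∂μ)
        + (πm * (∫ x, ℓm x ∂μ) - (∫ x, η x * ℓm x ∂μ)) := by
    have h : (fun x => (πp + η x) * ℓp x + (πm - η x) * ℓm x)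
        = fun x => (πp * ℓp x + η x * ℓp x) + (πm * ℓm x - η x * ℓm x) := by
      funext x; ring
    have t1 : Integrable (fun x => πp * ℓp x + η x * ℓp x) μ := (hIp.const_mul πp).add hIep
    have t2 : Integrable (fun x => πm * ℓm x - η x * ℓm x) μ := (hIm.const_mul πm).sub hIem
    rw [h]
    simp only [integral_add t1 t2, integral_add (hIp.const_mul πp) hIep,
      integral_sub (hIm.const_mul πm) hIem, integral_const_mul]
  have hBι : (∫ x, (ℓm x - ℓp x) ∂μ) = (∫ x, ℓm x ∂μ) - (∫ x, ℓp x ∂μ) :=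
    integral_sub hIm hIp
  have hCι : (∫ x, (πm + η x) ∂μ) = πm + (∫ x, η x ∂μ) := by
    rw [integral_add (integrable_const πm) hIe]; simp
  have hDι : (∫ x, (πp - η x) ∂μ) = πp - (∫ x, η x ∂μ) := by
    rw [integral_sub (integrable_const πp) hIe]; simp
  have hRval : R = (∫ x, η x * ℓp x ∂μ) + ((∫ x, ℓm x ∂μ) - (∫ x, η x * ℓm x ∂μ)) := by
    rw [hR]
    have h : (fun x => η x * ℓp x + (1 - η x) * ℓm x)
        = fun x => η x * ℓp x + (ℓm x - η x * ℓm x) := by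
      funext x; ring
    have t3 : Integrable (fun x => ℓm x - η x * ℓm x) μ := hIm.sub hIem
    rw [h]
    simp only [integral_add hIep t3, integral_sub hIm hIem]
  have hneg : (∫ _ : X, (-1 : ℝ) ∂μ) = -1 := by simp
  rw [hAι, hBι, hCι, hDι, h1, hneg, hRval, hπm, hπp]
  ring
end

section
/- (McDiarmid-type concentration for a component of the empirical risk, from the proof of Lemma A.6.) Assume C_ℓ > 0 and let a ≥ 0. Then ν{ D ∈ (X×X)^n : ∫ Â dν − Â(D) ≥ a } ≤ exp(−4a²n/((4π₊+1)²C_ℓ²)). -/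
open MeasureTheory Real


lemma aux_scalar (p : ℝ) (hp0 : 0 ≤ p) (hp1 : p ≤ 1) (u : ℝ) :
    (1 - p) * exp (-(p * u)) + p * exp ((1 - p) * u) ≤ exp (u ^ 2 / 8) := by
  set F : ℝ → ℝ := fun v => (1 - p) * exp (-(p * v)) + p * exp ((1 - p) * v) with hF
  have hFpos : ∀ v, 0 < F v := by
    intro v
    have h1 := exp_pos (-(p * v))
    have h2 := exp_pos ((1 - p) * v)
    simp only [hF]
    nlinarith [mul_nonneg (sub_nonneg.2 hp1) h1.le, mul_nonneg hp0 h2.le,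
      mul_pos h1 h2]
  set N : ℝ → ℝ := fun v => p * (1 - p) * (exp ((1 - p) * v) - exp (-(p * v))) with hN
  have hFd : ∀ v, HasDerivAt F (N v) v := by
    intro v
    have h1 : HasDerivAt (fun w : ℝ => -(p * w)) (-p) v := by
      exact (((hasDerivAt_id v).const_mul p).neg).congr_deriv (by ring)
    have h2 : HasDerivAt (fun w : ℝ => (1 - p) * w) (1 - p) v := by
      simpa using (hasDerivAt_id v).const_mul (1 - p)
    have := ((h1.exp.const_mul (1 - p)).add (h2.exp.const_mul p))
    refine this.congr_deriv ?_
    simp only [hN]; ring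
  have hNd : ∀ v, HasDerivAt N
      (p * (1 - p) * ((1 - p) * exp ((1 - p) * v) + p * exp (-(p * v)))) v := by
    intro v
    have h1 : HasDerivAt (fun w : ℝ => -(p * w)) (-p) v := by
      exact (((hasDerivAt_id v).const_mul p).neg).congr_deriv (by ring)
    have h2 : HasDerivAt (fun w : ℝ => (1 - p) * w) (1 - p) v := by
      simpa using (hasDerivAt_id v).const_mul (1 - p)
    have := ((h2.exp.sub h1.exp).const_mul (p * (1 - p)))
    refine this.congr_deriv ?_
    ring
  -- K = derivative of (u^2/8 - log (F u))
  set K : ℝ → ℝ := fun v => v / 4 - N v / F v with hK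
  have hKd : ∀ v, HasDerivAt K
      (1 / 4 - (p * (1 - p) * ((1 - p) * exp ((1 - p) * v) + p * exp (-(p * v))) * F v
        - N v * N v) / (F v) ^ 2) v := by
    intro v
    exact (((hasDerivAt_id v).div_const 4)).sub (((hNd v).div (hFd v) (hFpos v).ne'))
  have hKderiv_nonneg : ∀ v, 0 ≤ 1 / 4 -
      (p * (1 - p) * ((1 - p) * exp ((1 - p) * v) + p * exp (-(p * v))) * F v
        - N v * N v) / (F v) ^ 2 := by
    intro v
    rw [sub_nonneg, div_le_iff₀ (pow_pos (hFpos v) 2)]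
    have hA := exp_pos (-(p * v))
    have hB := exp_pos ((1 - p) * v)
    have key : p * (1 - p) * ((1 - p) * exp ((1 - p) * v) + p * exp (-(p * v))) * F v
        - N v * N v = p * (1 - p) * (exp (-(p * v)) * exp ((1 - p) * v)) := by
      simp only [hF, hN]; ring
    rw [key]
    nlinarith [sq_nonneg ((1 - p) * exp (-(p * v)) - p * exp ((1 - p) * v)),
      mul_nonneg (mul_nonneg hp0 (sub_nonneg.2 hp1)) (mul_pos hA hB).le]
  have hKmono : Monotone K := by
    refine monotone_of_deriv_nonneg (fun v => (hKd v).differentiableAt) (fun v => ?_)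
    rw [(hKd v).deriv]; exact hKderiv_nonneg v
  have hK0 : K 0 = 0 := by simp [hK, hN]
  -- H = u^2/8 - log (F u)
  set H : ℝ → ℝ := fun v => v ^ 2 / 8 - Real.log (F v) with hH
  have hHd : ∀ v, HasDerivAt H (K v) v := by
    intro v
    have h1 : HasDerivAt (fun w : ℝ => w ^ 2 / 8) (v / 4) v := by
      have := ((hasDerivAt_pow 2 v).div_const 8)
      refine this.congr_deriv ?_; ring
    exact h1.sub ((hFd v).log (hFpos v).ne')
  have hH0 : H 0 = 0 := by simp [hH, hF]
  have hHnonneg : ∀ v, 0 ≤ H v := by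
    intro v
    rcases le_total 0 v with hv | hv
    · have hmono : MonotoneOn H (Set.Ici 0) := by
        refine monotoneOn_of_deriv_nonneg (convex_Ici 0)
          (fun w _ => ((hHd w).differentiableAt.continuousAt.continuousWithinAt))
          (fun w _ => (hHd w).differentiableAt.differentiableWithinAt)
          (fun w hw => ?_)
        rw [(hHd w).deriv]
        rw [interior_Ici] at hw
        calc (0:ℝ) = K 0 := hK0.symm
        _ ≤ K w := hKmono (le_of_lt hw)
      have := hmono (Set.self_mem_Ici) (Set.mem_Ici.2 hv) hv
      rwa [hH0] at this
    · have hanti : AntitoneOn H (Set.Iic 0) := by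
        refine antitoneOn_of_deriv_nonpos (convex_Iic 0)
          (fun w _ => ((hHd w).differentiableAt.continuousAt.continuousWithinAt))
          (fun w _ => (hHd w).differentiableAt.differentiableWithinAt)
          (fun w hw => ?_)
        rw [(hHd w).deriv]
        rw [interior_Iic] at hw
        calc K w ≤ K 0 := hKmono (le_of_lt hw)
        _ = 0 := hK0
      have := hanti (Set.mem_Iic.2 hv) (Set.self_mem_Iic) hv
      rwa [hH0] at this
  have hlog : Real.log (F u) ≤ u ^ 2 / 8 := by
    have := hHnonneg u; simp only [hH] at this; linarith
  calc F u = exp (Real.log (F u)) := (exp_log (hFpos u)).symm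
  _ ≤ exp (u ^ 2 / 8) := exp_le_exp.2 hlog

open MeasureTheory in
lemma aux_integrable_of_bounded {Ω : Type*} [MeasurableSpace Ω] (P : Measure Ω)
    [IsFiniteMeasure P] {g : Ω → ℝ} (hg : Measurable g) {C : ℝ} (hC : ∀ ω, |g ω| ≤ C) :
    Integrable g P :=
  ⟨hg.aestronglyMeasurable, HasFiniteIntegral.of_bounded (C := C) (ae_of_all _ hC)⟩

open MeasureTheory in
lemma aux_hoeffding {Ω : Type*} [MeasurableSpace Ω] (P : Measure Ω)
    [IsProbabilityMeasure P] (Z : Ω → ℝ) (hZ : Measurable Z) (A B : ℝ)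
    (hA : ∀ ω, A ≤ Z ω) (hB : ∀ ω, Z ω ≤ B) (hmean : ∫ ω, Z ω ∂P = 0) (t : ℝ) :
    ∫ ω, exp (t * Z ω) ∂P ≤ exp (t ^ 2 * (B - A) ^ 2 / 8) := by
  have hZint : Integrable Z P := by
    refine aux_integrable_of_bounded P hZ (C := |A| + |B|) (fun ω => ?_)
    rw [abs_le]
    constructor
    · have := hA ω; have := neg_abs_le A; have := abs_nonneg B; linarith
    · have := hB ω; have := le_abs_self B; have := abs_nonneg A; linarith
  have hA0 : A ≤ 0 := by
    have : ∫ _ω, A ∂P ≤ ∫ ω, Z ω ∂P := integral_mono (integrable_const A) hZint hA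
    simpa [hmean] using this
  have hB0 : 0 ≤ B := by
    have : ∫ ω, Z ω ∂P ≤ ∫ _ω, B ∂P := integral_mono hZint (integrable_const B) hB
    simpa [hmean] using this
  rcases eq_or_lt_of_le (le_trans hA0 hB0) with hAB | hAB
  · -- A = B = 0, Z ≡ 0
    have hA' : A = 0 := le_antisymm hA0 (hAB ▸ hB0 : (0:ℝ) ≤ A)
    have hZ0 : ∀ ω, Z ω = 0 := fun ω => le_antisymm (hA' ▸ hAB ▸ hB ω) (hA' ▸ hA ω)
    simp [hZ0, exp_nonneg, measure_univ]
    positivity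
  · -- main case A < B
    have hBA : 0 < B - A := by linarith
    have hEint : Integrable (fun ω => exp (t * Z ω)) P := by
      refine aux_integrable_of_bounded P ((hZ.const_mul t).exp) (C := exp (|t| * (|A| + |B|)))
        (fun ω => ?_)
      rw [abs_of_pos (exp_pos _), exp_le_exp]
      have h1 : |Z ω| ≤ |A| + |B| := by
        rw [abs_le]; constructor
        · have := hA ω; have := neg_abs_le A; have := abs_nonneg B; linarith
        · have := hB ω; have := le_abs_self B; have := abs_nonneg A; linarith
      calc t * Z ω ≤ |t * Z ω| := le_abs_self _
      _ = |t| * |Z ω| := abs_mul _ _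
      _ ≤ |t| * (|A| + |B|) := by
        exact mul_le_mul_of_nonneg_left h1 (abs_nonneg t)
    set c1 : ℝ := exp (t * A) / (B - A) with hc1
    set c2 : ℝ := exp (t * B) / (B - A) with hc2
    have hptw : ∀ ω, exp (t * Z ω) ≤ c1 * (B - Z ω) + c2 * (Z ω - A) := by
      intro ω
      have hw1 : 0 ≤ (B - Z ω) / (B - A) := div_nonneg (by linarith [hB ω]) hBA.le
      have hw2 : 0 ≤ (Z ω - A) / (B - A) := div_nonneg (by linarith [hA ω]) hBA.le
      have hwsum : (B - Z ω) / (B - A) + (Z ω - A) / (B - A) = 1 := by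
        field_simp
        ring
      have := convexOn_exp.2 (Set.mem_univ (t * A)) (Set.mem_univ (t * B)) hw1 hw2 hwsum
      have harg : ((B - Z ω) / (B - A)) • (t * A) + ((Z ω - A) / (B - A)) • (t * B)
          = t * Z ω := by
        simp only [smul_eq_mul]
        field_simp
        ring
      rw [harg] at this
      simp only [smul_eq_mul] at this
      refine this.trans (le_of_eq ?_)
      rw [hc1, hc2]
      field_simp
    have hint : ∫ ω, exp (t * Z ω) ∂P ≤
        (B / (B - A)) * exp (t * A) + (-A / (B - A)) * exp (t * B) := by
      have hrhs : Integrable (fun ω => c1 * (B - Z ω) + c2 * (Z ω - A)) P := by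
        apply Integrable.add
        · exact ((integrable_const B).sub hZint).const_mul _
        · exact (hZint.sub (integrable_const A)).const_mul _
      have := integral_mono hEint hrhs hptw
      refine this.trans_eq ?_
      have e1 : Integrable (fun ω => c1 * (B - Z ω)) P :=
        ((integrable_const B).sub hZint).const_mul c1
      have e2 : Integrable (fun ω => c2 * (Z ω - A)) P :=
        (hZint.sub (integrable_const A)).const_mul c2
      have e3 : Integrable (fun ω => B - Z ω) P := (integrable_const B).sub hZint
      have e4 : Integrable (fun ω => Z ω - A) P := hZint.sub (integrable_const A)
      rw [integral_add e1 e2, integral_const_mul, integral_const_mul,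
        integral_sub (integrable_const B) hZint,
        integral_sub hZint (integrable_const A), hmean, integral_const]
      simp only [measure_univ, ENNReal.toReal_one, one_smul, sub_zero, zero_sub, hc1, hc2]
      simp only [integral_const, probReal_univ, one_smul]
      field_simp
    refine hint.trans ?_
    -- apply the scalar lemma with p = -A/(B-A), u = t*(B-A)
    have hp0 : 0 ≤ -A / (B - A) := div_nonneg (by linarith) hBA.le
    have hp1 : -A / (B - A) ≤ 1 := by
      rw [div_le_one hBA]; linarith
    have := aux_scalar (-A / (B - A)) hp0 hp1 (t * (B - A))
    have he1 : 1 - -A / (B - A) = B / (B - A) := by field_simp; ring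
    have he2 : -(-A / (B - A) * (t * (B - A))) = t * A := by field_simp
    have he3 : (1 - -A / (B - A)) * (t * (B - A)) = t * B := by field_simp; ring
    rw [he2, he3, he1] at this
    refine this.trans (exp_le_exp.2 (le_of_eq ?_))
    ring


-- test helper lemma: coordinate integral over pi measure
lemma aux_coord {E : Type*} [MeasureSpace E] [IsProbabilityMeasure (volume : Measure E)]
    {n : ℕ} (g : E → ℝ) (i : Fin n) :
    ∫ D : Fin n → E, g (D i) = ∫ z, g z := by
  classical
  have h := MeasureTheory.integral_fintype_prod_volume_eq_prod (ι := Fin n)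
    (fun j (z : E) => if j = i then g z else 1)
  have h1 : ∀ D : Fin n → E, (∏ j, if j = i then g (D j) else 1) = g (D i) := by
    intro D
    rw [Finset.prod_ite_eq' Finset.univ i (fun j => g (D j))]
    simp
  have h2 : (∏ j, ∫ z : E, if j = i then g z else 1) = ∫ z, g z := by
    have : ∀ j : Fin n, (∫ z : E, if j = i then g z else 1) =
        if j = i then ∫ z, g z else 1 := by
      intro j
      split <;> simp [measure_univ]
    simp_rw [this]
    rw [Finset.prod_ite_eq' Finset.univ i (fun _ => ∫ z, g z)]
    simp
  simp_rw [h1] at h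
  rw [h, h2]


set_option maxHeartbeats 2000000 in
/-- (McDiarmid-type concentration for a component of the empirical risk, from the
proof of Lemma A.6.) -/
theorem sconfconfdiff_mcdiarmid_component
    {X : Type*} [MeasurableSpace X] (μ : Measure X) [IsProbabilityMeasure μ]
    (η : X → ℝ) (hη : Measurable η) (hη0 : ∀ x, 0 ≤ η x) (hη1 : ∀ x, η x ≤ 1)
    (πp πm : ℝ) (hπp : πp = ∫ x, η x ∂μ) (hπm : πm = 1 - πp)
    (s c : X → X → ℝ)
    (hs : ∀ x x', s x x' = η x * η x' + (1 - η x) * (1 - η x'))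
    (hc : ∀ x x', c x x' = η x' - η x)
    (Cℓ : ℝ) (hCℓ : 0 < Cℓ)
    (ℓp : X → ℝ) (hℓp : Measurable ℓp)
    (hℓp0 : ∀ x, 0 ≤ ℓp x) (hℓpC : ∀ x, ℓp x ≤ Cℓ)
    (n : ℕ) (hn : 1 ≤ n)
    (ν : Measure (Fin n → X × X)) (hν : ν = Measure.pi fun _ => μ.prod μ)
    (Ahat : (Fin n → X × X) → ℝ)
    (hAhat : ∀ D, Ahat D = (1 / (2 * (n : ℝ))) * ∑ i,
      (2 * πp * (πp - c (D i).1 (D i).2) + πm - s (D i).1 (D i).2) * ℓp (D i).1)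
    (a : ℝ) (ha : 0 ≤ a) :
    ν {D | (∫ D', Ahat D' ∂ν) - Ahat D ≥ a}
      ≤ ENNReal.ofReal (exp (-(4 * a ^ 2 * n) / ((4 * πp + 1) ^ 2 * Cℓ ^ 2))) := by
  classical
  have hn0 : (0:ℝ) < n := by exact_mod_cast Nat.lt_of_lt_of_le Nat.zero_lt_one hn
  letI : MeasureSpace (X × X) := ⟨μ.prod μ⟩
  haveI hPprod : IsProbabilityMeasure (volume : Measure (X × X)) :=
    inferInstanceAs (IsProbabilityMeasure (μ.prod μ))
  have hνvol : ν = (volume : Measure (Fin n → X × X)) := hν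
  haveI hPpi : IsProbabilityMeasure (volume : Measure (Fin n → X × X)) :=
    inferInstanceAs (IsProbabilityMeasure (Measure.pi fun _ : Fin n => volume))
  subst hνvol
  -- the per-pair function
  set f : X × X → ℝ := fun z => (2 * πp * (πp - c z.1 z.2) + πm - s z.1 z.2) * ℓp z.1
    with hfdef
  have hfeq : ∀ z : X × X, f z = (2 * πp * (πp - (η z.2 - η z.1)) + πm -
      (η z.1 * η z.2 + (1 - η z.1) * (1 - η z.2))) * ℓp z.1 := by
    intro z; rw [hfdef]; simp only [hs, hc]
  have hfm : Measurable f := by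
    have : f = fun z : X × X => (2 * πp * (πp - (η z.2 - η z.1)) + πm -
        (η z.1 * η z.2 + (1 - η z.1) * (1 - η z.2))) * ℓp z.1 := funext hfeq
    rw [this]
    have h1 : Measurable fun z : X × X => η z.1 := hη.comp measurable_fst
    have h2 : Measurable fun z : X × X => η z.2 := hη.comp measurable_snd
    have h3 : Measurable fun z : X × X => ℓp z.1 := hℓp.comp measurable_fst
    exact ((((measurable_const.sub (h2.sub h1)).const_mul (2 * πp)).add
      measurable_const).sub ((h1.mul h2).add
      ((measurable_const.sub h1).mul (measurable_const.sub h2)))).mul h3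
  -- bounds on πp
  have hπp0 : 0 ≤ πp := hπp ▸ integral_nonneg hη0
  have hπp1 : πp ≤ 1 := by
    rw [hπp]
    have hint : Integrable η μ := aux_integrable_of_bounded μ hη (C := 1)
      (fun x => abs_le.2 ⟨by linarith [hη0 x], hη1 x⟩)
    calc ∫ x, η x ∂μ ≤ ∫ _x, (1:ℝ) ∂μ := integral_mono hint (integrable_const 1) hη1
    _ = 1 := by simp [measure_univ]
  -- bounds on f
  have hTbounds : ∀ z : X × X,
      2 * πp ^ 2 - 3 * πp ≤ 2 * πp * (πp - (η z.2 - η z.1)) + πm -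
        (η z.1 * η z.2 + (1 - η z.1) * (1 - η z.2)) ∧
      2 * πp * (πp - (η z.2 - η z.1)) + πm -
        (η z.1 * η z.2 + (1 - η z.1) * (1 - η z.2)) ≤ 2 * πp ^ 2 + πp + 1 := by
    intro z
    have e10 := hη0 z.1; have e11 := hη1 z.1
    have e20 := hη0 z.2; have e21 := hη1 z.2
    rw [hπm]
    constructor
    · nlinarith [mul_nonneg e10 e20, mul_nonneg (sub_nonneg.2 e11) (sub_nonneg.2 e21)]
    · nlinarith [mul_nonneg e10 e20, mul_nonneg (sub_nonneg.2 e11) (sub_nonneg.2 e21),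
        mul_nonneg (sub_nonneg.2 e11) e20, mul_nonneg e10 (sub_nonneg.2 e21)]
  have hfub : ∀ z, f z ≤ (2 * πp ^ 2 + πp + 1) * Cℓ := by
    intro z
    rw [hfeq z]
    set T := 2 * πp * (πp - (η z.2 - η z.1)) + πm -
      (η z.1 * η z.2 + (1 - η z.1) * (1 - η z.2)) with hT
    obtain ⟨hT1, hT2⟩ := hTbounds z
    have l0 := hℓp0 z.1; have l1 := hℓpC z.1
    rcases le_or_gt 0 T with hT0 | hT0
    · calc T * ℓp z.1 ≤ T * Cℓ := mul_le_mul_of_nonneg_left l1 hT0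
      _ ≤ (2 * πp ^ 2 + πp + 1) * Cℓ := mul_le_mul_of_nonneg_right hT2 hCℓ.le
    · calc T * ℓp z.1 ≤ 0 := mul_nonpos_of_nonpos_of_nonneg hT0.le l0
      _ ≤ (2 * πp ^ 2 + πp + 1) * Cℓ := by positivity
  have hflb : ∀ z, (2 * πp ^ 2 - 3 * πp) * Cℓ ≤ f z := by
    intro z
    rw [hfeq z]
    set T := 2 * πp * (πp - (η z.2 - η z.1)) + πm -
      (η z.1 * η z.2 + (1 - η z.1) * (1 - η z.2)) with hT
    obtain ⟨hT1, hT2⟩ := hTbounds z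
    have l0 := hℓp0 z.1; have l1 := hℓpC z.1
    have hm0 : 2 * πp ^ 2 - 3 * πp ≤ 0 := by nlinarith
    rcases le_or_gt 0 T with hT0 | hT0
    · calc (2 * πp ^ 2 - 3 * πp) * Cℓ ≤ 0 :=
        mul_nonpos_of_nonpos_of_nonneg hm0 hCℓ.le
      _ ≤ T * ℓp z.1 := mul_nonneg hT0 l0
    · calc (2 * πp ^ 2 - 3 * πp) * Cℓ ≤ T * Cℓ := mul_le_mul_of_nonneg_right hT1 hCℓ.le
      _ ≤ T * ℓp z.1 := by nlinarith
  -- integrability of f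
  set m1 : ℝ := (2 * πp ^ 2 - 3 * πp) * Cℓ with hm1
  set M1 : ℝ := (2 * πp ^ 2 + πp + 1) * Cℓ with hM1
  have hfabs : ∀ z, |f z| ≤ |m1| + |M1| := by
    intro z
    have h1 := hflb z; have h2 := hfub z
    have := neg_abs_le m1; have := le_abs_self M1
    have := abs_nonneg m1; have := abs_nonneg M1
    rw [abs_le]; constructor <;> linarith
  have hfint : Integrable f (volume : Measure (X × X)) :=
    aux_integrable_of_bounded _ hfm hfabs
  set Ef : ℝ := ∫ z, f z with hEf
  set Z : X × X → ℝ := fun z => Ef - f z with hZdef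
  have hZm : Measurable Z := measurable_const.sub hfm
  set A : ℝ := Ef - M1 with hA
  set B : ℝ := Ef - m1 with hB
  have hZA : ∀ z, A ≤ Z z := fun z => by
    simp only [hZdef, hA]; linarith [hfub z]
  have hZB : ∀ z, Z z ≤ B := fun z => by
    simp only [hZdef, hB]; linarith [hflb z]
  have hmean : ∫ z, Z z = 0 := by
    simp only [hZdef]
    rw [integral_sub (integrable_const Ef) hfint, integral_const]
    simp [measure_univ, hEf]
  set L : ℝ := (4 * πp + 1) * Cℓ with hLdef
  have hL0 : 0 < L := mul_pos (by linarith) hCℓ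
  have hL2pos : 0 < L ^ 2 := pow_pos hL0 2
  have hBA : B - A = L := by rw [hB, hA, hm1, hM1, hLdef]; ring
  set t0 : ℝ := 8 * a / L ^ 2 with ht0def
  have ht0 : 0 ≤ t0 := by positivity
  have hoeff : ∫ z, exp (t0 * Z z) ≤ exp (t0 ^ 2 * L ^ 2 / 8) := by
    have := aux_hoeffding (volume : Measure (X × X)) Z hZm A B hZA hZB hmean t0
    rwa [hBA] at this
  -- the empirical average in terms of f
  have h1 : ∀ D : Fin n → X × X, Ahat D = (1 / (2 * (n : ℝ))) * ∑ i, f (D i) := by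
    intro D
    rw [hAhat]
  have hintco : ∀ i : Fin n, Integrable (fun D : Fin n → X × X => f (D i))
      (volume : Measure (Fin n → X × X)) := fun i =>
    aux_integrable_of_bounded _ (hfm.comp (measurable_pi_apply i)) (fun D => hfabs (D i))
  have hIA : (∫ D', Ahat D' ∂(volume : Measure (Fin n → X × X))) = Ef / 2 := by
    have e1 : (∫ D', Ahat D' ∂(volume : Measure (Fin n → X × X)))
        = ∫ D', ((1 / (2 * (n : ℝ))) * ∑ i, f (D' i)) ∂(volume : Measure (Fin n → X × X)) :=
      integral_congr_ae (ae_of_all _ h1)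
    have e2 : (∫ D', ((1 / (2 * (n : ℝ))) * ∑ i, f (D' i)) ∂(volume : Measure (Fin n → X × X)))
        = (1 / (2 * (n : ℝ))) * ∫ D', (∑ i, f (D' i)) ∂(volume : Measure (Fin n → X × X)) :=
      integral_const_mul _ _
    have e3 : (∫ D', (∑ i, f (D' i)) ∂(volume : Measure (Fin n → X × X)))
        = ∑ i : Fin n, ∫ D', f (D' i) ∂(volume : Measure (Fin n → X × X)) :=
      integral_finset_sum _ (fun i _ => hintco i)
    have e4 : ∀ i : Fin n, (∫ D', f (D' i) ∂(volume : Measure (Fin n → X × X))) = Ef :=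
      fun i => aux_coord f i
    rw [e1, e2, e3]
    simp_rw [e4]
    rw [Finset.sum_const, Finset.card_univ, Fintype.card_fin, nsmul_eq_mul]
    field_simp
  have hset : {D : Fin n → X × X | (∫ D', Ahat D' ∂(volume : Measure (Fin n → X × X)))
      - Ahat D ≥ a} = {D : Fin n → X × X | 2 * n * a ≤ ∑ i, Z (D i)} := by
    ext D
    simp only [Set.mem_setOf_eq, hIA, h1 D, ge_iff_le]
    have hsum : ∑ i, Z (D i) = n * Ef - ∑ i, f (D i) := by
      simp only [hZdef, Finset.sum_sub_distrib, Finset.sum_const, Finset.card_univ,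
        Fintype.card_fin, nsmul_eq_mul]
    rw [hsum]
    have hq : 2 * (n : ℝ) * (Ef / 2 - 1 / (2 * (n : ℝ)) * ∑ i, f (D i))
        = (n : ℝ) * Ef - ∑ i, f (D i) := by
      field_simp
    constructor
    · intro h
      calc 2 * (n : ℝ) * a ≤ 2 * (n : ℝ) * (Ef / 2 - 1 / (2 * (n : ℝ)) * ∑ i, f (D i)) :=
        mul_le_mul_of_nonneg_left h (by positivity)
      _ = (n : ℝ) * Ef - ∑ i, f (D i) := hq
    · intro h
      have h2 : 2 * (n : ℝ) * a ≤ 2 * (n : ℝ) *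
          (Ef / 2 - 1 / (2 * (n : ℝ)) * ∑ i, f (D i)) := by rw [hq]; exact h
      exact le_of_mul_le_mul_left h2 (by positivity)
  rw [hset]
  -- Chernoff bound
  have hZim : Measurable fun D : Fin n → X × X => ∑ i, Z (D i) :=
    Finset.univ.measurable_sum fun i _ => hZm.comp (measurable_pi_apply i)
  have hsumB : ∀ D : Fin n → X × X, ∑ i, Z (D i) ≤ n * B := by
    intro D
    calc ∑ i, Z (D i) ≤ ∑ _i : Fin n, B := Finset.sum_le_sum fun i _ => hZB (D i)
    _ = n * B := by rw [Finset.sum_const, Finset.card_univ, Fintype.card_fin, nsmul_eq_mul]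
  have hintexp : Integrable (fun D : Fin n → X × X => exp (t0 * ∑ i, Z (D i)))
      (volume : Measure (Fin n → X × X)) := by
    refine aux_integrable_of_bounded _ ((hZim.const_mul t0).exp)
      (C := exp (t0 * ((n : ℝ) * B))) (fun D => ?_)
    rw [abs_of_pos (exp_pos _), exp_le_exp]
    exact mul_le_mul_of_nonneg_left (hsumB D) ht0
  have hch := ProbabilityTheory.measure_ge_le_exp_mul_mgf
    (μ := (volume : Measure (Fin n → X × X))) (X := fun D => ∑ i, Z (D i))
    (2 * n * a) ht0 hintexp
  have hmgf : ProbabilityTheory.mgf (fun D : Fin n → X × X => ∑ i, Z (D i))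
      (volume : Measure (Fin n → X × X)) t0 ≤ exp (t0 ^ 2 * L ^ 2 / 8) ^ n := by
    rw [ProbabilityTheory.mgf]
    have hexp : ∀ D : Fin n → X × X, exp (t0 * ∑ i, Z (D i)) = ∏ i, exp (t0 * Z (D i)) := by
      intro D; rw [Finset.mul_sum, exp_sum]
    simp_rw [hexp]
    rw [MeasureTheory.integral_fintype_prod_volume_eq_pow (ι := Fin n) (fun z => exp (t0 * Z z)),
      Fintype.card_fin]
    exact pow_le_pow_left₀ (integral_nonneg fun z => (exp_pos _).le) hoeff n
  have hreal : ((volume : Measure (Fin n → X × X)) {D | 2 * n * a ≤ ∑ i, Z (D i)}).toReal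
      ≤ exp (-(4 * a ^ 2 * n) / ((4 * πp + 1) ^ 2 * Cℓ ^ 2)) := by
    refine hch.trans ?_
    calc exp (-t0 * (2 * n * a)) * ProbabilityTheory.mgf _ _ t0
        ≤ exp (-t0 * (2 * n * a)) * exp (t0 ^ 2 * L ^ 2 / 8) ^ n :=
          mul_le_mul_of_nonneg_left hmgf (exp_pos _).le
    _ = exp (-t0 * (2 * n * a) + n * (t0 ^ 2 * L ^ 2 / 8)) := by
        rw [← exp_nat_mul, ← exp_add]
    _ ≤ exp (-(4 * a ^ 2 * n) / ((4 * πp + 1) ^ 2 * Cℓ ^ 2)) := by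
        rw [exp_le_exp]
        have hL2 : (4 * πp + 1) ^ 2 * Cℓ ^ 2 = L ^ 2 := by rw [hLdef]; ring
        rw [hL2]
        have heq : -t0 * (2 * n * a) + n * (t0 ^ 2 * L ^ 2 / 8)
            = -(8 * a ^ 2 * n) / L ^ 2 := by
          rw [ht0def]
          field_simp
          ring
        rw [heq, div_le_div_iff₀ hL2pos hL2pos]
        nlinarith [mul_nonneg (mul_nonneg (sq_nonneg a) hn0.le) hL2pos.le]
  exact (ENNReal.le_ofReal_iff_toReal_le (measure_ne_top _ _) (exp_nonneg _)).2 hreal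
end
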